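/- arXiv:2310.00544 — 6 statements merged into one kernel-verified Lean document; each statement's English description precedes it below -/
import Mathlib

section
/- Let E be a Polish space, let ρ_N be a symmetric probability measure on E^N (i.e., invariant under permutations of the coordinates), and let ρ be a probability measure on E. Then for every 1 ≤ k ≤ N, the scaled relative entropies satisfy (1/k) H(ρ_{N,k} | ρ^{⊗k}) ≤ (1/N) H(ρ_N | ρ^{⊗N}), where ρ_{N,k} denotes the marginal of ρ_N on the first k coordinates. -/
open MeasureTheory Real
open scoped Classical

noncomputable section

set_option linter.unusedSectionVars false
set_option maxHeartbeats 1000000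

namespace ScaledRelEnt

open scoped ENNReal

variable {E : Type*} [MeasurableSpace E]

lemma measurable_comp_proj {k N : ℕ} (m : Fin k → Fin N) :
    Measurable (fun x : Fin N → E => x ∘ m) :=
  measurable_pi_lambda _ fun i => measurable_pi_apply (m i)

lemma map_pi_comp {k N : ℕ} (m : Fin k → Fin N) (hm : Function.Injective m)
    (ρ : Measure E) [IsProbabilityMeasure ρ] :
    Measure.map (fun x : Fin N → E => x ∘ m) (Measure.pi fun _ : Fin N => ρ)
      = Measure.pi (fun _ : Fin k => ρ) := by
  refine (Measure.pi_eq fun s hs => ?_).symm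
  rw [Measure.map_apply (measurable_comp_proj m) (MeasurableSet.univ_pi hs)]
  have hpre : (fun x : Fin N → E => x ∘ m) ⁻¹' Set.univ.pi s
      = Set.univ.pi (fun j => if h : ∃ i, m i = j then s h.choose else Set.univ) := by
    ext x
    simp only [Set.mem_preimage, Set.mem_pi, Set.mem_univ, forall_true_left, Function.comp]
    constructor
    · intro hx j
      by_cases h : ∃ i, m i = j
      · rw [dif_pos h]
        have := hx h.choose
        rwa [h.choose_spec] at this
      · rw [dif_neg h]; trivial
    · intro hx i
      have h2 := hx (m i)
      have he : ∃ i', m i' = m i := ⟨i, rfl⟩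
      rw [dif_pos he] at h2
      rwa [hm he.choose_spec] at h2
  rw [hpre, Measure.pi_pi]
  set t : Fin N → Set E := fun j => if h : ∃ i, m i = j then s h.choose else Set.univ with ht
  have h1 : ∀ j ∈ Finset.univ, j ∉ Finset.image m Finset.univ → ρ (t j) = 1 := by
    intro j _ hj
    have : ¬ ∃ i, m i = j := by
      intro ⟨i, hi⟩; exact hj (Finset.mem_image.2 ⟨i, Finset.mem_univ _, hi⟩)
    simp [ht, dif_neg this]
  have h2 : ∀ i, t (m i) = s i := by
    intro i
    have he : ∃ i', m i' = m i := ⟨i, rfl⟩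
    simp only [ht, dif_pos he]
    exact congrArg s (hm he.choose_spec)
  calc ∏ j : Fin N, ρ (t j)
      = ∏ j ∈ Finset.image m Finset.univ, ρ (t j) :=
        (Finset.prod_subset (Finset.subset_univ _) h1).symm
    _ = ∏ i : Fin k, ρ (t (m i)) :=
        Finset.prod_image (fun a _ b _ hab => hm hab)
    _ = ∏ i : Fin k, ρ (s i) := by simp [h2]

lemma exists_perm_comp {k N : ℕ} (hkN : k ≤ N) (m : Fin k → Fin N) (hm : Function.Injective m) :
    ∃ σ : Equiv.Perm (Fin N), ∀ i, σ (Fin.castLE hkN i) = m i := by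
  have hc : Function.Injective (Fin.castLE hkN) := Fin.castLE_injective hkN
  set A : Set (Fin N) := Set.range (Fin.castLE hkN) with hA
  set B : Set (Fin N) := Set.range m with hB
  have hcard : Fintype.card ↥Aᶜ = Fintype.card ↥Bᶜ := by
    rw [Fintype.card_compl_set, Fintype.card_compl_set,
      Set.card_range_of_injective hc, Set.card_range_of_injective hm]
  let eA : Fin k ≃ A := Equiv.ofInjective _ hc
  let eB : Fin k ≃ B := Equiv.ofInjective _ hm
  let eC : ↥Aᶜ ≃ ↥Bᶜ := Fintype.equivOfCardEq hcard
  refine ⟨(Equiv.Set.sumCompl A).symm.trans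
    (((eA.symm.trans eB).sumCongr eC).trans (Equiv.Set.sumCompl B)), fun i => ?_⟩
  simp only [Equiv.trans_apply]
  rw [Equiv.Set.sumCompl_symm_apply_of_mem (Set.mem_range_self i)]
  have : (eA.symm.trans eB).sumCongr eC (Sum.inl ⟨Fin.castLE hkN i, Set.mem_range_self i⟩)
      = Sum.inl (eB (eA.symm ⟨Fin.castLE hkN i, Set.mem_range_self i⟩)) := rfl
  rw [this]
  have h3 : eA.symm ⟨Fin.castLE hkN i, Set.mem_range_self i⟩ = i := by
    rw [Equiv.symm_apply_eq]
    rfl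
  rw [h3]
  rfl


variable {N : ℕ} {ρN : Measure (Fin N → E)} [IsProbabilityMeasure ρN]

/-- marginal under any injection equals the standard marginal -/
lemma map_comp_inj_eq (hsymm : ∀ σ : Equiv.Perm (Fin N), Measure.map (fun x => x ∘ σ) ρN = ρN) {k : ℕ} (hkN : k ≤ N) (m : Fin k → Fin N) (hm : Function.Injective m) :
    Measure.map (fun x : Fin N → E => x ∘ m) ρN
      = Measure.map (fun x : Fin N → E => x ∘ Fin.castLE hkN) ρN := by
  obtain ⟨σ, hσ⟩ := exists_perm_comp hkN m hm
  have hcomp : (fun x : Fin N → E => x ∘ m)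
      = (fun x : Fin N → E => x ∘ Fin.castLE hkN) ∘ (fun x : Fin N → E => x ∘ σ) := by
    funext x; funext i
    simp [Function.comp, hσ i]
  rw [hcomp, ← Measure.map_map (measurable_comp_proj _) (measurable_comp_proj _), hsymm σ]

lemma marg_symm (hsymm : ∀ σ : Equiv.Perm (Fin N), Measure.map (fun x => x ∘ σ) ρN = ρN) {k : ℕ} (hkN : k ≤ N) (σ : Equiv.Perm (Fin k)) :
    Measure.map (fun y : Fin k → E => y ∘ σ)
        (Measure.map (fun x : Fin N → E => x ∘ Fin.castLE hkN) ρN)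
      = Measure.map (fun x : Fin N → E => x ∘ Fin.castLE hkN) ρN := by
  rw [Measure.map_map (measurable_comp_proj _) (measurable_comp_proj _)]
  have : ((fun y : Fin k → E => y ∘ σ) ∘ (fun x : Fin N → E => x ∘ Fin.castLE hkN))
      = fun x : Fin N → E => x ∘ (Fin.castLE hkN ∘ σ) := rfl
  rw [this]
  exact map_comp_inj_eq hsymm hkN _ ((Fin.castLE_injective hkN).comp σ.injective)

lemma marg_tower {j k : ℕ} (hjk : j ≤ k) (hkN : k ≤ N) :
    Measure.map (fun y : Fin k → E => y ∘ Fin.castLE hjk)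
        (Measure.map (fun x : Fin N → E => x ∘ Fin.castLE hkN) ρN)
      = Measure.map (fun x : Fin N → E => x ∘ Fin.castLE (hjk.trans hkN)) ρN := by
  rw [Measure.map_map (measurable_comp_proj _) (measurable_comp_proj _)]
  congr 1

lemma marg_self : Measure.map (fun x : Fin N → E => x ∘ Fin.castLE (le_refl N)) ρN = ρN := by
  have : (fun x : Fin N → E => x ∘ Fin.castLE (le_refl N)) = id := by
    funext x; funext i; rfl
  rw [this, Measure.map_id]


lemma neg_mul_log_le {a : ℝ} (ha : 0 ≤ a) : -(a * Real.log a) ≤ Real.exp (-1) := by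
  rcases eq_or_lt_of_le ha with h | h
  · simp [← h, Real.exp_pos (-1) |>.le]
  · have h1 : Real.log (a⁻¹ / Real.exp 1) ≤ a⁻¹ / Real.exp 1 - 1 :=
      Real.log_le_sub_one_of_pos (by positivity)
    have h2 : Real.log (a⁻¹ / Real.exp 1) = -Real.log a - 1 := by
      rw [Real.log_div (by positivity) (Real.exp_ne_zero 1), Real.log_exp, Real.log_inv]
    have h3 : -Real.log a ≤ a⁻¹ / Real.exp 1 := by linarith
    have h4 : a * (a⁻¹ / Real.exp 1) = (Real.exp 1)⁻¹ := by field_simp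
    have h5 : -(a * Real.log a) = a * (-Real.log a) := by ring
    rw [h5, Real.exp_neg]
    calc a * (-Real.log a) ≤ a * (a⁻¹ / Real.exp 1) := by
          exact mul_le_mul_of_nonneg_left h3 h.le
      _ = (Real.exp 1)⁻¹ := h4

lemma mul_trunc_le {a b c : ℝ} (ha : 0 ≤ a) (hb : 0 < b) (hc : c ≤ Real.log b) :
    a * c ≤ a * Real.log a + b - a := by
  rcases eq_or_lt_of_le ha with h | h
  · simp [← h]; linarith
  · have h1 : Real.log (b / a) ≤ b / a - 1 := Real.log_le_sub_one_of_pos (by positivity)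
    have h2 : Real.log (b / a) = Real.log b - Real.log a := Real.log_div hb.ne' h.ne'
    have h3 : a * (b / a) = b := by field_simp
    nlinarith [mul_le_mul_of_nonneg_left h1 h.le, mul_le_mul_of_nonneg_left hc h.le]

variable {α : Type*} [MeasurableSpace α] {μ ν : Measure α}

/-- The negative part of the log-likelihood ratio always has small integral. -/
lemma lintegral_ofReal_neg_llr_le [IsProbabilityMeasure μ] [IsProbabilityMeasure ν]
    (hμν : μ ≪ ν) :
    ∫⁻ x, ENNReal.ofReal (- llr μ ν x) ∂μ ≤ ENNReal.ofReal (Real.exp (-1)) := by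
  have hmeas : AEMeasurable (fun x => ENNReal.ofReal (- llr μ ν x)) ν :=
    (ENNReal.measurable_ofReal.comp (measurable_llr μ ν).neg).aemeasurable
  rw [← lintegral_rnDeriv_mul hμν hmeas]
  calc ∫⁻ x, μ.rnDeriv ν x * ENNReal.ofReal (- llr μ ν x) ∂ν
      ≤ ∫⁻ _, ENNReal.ofReal (Real.exp (-1)) ∂ν := by
        refine lintegral_mono_ae ?_
        filter_upwards [Measure.rnDeriv_lt_top μ ν] with x hx
        set a := (μ.rnDeriv ν x).toReal with hadef
        have ha : 0 ≤ a := ENNReal.toReal_nonneg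
        have hfx : μ.rnDeriv ν x = ENNReal.ofReal a := by
          rw [hadef, ENNReal.ofReal_toReal hx.ne]
        rw [hfx, ← ENNReal.ofReal_mul ha]
        refine ENNReal.ofReal_le_ofReal ?_
        have : a * - llr μ ν x = -(a * Real.log a) := by
          simp only [llr, ← hadef]; ring
        rw [this]
        exact neg_mul_log_le ha
    _ = ENNReal.ofReal (Real.exp (-1)) := by simp

/-- Truncated Donsker-Varadhan / Gibbs inequality. -/
lemma dv_trunc [IsProbabilityMeasure μ] [IsProbabilityMeasure ν] (hμν : μ ≪ ν)
    (h_int : Integrable (llr μ ν) μ)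
    (G : α → ℝ≥0∞) (hG : Measurable G) (hG1 : ∫⁻ x, G x ∂ν ≤ 1)
    (φ : α → ℝ) (M : ℝ)
    (hmin : Integrable (fun x => min (φ x) M) μ)
    (hφle : ∀ᵐ x ∂μ, φ x ≤ Real.log (G x).toReal ∧ G x ≠ 0 ∧ G x ≠ ⊤) :
    ∫ x, min (φ x) M ∂μ ≤ ∫ x, llr μ ν x ∂μ := by
  set f := μ.rnDeriv ν with hfdef
  have hf_meas : Measurable f := Measure.measurable_rnDeriv μ ν
  have e1 : ∫ x, min (φ x) M ∂μ = ∫ x, (f x).toReal • (min (φ x) M) ∂ν :=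
    (integral_rnDeriv_smul hμν).symm
  have e2 : ∫ x, llr μ ν x ∂μ = ∫ x, (f x).toReal • (llr μ ν x) ∂ν :=
    (integral_rnDeriv_smul hμν).symm
  have hμ_eq : ν.withDensity f = μ := Measure.withDensity_rnDeriv_eq μ ν hμν
  have hae : ∀ᵐ x ∂ν, f x ≠ 0 →
      (φ x ≤ Real.log (G x).toReal ∧ G x ≠ 0 ∧ G x ≠ ⊤) := by
    rw [← hμ_eq] at hφle
    exact (ae_withDensity_iff hf_meas).mp hφle
  have hflt : ∀ᵐ x ∂ν, f x < ⊤ := Measure.rnDeriv_lt_top μ ν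
  have hGne : ∫⁻ x, G x ∂ν ≠ ⊤ := (lt_of_le_of_lt hG1 ENNReal.one_lt_top).ne
  have hGlt : ∀ᵐ x ∂ν, G x < ⊤ := ae_lt_top hG hGne
  have iφ : Integrable (fun x => (f x).toReal • (min (φ x) M)) ν :=
    (integrable_rnDeriv_smul_iff hμν).mpr hmin
  have illr : Integrable (fun x => (f x).toReal • (llr μ ν x)) ν :=
    (integrable_rnDeriv_smul_iff hμν).mpr h_int
  have iG : Integrable (fun x => (G x).toReal) ν :=
    integrable_toReal_of_lintegral_ne_top hG.aemeasurable hGne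
  have if' : Integrable (fun x => (f x).toReal) ν := Measure.integrable_toReal_rnDeriv
  have hpoint : ∀ᵐ x ∂ν, (f x).toReal • (min (φ x) M)
      ≤ (f x).toReal • (llr μ ν x) + (G x).toReal - (f x).toReal := by
    filter_upwards [hae, hflt, hGlt] with x h1 h2 h3
    by_cases hf0 : f x = 0
    · simp [hf0, ENNReal.toReal_nonneg]
    · obtain ⟨hφ, hG0, hGt⟩ := h1 hf0
      have ha : 0 ≤ (f x).toReal := ENNReal.toReal_nonneg
      have hb : 0 < (G x).toReal := ENNReal.toReal_pos hG0 hGt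
      have hmin_le : min (φ x) M ≤ Real.log (G x).toReal := le_trans (min_le_left _ _) hφ
      have hllr : llr μ ν x = Real.log (f x).toReal := rfl
      simp only [smul_eq_mul, hllr]
      exact mul_trunc_le ha hb hmin_le
  rw [e1, e2]
  have hAG : Integrable (fun x => (f x).toReal • (llr μ ν x) + (G x).toReal) ν := illr.add iG
  have key : ∫ x, (f x).toReal • (min (φ x) M) ∂ν
      ≤ ∫ x, ((f x).toReal • (llr μ ν x) + (G x).toReal - (f x).toReal) ∂ν :=
    integral_mono_ae iφ (hAG.sub if') hpoint
  have hsplit : ∫ x, ((f x).toReal • (llr μ ν x) + (G x).toReal - (f x).toReal) ∂ν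
      = ∫ x, (f x).toReal • (llr μ ν x) ∂ν + ∫ x, (G x).toReal ∂ν - ∫ x, (f x).toReal ∂ν := by
    rw [integral_sub hAG if', integral_add illr iG]
  have hGint : ∫ x, (G x).toReal ∂ν ≤ 1 := by
    rw [integral_toReal hG.aemeasurable hGlt]
    calc (∫⁻ x, G x ∂ν).toReal ≤ (1 : ℝ≥0∞).toReal :=
      ENNReal.toReal_mono ENNReal.one_ne_top hG1
    _ = 1 := by simp
  have hfint : ∫ x, (f x).toReal ∂ν = 1 := by
    rw [Measure.integral_toReal_rnDeriv hμν]; simp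
  linarith [key, hsplit.le, hsplit.ge]

/-- Monotone truncation limit. -/
lemma integrable_and_integral_le_of_trunc [IsProbabilityMeasure μ]
    (φ B : α → ℝ) (hφm : Measurable φ) (hBm : Measurable B)
    (hB : Integrable B μ) (hB0 : ∀ x, 0 ≤ B x) (hφB : ∀ᵐ x ∂μ, -B x ≤ φ x)
    (c : ℝ) (hc : ∀ m : ℕ, ∫ x, min (φ x) (m : ℝ) ∂μ ≤ c) :
    Integrable φ μ ∧ ∫ x, φ x ∂μ ≤ c := by
  have hmin_meas : ∀ m : ℕ, Measurable (fun x => min (φ x) (m : ℝ)) :=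
    fun m => hφm.min measurable_const
  have hmin_int : ∀ m : ℕ, Integrable (fun x => min (φ x) (m : ℝ)) μ := by
    intro m
    refine Integrable.mono' (hB.add (integrable_const (m : ℝ)))
      (hmin_meas m).aestronglyMeasurable ?_
    filter_upwards [hφB] with x hx
    rw [Real.norm_eq_abs, abs_le]
    simp only [Pi.add_apply]
    have hm0 : (0:ℝ) ≤ (m:ℝ) := Nat.cast_nonneg m
    have h1 : -B x ≤ min (φ x) (m : ℝ) := le_min hx (by linarith [hB0 x])
    constructor
    · linarith
    · calc min (φ x) (m : ℝ) ≤ (m : ℝ) := min_le_right _ _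
      _ ≤ B x + m := by linarith [hB0 x]
  -- integrability of φ
  have hint : Integrable φ μ := by
    have hu_int : ∀ m : ℕ, Integrable (fun x => min (φ x) (m : ℝ) + B x) μ :=
      fun m => (hmin_int m).add hB
    have hu_nonneg : ∀ m : ℕ, 0 ≤ᵐ[μ] (fun x => min (φ x) (m : ℝ) + B x) := by
      intro m
      filter_upwards [hφB] with x hx
      have h1 : -B x ≤ min (φ x) (m : ℝ) := le_min hx (by linarith [hB0 x, Nat.cast_nonneg (α := ℝ) m])
      simp only [Pi.zero_apply]; linarith
    have hsup : ∀ x, (⨆ m : ℕ, ENNReal.ofReal (min (φ x) (m : ℝ) + B x))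
        = ENNReal.ofReal (φ x + B x) := by
      intro x
      refine le_antisymm (iSup_le fun m => ENNReal.ofReal_le_ofReal (by
        have := min_le_left (φ x) (m : ℝ); linarith)) ?_
      refine le_iSup_of_le ⌈φ x⌉₊ (ENNReal.ofReal_le_ofReal ?_)
      have : φ x ≤ (⌈φ x⌉₊ : ℝ) := Nat.le_ceil _
      have : min (φ x) ((⌈φ x⌉₊ : ℝ)) = φ x := min_eq_left this
      linarith [this.ge]
    have hlim : ∫⁻ x, ENNReal.ofReal (φ x + B x) ∂μ ≤ ENNReal.ofReal (c + ∫ x, B x ∂μ) := by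
      have : ∫⁻ x, ENNReal.ofReal (φ x + B x) ∂μ
          = ⨆ m : ℕ, ∫⁻ x, ENNReal.ofReal (min (φ x) (m : ℝ) + B x) ∂μ := by
        rw [← lintegral_iSup (f := fun m x => ENNReal.ofReal (min (φ x) (m : ℝ) + B x))
          (fun m => ((hmin_meas m).add hBm).ennreal_ofReal)
          (fun a b hab x => ENNReal.ofReal_le_ofReal (by
            show min (φ x) (a : ℝ) + B x ≤ min (φ x) (b : ℝ) + B x
            have : min (φ x) (a : ℝ) ≤ min (φ x) (b : ℝ) :=
              min_le_min le_rfl (Nat.cast_le.mpr hab)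
            linarith))]
        simp_rw [hsup]
      rw [this]
      refine iSup_le fun m => ?_
      rw [← ofReal_integral_eq_lintegral_ofReal (hu_int m) (hu_nonneg m)]
      refine ENNReal.ofReal_le_ofReal ?_
      rw [integral_add (hmin_int m) hB]
      linarith [hc m]
    have hfin : ∫⁻ x, ENNReal.ofReal (φ x + B x) ∂μ < ⊤ :=
      lt_of_le_of_lt hlim ENNReal.ofReal_lt_top
    have hφB_int : Integrable (fun x => φ x + B x) μ := by
      refine ⟨(hφm.add hBm).aestronglyMeasurable, ?_⟩
      rw [hasFiniteIntegral_iff_ofReal ?_]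
      · exact hfin
      · filter_upwards [hφB] with x hx
        simp only [Pi.zero_apply]; linarith
    have : φ = fun x => (φ x + B x) - B x := by funext x; ring
    rw [this]; exact hφB_int.sub hB
  refine ⟨hint, ?_⟩
  -- limit of integrals
  have htend : Filter.Tendsto (fun m : ℕ => ∫ x, min (φ x) (m : ℝ) ∂μ)
      Filter.atTop (nhds (∫ x, φ x ∂μ)) := by
    refine tendsto_integral_of_dominated_convergence (fun x => |φ x|)
      (fun m => (hmin_meas m).aestronglyMeasurable) hint.abs ?_ ?_
    · intro m
      refine Filter.Eventually.of_forall fun x => ?_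
      rw [Real.norm_eq_abs, abs_le]
      rcases le_or_gt 0 (φ x) with h | h
      · constructor
        · have : (0:ℝ) ≤ min (φ x) (m:ℝ) := le_min h (Nat.cast_nonneg m)
          linarith [abs_nonneg (φ x)]
        · calc min (φ x) (m : ℝ) ≤ φ x := min_le_left _ _
          _ ≤ |φ x| := le_abs_self _
      · have : min (φ x) (m : ℝ) = φ x := min_eq_left (by linarith [Nat.cast_nonneg (α := ℝ) m])
        rw [this]; constructor
        · linarith [neg_abs_le (φ x)]
        · exact le_abs_self _
    · refine Filter.Eventually.of_forall fun x => ?_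
      refine Filter.Tendsto.congr' ?_ tendsto_const_nhds
      filter_upwards [Filter.eventually_ge_atTop ⌈φ x⌉₊] with m hm
      exact (min_eq_left ((Nat.le_ceil _).trans (Nat.cast_le.mpr hm))).symm
  exact le_of_tendsto htend (Filter.Eventually.of_forall hc)


lemma insertNth_comp_succAbove {n : ℕ} (i : Fin (n + 1)) (x : Fin (n + 1) → E) (t : E) :
    i.insertNth t (x ∘ i.succAbove) = Function.update x i t := by
  funext j
  refine Fin.succAboveCases i ?_ ?_ j
  · rw [Fin.insertNth_apply_same, Function.update_self]
  · intro j'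
    rw [Fin.insertNth_apply_succAbove]
    exact (Function.update_of_ne (Fin.succAbove_ne i j') t x).symm

/-- the integrated-out density represents the dropped-coordinate marginal -/
lemma withDensity_marginal {n : ℕ} (μ : Measure (Fin (n + 1) → E)) [IsProbabilityMeasure μ]
    (ρ : Measure E) [IsProbabilityMeasure ρ]
    (hac : μ ≪ Measure.pi fun _ : Fin (n + 1) => ρ) (i : Fin (n + 1)) :
    (Measure.pi fun _ : Fin n => ρ).withDensity
        (fun y : Fin n → E =>
          ∫⁻ t, μ.rnDeriv (Measure.pi fun _ : Fin (n + 1) => ρ) (i.insertNth t y) ∂ρ)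
      = Measure.map (fun x : Fin (n + 1) → E => x ∘ i.succAbove) μ := by
  set ν1 : Measure (Fin (n + 1) → E) := Measure.pi fun _ => ρ with hν1
  set ν0 : Measure (Fin n → E) := Measure.pi fun _ => ρ with hν0
  set f := μ.rnDeriv ν1 with hf
  have hf_meas : Measurable f := Measure.measurable_rnDeriv _ _
  set e := MeasurableEquiv.piFinSuccAbove (fun _ : Fin (n + 1) => E) i with he
  have hesymm : ∀ (t : E) (y : Fin n → E), e.symm (t, y) = i.insertNth t y := by
    intro t y
    rw [MeasurableEquiv.piFinSuccAbove_symm_apply]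
    rfl
  have mp : MeasurePreserving e ν1 (ρ.prod ν0) :=
    measurePreserving_piFinSuccAbove (fun _ : Fin (n + 1) => ρ) i
  set h : (Fin n → E) → ℝ≥0∞ := fun y => ∫⁻ t, f (e.symm (t, y)) ∂ρ with hh
  have hfe : Measurable (f ∘ e.symm) := hf_meas.comp e.symm.measurable
  have hh_meas : Measurable h := by
    refine Measurable.lintegral_prod_left ?_
    exact hfe
  have hinsert : ∀ y, (∫⁻ t, f (i.insertNth t y) ∂ρ) = h y := by
    intro y
    refine lintegral_congr fun t => ?_
    rw [hesymm]
  refine Measure.ext fun s hs => ?_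
  rw [withDensity_apply _ hs, Measure.map_apply (measurable_comp_proj _) hs]
  have hA : MeasurableSet ((fun x : Fin (n + 1) → E => x ∘ i.succAbove) ⁻¹' s) :=
    (measurable_comp_proj _) hs
  rw [← Measure.withDensity_rnDeriv_eq μ ν1 hac, withDensity_apply _ hA, ← hf]
  set A := (fun x : Fin (n + 1) → E => x ∘ i.succAbove) ⁻¹' s with hAdef
  have step1 : ∫⁻ x in A, f x ∂ν1 = ∫⁻ x, A.indicator f x ∂ν1 :=
    (lintegral_indicator hA f).symm
  have hind_meas : Measurable (A.indicator f) := hf_meas.indicator hA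
  have step2 : ∫⁻ x, A.indicator f x ∂ν1 = ∫⁻ z, A.indicator f (e.symm z) ∂(ρ.prod ν0) := by
    have := (mp.symm e).lintegral_comp hind_meas
    exact this.symm
  have step3 : ∫⁻ z, A.indicator f (e.symm z) ∂(ρ.prod ν0)
      = ∫⁻ y, ∫⁻ t, A.indicator f (e.symm (t, y)) ∂ρ ∂ν0 :=
    lintegral_prod_symm _ (hind_meas.comp e.symm.measurable).aemeasurable
  have step4 : ∀ y, (∫⁻ t, A.indicator f (e.symm (t, y)) ∂ρ) = s.indicator h y := by
    intro y
    have hcomp : ∀ t, (i.insertNth t y) ∘ i.succAbove = y := by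
      intro t; funext j
      simp
    have hmem : ∀ t, e.symm (t, y) ∈ A ↔ y ∈ s := by
      intro t
      rw [hesymm]
      simp only [hAdef, Set.mem_preimage, hcomp t]
    by_cases hy : y ∈ s
    · rw [Set.indicator_of_mem hy, ← hinsert y]
      refine lintegral_congr fun t => ?_
      rw [Set.indicator_of_mem ((hmem t).mpr hy), hesymm]
    · rw [Set.indicator_of_notMem hy]
      have hz : ∀ t, A.indicator f (e.symm (t, y)) = 0 :=
        fun t => Set.indicator_of_notMem (fun hmem' => hy ((hmem t).mp hmem')) f
      rw [lintegral_congr hz, lintegral_zero]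
  calc ∫⁻ y in s, (fun y : Fin n → E => ∫⁻ t, f (i.insertNth t y) ∂ρ) y ∂ν0
      = ∫⁻ y in s, h y ∂ν0 := by
        refine lintegral_congr fun y => ?_
        exact hinsert y
    _ = ∫⁻ y, s.indicator h y ∂ν0 := (lintegral_indicator hs h).symm
    _ = ∫⁻ z, A.indicator f (e.symm z) ∂(ρ.prod ν0) := by
        rw [step3]
        exact (lintegral_congr step4).symm
    _ = ∫⁻ x in A, f x ∂ν1 := by rw [← step2, ← step1]


lemma measurable_insertNth_lintegral {n : ℕ} (ρ : Measure E) [SFinite ρ] (i : Fin (n + 1))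
    {f : (Fin (n + 1) → E) → ℝ≥0∞} (hf : Measurable f) :
    Measurable (fun y : Fin n → E => ∫⁻ t, f (i.insertNth t y) ∂ρ) := by
  set e := MeasurableEquiv.piFinSuccAbove (fun _ : Fin (n + 1) => E) i with he
  have hesymm : ∀ (t : E) (y : Fin n → E), e.symm (t, y) = i.insertNth t y := by
    intro t y
    rw [he, MeasurableEquiv.piFinSuccAbove_symm_apply]
    rfl
  have : (fun y : Fin n → E => ∫⁻ t, f (i.insertNth t y) ∂ρ)
      = fun y => ∫⁻ t, (f ∘ e.symm) (t, y) ∂ρ := by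
    funext y
    refine lintegral_congr fun t => ?_
    simp only [Function.comp_apply, hesymm]
  rw [this]
  exact Measurable.lintegral_prod_left (hf.comp e.symm.measurable)

theorem han_step {n : ℕ} (hn : 1 ≤ n)
    (μ : Measure (Fin (n + 1) → E)) [IsProbabilityMeasure μ]
    (hsymmμ : ∀ σ : Equiv.Perm (Fin (n + 1)), Measure.map (fun x => x ∘ σ) μ = μ)
    (ρ : Measure E) [IsProbabilityMeasure ρ]
    (hac : μ ≪ Measure.pi fun _ : Fin (n + 1) => ρ)
    (hint : Integrable (llr μ (Measure.pi fun _ : Fin (n + 1) => ρ)) μ) :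
    Integrable
        (llr (Measure.map (fun x : Fin (n + 1) → E => x ∘ Fin.castLE (Nat.le_succ n)) μ)
          (Measure.pi fun _ : Fin n => ρ))
        (Measure.map (fun x : Fin (n + 1) → E => x ∘ Fin.castLE (Nat.le_succ n)) μ) ∧
      ((n : ℝ) + 1) *
          ∫ y, llr (Measure.map (fun x : Fin (n + 1) → E => x ∘ Fin.castLE (Nat.le_succ n)) μ)
            (Measure.pi fun _ : Fin n => ρ) y
            ∂(Measure.map (fun x : Fin (n + 1) → E => x ∘ Fin.castLE (Nat.le_succ n)) μ)
        ≤ (n : ℝ) * ∫ x, llr μ (Measure.pi fun _ : Fin (n + 1) => ρ) x ∂μ := by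
  have hn0 : (0 : ℝ) < n := by exact_mod_cast hn
  set ν1 : Measure (Fin (n + 1) → E) := Measure.pi fun _ => ρ with hν1
  set ν0 : Measure (Fin n → E) := Measure.pi fun _ => ρ with hν0
  set μ' := Measure.map (fun x : Fin (n + 1) → E => x ∘ Fin.castLE (Nat.le_succ n)) μ with hμ'
  haveI : IsProbabilityMeasure μ' :=
    Measure.isProbabilityMeasure_map (measurable_comp_proj _).aemeasurable
  have hproj_meas : ∀ i : Fin (n + 1),
      Measurable (fun x : Fin (n + 1) → E => x ∘ i.succAbove) :=
    fun i => measurable_comp_proj _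
  have hmapμ : ∀ i : Fin (n + 1),
      Measure.map (fun x : Fin (n + 1) → E => x ∘ i.succAbove) μ = μ' :=
    fun i => map_comp_inj_eq hsymmμ (Nat.le_succ n) _ Fin.succAbove_right_injective
  have hmapν : ∀ i : Fin (n + 1),
      Measure.map (fun x : Fin (n + 1) → E => x ∘ i.succAbove) ν1 = ν0 :=
    fun i => map_pi_comp _ Fin.succAbove_right_injective ρ
  have hμ'ac : μ' ≪ ν0 := by
    rw [hμ', hν0, ← map_pi_comp (Fin.castLE (Nat.le_succ n)) (Fin.castLE_injective _) ρ]
    exact hac.map (measurable_comp_proj _)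
  set f := μ.rnDeriv ν1 with hf
  have hf_meas : Measurable f := Measure.measurable_rnDeriv _ _
  set r := μ'.rnDeriv ν0 with hr
  have hr_meas : Measurable r := Measure.measurable_rnDeriv _ _
  set ψ : Fin (n + 1) → (Fin (n + 1) → E) → ℝ :=
    fun i x => llr μ' ν0 (x ∘ i.succAbove) with hψ
  have hψmeas : ∀ i, Measurable (ψ i) :=
    fun i => (measurable_llr μ' ν0).comp (hproj_meas i)
  set φ : (Fin (n + 1) → E) → ℝ := fun x => (n : ℝ)⁻¹ * ∑ i, ψ i x with hφ
  have hφm : Measurable φ :=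
    (Finset.measurable_sum _ fun i _ => hψmeas i).const_mul _
  -- identification of line integrals with the marginal density
  have hLmeas : ∀ i : Fin (n + 1),
      Measurable (fun y : Fin n → E => ∫⁻ t, f (i.insertNth t y) ∂ρ) :=
    fun i => measurable_insertNth_lintegral ρ i hf_meas
  have hrd : ∀ i : Fin (n + 1),
      (fun y : Fin n → E => ∫⁻ t, f (i.insertNth t y) ∂ρ) =ᵐ[ν0] r := by
    intro i
    have h1 := withDensity_marginal μ ρ hac i
    rw [hmapμ i] at h1
    have h2 := Measure.rnDeriv_withDensity ν0 (hLmeas i)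
    rw [h1] at h2
    exact h2.symm
  have hrd1 : ∀ i : Fin (n + 1), ∀ᵐ x ∂ν1,
      (∫⁻ t, f (Function.update x i t) ∂ρ) = r (x ∘ i.succAbove) := by
    intro i
    have h2 : ∀ᵐ y ∂(Measure.map (fun x : Fin (n + 1) → E => x ∘ i.succAbove) ν1),
        (∫⁻ t, f (i.insertNth t y) ∂ρ) = r y := by
      rw [hmapν i]; exact hrd i
    have h3 := ae_of_ae_map (hproj_meas i).aemeasurable h2
    filter_upwards [h3] with x hx
    rw [← hx]
    exact lintegral_congr fun t => by rw [insertNth_comp_succAbove]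
  have hLr : ∀ i : Fin (n + 1), ∀ᵐ x ∂μ,
      (∫⁻ t, f (Function.update x i t) ∂ρ) = r (x ∘ i.succAbove) :=
    fun i => hac.ae_le (hrd1 i)
  have hpos : ∀ i : Fin (n + 1), ∀ᵐ x ∂μ, 0 < r (x ∘ i.succAbove) := by
    intro i
    have h1 : ∀ᵐ y ∂μ', 0 < r y := Measure.rnDeriv_pos hμ'ac
    rw [← hmapμ i] at h1
    exact ae_of_ae_map (hproj_meas i).aemeasurable h1
  have hfin : ∀ i : Fin (n + 1), ∀ᵐ x ∂μ, r (x ∘ i.succAbove) < ⊤ := by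
    intro i
    have h1 : ∀ᵐ y ∂ν0, r y < ⊤ := Measure.rnDeriv_lt_top μ' ν0
    rw [← hmapν i] at h1
    exact hac.ae_le (ae_of_ae_map (hproj_meas i).aemeasurable h1)
  -- the grid-lines function
  set q : ℝ := 1 / ((Fintype.card (Fin (n + 1)) : ℝ) - 1) with hqdef
  have hq : q = (n : ℝ)⁻¹ := by
    rw [hqdef, Fintype.card_fin]
    push_cast
    rw [add_sub_cancel_right, one_div]
  have hq0 : 0 < q := by rw [hq]; positivity
  set G : (Fin (n + 1) → E) → ℝ≥0∞ :=
    fun x => ∏ i, (∫⁻ t, f (Function.update x i t) ∂ρ) ^ q with hG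
  have hGmeas : Measurable G := by
    refine Finset.measurable_prod _ fun i _ => ?_
    have h1 : (fun x : Fin (n + 1) → E => ∫⁻ t, f (Function.update x i t) ∂ρ)
        = fun x => (fun y : Fin n → E => ∫⁻ t, f (i.insertNth t y) ∂ρ) (x ∘ i.succAbove) := by
      funext x
      exact (lintegral_congr fun t => by rw [insertNth_comp_succAbove]).symm
    have h2 : Measurable (fun x : Fin (n + 1) → E => ∫⁻ t, f (Function.update x i t) ∂ρ) := by
      rw [h1]; exact (hLmeas i).comp (hproj_meas i)
    exact (ENNReal.continuous_rpow_const.measurable).comp h2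
  have hG1 : ∫⁻ x, G x ∂ν1 ≤ 1 := by
    have hp : ((Fintype.card (Fin (n + 1)) : ℝ)).HolderConjugate (((n : ℝ) + 1) / n) := by
      rw [Fintype.card_fin]
      rw [Real.holderConjugate_iff]
      constructor
      · push_cast; linarith
      · push_cast
        field_simp
        ring
    have hgrid := lintegral_prod_lintegral_pow_le (fun _ : Fin (n + 1) => ρ) hp hf_meas
    have hint1 : ∫⁻ x, f x ∂ν1 = 1 := by
      rw [hf, Measure.lintegral_rnDeriv hac, measure_univ]
    rw [hint1, ENNReal.one_rpow] at hgrid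
    exact hgrid
  -- a.e. identification of log G with φ
  have hGae : ∀ᵐ x ∂μ, Real.log (G x).toReal = φ x ∧ G x ≠ 0 ∧ G x ≠ ⊤ := by
    have hall : ∀ᵐ x ∂μ, ∀ i : Fin (n + 1),
        (∫⁻ t, f (Function.update x i t) ∂ρ) = r (x ∘ i.succAbove)
          ∧ 0 < r (x ∘ i.succAbove) ∧ r (x ∘ i.succAbove) < ⊤ := by
      rw [ae_all_iff]
      intro i
      filter_upwards [hLr i, hpos i, hfin i] with x h1 h2 h3
      exact ⟨h1, h2, h3⟩
    filter_upwards [hall] with x hx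
    have hGx : G x = ∏ i : Fin (n + 1), (r (x ∘ i.succAbove)) ^ q := by
      simp only [hG]
      exact Finset.prod_congr rfl fun i _ => by rw [(hx i).1]
    have hfac_ne0 : ∀ i : Fin (n + 1), (r (x ∘ i.succAbove)) ^ q ≠ 0 :=
      fun i => (ENNReal.rpow_pos (hx i).2.1 (hx i).2.2.ne).ne'
    have hfac_netop : ∀ i : Fin (n + 1), (r (x ∘ i.succAbove)) ^ q < ⊤ :=
      fun i => lt_top_iff_ne_top.mpr (ENNReal.rpow_ne_top_of_nonneg hq0.le (hx i).2.2.ne)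
    refine ⟨?_, ?_, ?_⟩
    · rw [hGx, ENNReal.toReal_prod]
      have h4 : ∀ i : Fin (n + 1),
          ((r (x ∘ i.succAbove)) ^ q).toReal = ((r (x ∘ i.succAbove)).toReal) ^ q :=
        fun i => (ENNReal.toReal_rpow _ _).symm
      rw [Finset.prod_congr rfl fun i _ => h4 i]
      have hrpos : ∀ i : Fin (n + 1), 0 < (r (x ∘ i.succAbove)).toReal :=
        fun i => ENNReal.toReal_pos (hx i).2.1.ne' (hx i).2.2.ne
      rw [Real.log_prod (fun i _ => (Real.rpow_pos_of_pos (hrpos i) q).ne')]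
      have h5 : ∀ i : Fin (n + 1),
          Real.log (((r (x ∘ i.succAbove)).toReal) ^ q) = q * ψ i x := by
        intro i
        rw [Real.log_rpow (hrpos i)]
        rfl
      rw [Finset.sum_congr rfl fun i _ => h5 i, ← Finset.mul_sum, hq]
    · rw [hGx]
      exact Finset.prod_ne_zero_iff.mpr fun i _ => hfac_ne0 i
    · rw [hGx]
      exact (ENNReal.prod_lt_top fun i _ => hfac_netop i).ne
  -- negative parts
  set nψ : Fin (n + 1) → (Fin (n + 1) → E) → ℝ := fun i x => max (-ψ i x) 0 with hnψ
  have hnψ_meas : ∀ i, Measurable (nψ i) := fun i => (hψmeas i).neg.max measurable_const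
  have hnψ0 : ∀ i x, 0 ≤ nψ i x := fun i x => le_max_right _ _
  have hnψ_le : ∀ i x, -(nψ i x) ≤ ψ i x := by
    intro i x
    have := le_max_left (-ψ i x) 0
    linarith
  have hnψ_int : ∀ i, Integrable (nψ i) μ := by
    intro i
    refine ⟨(hnψ_meas i).aestronglyMeasurable, ?_⟩
    rw [hasFiniteIntegral_iff_ofReal (ae_of_all _ fun x => hnψ0 i x)]
    have heq : ∀ x : Fin (n + 1) → E,
        ENNReal.ofReal (nψ i x) = ENNReal.ofReal (-ψ i x) := by
      intro x
      rcases le_total (-ψ i x) 0 with h | h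
      · rw [hnψ]; simp only [max_eq_right h, ENNReal.ofReal_of_nonpos h, ENNReal.ofReal_zero]
      · rw [hnψ]; simp only [max_eq_left h]
    calc ∫⁻ x, ENNReal.ofReal (nψ i x) ∂μ
        = ∫⁻ x, ENNReal.ofReal (-llr μ' ν0 (x ∘ i.succAbove)) ∂μ := by
          exact lintegral_congr fun x => heq x
      _ = ∫⁻ y, ENNReal.ofReal (-llr μ' ν0 y)
            ∂(Measure.map (fun x : Fin (n + 1) → E => x ∘ i.succAbove) μ) :=
          (lintegral_map ((measurable_llr μ' ν0).neg.ennreal_ofReal) (hproj_meas i)).symm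
      _ = ∫⁻ y, ENNReal.ofReal (-llr μ' ν0 y) ∂μ' := by rw [hmapμ i]
      _ ≤ ENNReal.ofReal (Real.exp (-1)) := lintegral_ofReal_neg_llr_le hμ'ac
      _ < ⊤ := ENNReal.ofReal_lt_top
  set B : (Fin (n + 1) → E) → ℝ := fun x => (n : ℝ)⁻¹ * ∑ i, nψ i x with hB
  have hBm : Measurable B := (Finset.measurable_sum _ fun i _ => hnψ_meas i).const_mul _
  have hB_int : Integrable B μ :=
    (integrable_finset_sum _ fun i _ => hnψ_int i).const_mul _
  have hB0 : ∀ x, 0 ≤ B x := by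
    intro x
    exact mul_nonneg (by positivity) (Finset.sum_nonneg fun i _ => hnψ0 i x)
  have hφB : ∀ x, -B x ≤ φ x := by
    intro x
    have h1 : -(∑ i, nψ i x) ≤ ∑ i, ψ i x := by
      rw [← Finset.sum_neg_distrib]
      exact Finset.sum_le_sum fun i _ => hnψ_le i x
    have h2 := mul_le_mul_of_nonneg_left h1 (by positivity : (0:ℝ) ≤ (n : ℝ)⁻¹)
    calc -B x = (n : ℝ)⁻¹ * -(∑ i, nψ i x) := by rw [hB]; ring
      _ ≤ (n : ℝ)⁻¹ * ∑ i, ψ i x := h2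
      _ = φ x := rfl
  -- truncated DV inequality
  have hφle : ∀ᵐ x ∂μ, φ x ≤ Real.log (G x).toReal ∧ G x ≠ 0 ∧ G x ≠ ⊤ := by
    filter_upwards [hGae] with x hx
    exact ⟨hx.1.ge, hx.2⟩
  have hmin_int : ∀ m : ℕ, Integrable (fun x => min (φ x) (m : ℝ)) μ := by
    intro m
    refine Integrable.mono' (hB_int.add (integrable_const (m : ℝ)))
      (hφm.min measurable_const).aestronglyMeasurable (ae_of_all _ fun x => ?_)
    rw [Real.norm_eq_abs, abs_le]
    simp only [Pi.add_apply]
    have hm0 : (0:ℝ) ≤ (m:ℝ) := Nat.cast_nonneg m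
    have h1 : -B x ≤ min (φ x) (m : ℝ) := le_min (hφB x) (by linarith [hB0 x])
    exact ⟨by linarith, by linarith [min_le_right (φ x) (m:ℝ), hB0 x]⟩
  have hc : ∀ m : ℕ, ∫ x, min (φ x) (m : ℝ) ∂μ ≤ ∫ x, llr μ ν1 x ∂μ :=
    fun m => dv_trunc hac hint G hGmeas hG1 φ (m : ℝ) (hmin_int m) hφle
  obtain ⟨hφint, hφle_int⟩ := integrable_and_integral_le_of_trunc φ B hφm hBm hB_int hB0
    (ae_of_all _ hφB) _ hc
  -- integrability of each ψ i and identification of the integrals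
  set S : (Fin (n + 1) → E) → ℝ := fun x => ∑ i, ψ i x with hS
  have hSint : Integrable S μ := by
    have h1 : Integrable (fun x => (n : ℝ) * φ x) μ := hφint.const_mul _
    have h2 : (fun x => (n : ℝ) * φ x) = S := by
      funext x
      rw [hφ]
      field_simp
      rfl
    rwa [h2] at h1
  have hψint : ∀ i, Integrable (ψ i) μ := by
    intro i
    have hD : Integrable (fun x => |S x| + ∑ j, nψ j x) μ :=
      hSint.abs.add (integrable_finset_sum Finset.univ (fun j _ => hnψ_int j))
    refine Integrable.mono' hD (hψmeas i).aestronglyMeasurable (ae_of_all _ fun x => ?_)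
    rw [Real.norm_eq_abs, abs_le]

    have hub : ψ i x ≤ S x + ∑ j, nψ j x := by
      have h1 : ψ i x = S x - ∑ j ∈ Finset.univ.erase i, ψ j x := by
        rw [hS]
        have := Finset.add_sum_erase Finset.univ (fun j => ψ j x) (Finset.mem_univ i)
        linarith [this]
      have h2 : -(∑ j ∈ Finset.univ.erase i, ψ j x) ≤ ∑ j ∈ Finset.univ.erase i, nψ j x := by
        rw [← Finset.sum_neg_distrib]
        refine Finset.sum_le_sum fun j _ => ?_
        have := hnψ_le j x; linarith
      have h3 : ∑ j ∈ Finset.univ.erase i, nψ j x ≤ ∑ j, nψ j x :=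
        Finset.sum_le_sum_of_subset_of_nonneg (Finset.erase_subset _ _)
          (fun j _ _ => hnψ0 j x)
      linarith
    constructor
    · have h4 : -(nψ i x) ≤ ψ i x := hnψ_le i x
      have h5 : nψ i x ≤ ∑ j, nψ j x :=
        Finset.single_le_sum (fun j _ => hnψ0 j x) (Finset.mem_univ i)
      have h6 := neg_abs_le (S x)
      have h7 := abs_nonneg (S x)
      linarith
    · have h6 := le_abs_self (S x)
      linarith
  have hψeq : ∀ i, ∫ x, ψ i x ∂μ = ∫ y, llr μ' ν0 y ∂μ' := by
    intro i
    have h1 : ∫ y, llr μ' ν0 y ∂(Measure.map (fun x : Fin (n + 1) → E => x ∘ i.succAbove) μ)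
        = ∫ x, llr μ' ν0 (x ∘ i.succAbove) ∂μ :=
      integral_map (hproj_meas i).aemeasurable
        (stronglyMeasurable_llr μ' ν0).aestronglyMeasurable
    rw [hmapμ i] at h1
    exact h1.symm
  have hSval : ∫ x, S x ∂μ = ((n : ℝ) + 1) * ∫ y, llr μ' ν0 y ∂μ' := by
    rw [hS]
    rw [integral_finset_sum _ fun i _ => hψint i]
    rw [Finset.sum_congr rfl fun i _ => hψeq i]
    rw [Finset.sum_const, Finset.card_univ, Fintype.card_fin]
    push_cast
    ring
  have hφval : ∫ x, φ x ∂μ = (n : ℝ)⁻¹ * (((n : ℝ) + 1) * ∫ y, llr μ' ν0 y ∂μ') := by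
    rw [hφ]
    rw [integral_const_mul, ← hS, hSval]
  constructor
  · have h1 := (integrable_map_measure (stronglyMeasurable_llr μ' ν0).aestronglyMeasurable
      (hproj_meas 0).aemeasurable).mpr (hψint 0)
    rwa [hmapμ 0] at h1
  · rw [hφval] at hφle_int
    calc ((n : ℝ) + 1) * ∫ y, llr μ' ν0 y ∂μ'
        = (n : ℝ) * ((n : ℝ)⁻¹ * (((n : ℝ) + 1) * ∫ y, llr μ' ν0 y ∂μ')) := by
          field_simp
      _ ≤ (n : ℝ) * ∫ x, llr μ ν1 x ∂μ :=
          mul_le_mul_of_nonneg_left hφle_int hn0.le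


theorem chain (N : ℕ) (ρN : Measure (Fin N → E)) [IsProbabilityMeasure ρN]
    (hsymm : ∀ σ : Equiv.Perm (Fin N), Measure.map (fun x => x ∘ σ) ρN = ρN)
    (ρ : Measure E) [IsProbabilityMeasure ρ]
    (hac : ρN ≪ Measure.pi fun _ : Fin N => ρ)
    (hint : Integrable (llr ρN (Measure.pi fun _ : Fin N => ρ)) ρN) :
    ∀ (d k : ℕ) (hk1 : 1 ≤ k) (hkd : k + d = N),
      Integrable
          (llr (Measure.map (fun x : Fin N → E => x ∘ Fin.castLE (by omega : k ≤ N)) ρN)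
            (Measure.pi fun _ : Fin k => ρ))
          (Measure.map (fun x : Fin N → E => x ∘ Fin.castLE (by omega : k ≤ N)) ρN) ∧
        (k : ℝ)⁻¹ *
            ∫ y, llr (Measure.map (fun x : Fin N → E => x ∘ Fin.castLE (by omega : k ≤ N)) ρN)
              (Measure.pi fun _ : Fin k => ρ) y
              ∂(Measure.map (fun x : Fin N → E => x ∘ Fin.castLE (by omega : k ≤ N)) ρN)
          ≤ (N : ℝ)⁻¹ * ∫ x, llr ρN (Measure.pi fun _ : Fin N => ρ) x ∂ρN := by
  intro d
  induction d with
  | zero =>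
    intro k hk1 hkd
    have hkN : k = N := by omega
    subst hkN
    have hself : Measure.map (fun x : Fin k → E => x ∘ Fin.castLE (by omega : k ≤ k)) ρN
        = ρN := marg_self
    rw [hself]
    exact ⟨hint, le_refl _⟩
  | succ d ih =>
    intro k hk1 hkd
    have hk1N : k + 1 ≤ N := by omega
    have hkN : k ≤ N := by omega
    obtain ⟨ih_int, ih_le⟩ := ih (k + 1) (by omega) (by omega)
    set μ1 : Measure (Fin (k + 1) → E) :=
      Measure.map (fun x : Fin N → E => x ∘ Fin.castLE hk1N) ρN with hμ1
    haveI : IsProbabilityMeasure μ1 :=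
      Measure.isProbabilityMeasure_map (measurable_comp_proj _).aemeasurable
    have hμ1symm : ∀ σ : Equiv.Perm (Fin (k + 1)),
        Measure.map (fun x => x ∘ σ) μ1 = μ1 := fun σ => marg_symm hsymm hk1N σ
    have hμ1ac : μ1 ≪ Measure.pi fun _ : Fin (k + 1) => ρ := by
      rw [hμ1, ← map_pi_comp (Fin.castLE hk1N) (Fin.castLE_injective _) ρ]
      exact hac.map (measurable_comp_proj _)
    have hμ1int : Integrable (llr μ1 (Measure.pi fun _ : Fin (k + 1) => ρ)) μ1 := ih_int
    obtain ⟨hstep_int, hstep_le⟩ := han_step hk1 μ1 hμ1symm ρ hμ1ac hμ1int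
    have htower : Measure.map (fun y : Fin (k + 1) → E => y ∘ Fin.castLE (Nat.le_succ k)) μ1
        = Measure.map (fun x : Fin N → E => x ∘ Fin.castLE hkN) ρN := by
      rw [hμ1]
      exact marg_tower (Nat.le_succ k) hk1N
    rw [htower] at hstep_int hstep_le
    refine ⟨hstep_int, ?_⟩
    -- combine: (k+1) Hk ≤ k Hk1  and  (k+1)⁻¹ Hk1 ≤ N⁻¹ HN
    set Hk := ∫ y, llr (Measure.map (fun x : Fin N → E => x ∘ Fin.castLE hkN) ρN)
      (Measure.pi fun _ : Fin k => ρ) y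
      ∂(Measure.map (fun x : Fin N → E => x ∘ Fin.castLE hkN) ρN) with hHk
    set Hk1 := ∫ y, llr μ1 (Measure.pi fun _ : Fin (k + 1) => ρ) y ∂μ1 with hHk1
    have hk0 : (0 : ℝ) < k := by exact_mod_cast hk1
    have hk10 : (0 : ℝ) < (k : ℝ) + 1 := by linarith
    have h1 : (k : ℝ)⁻¹ * Hk ≤ ((k : ℝ) + 1)⁻¹ * Hk1 := by
      have h2 : ((k : ℝ) * ((k : ℝ) + 1))⁻¹ * (((k : ℝ) + 1) * Hk)
          ≤ ((k : ℝ) * ((k : ℝ) + 1))⁻¹ * ((k : ℝ) * Hk1) :=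
        mul_le_mul_of_nonneg_left hstep_le (by positivity)
      calc (k : ℝ)⁻¹ * Hk = ((k : ℝ) * ((k : ℝ) + 1))⁻¹ * (((k : ℝ) + 1) * Hk) := by
            field_simp
        _ ≤ ((k : ℝ) * ((k : ℝ) + 1))⁻¹ * ((k : ℝ) * Hk1) := h2
        _ = ((k : ℝ) + 1)⁻¹ * Hk1 := by field_simp
    calc (k : ℝ)⁻¹ * Hk ≤ ((k : ℝ) + 1)⁻¹ * Hk1 := h1
      _ ≤ (N : ℝ)⁻¹ * ∫ x, llr ρN (Measure.pi fun _ : Fin N => ρ) x ∂ρN := by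
          have : (((k + 1 : ℕ) : ℝ))⁻¹ = ((k : ℝ) + 1)⁻¹ := by push_cast; rfl
          rw [← this]
          exact ih_le


end ScaledRelEnt

/-- Relative entropy `H(μ|ν) = ∫ log (dμ/dν) dμ` if `μ ≪ ν` (and the integral is defined),
`+∞` otherwise, valued in `EReal`. -/
def relEnt {E : Type*} [MeasurableSpace E] (μ ν : Measure E) : EReal :=
  if μ ≪ ν ∧ Integrable (fun x => Real.log ((μ.rnDeriv ν x).toReal)) μ
  then ((∫ x, Real.log ((μ.rnDeriv ν x).toReal) ∂μ : ℝ) : EReal)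
  else ⊤

/-- monotonicity of the scaled relative entropy: for a symmetric probability
measure `ρ_N` on `E^N` and a probability measure `ρ` on `E`, for every `1 ≤ k ≤ N`,
`(1/k) H(ρ_{N,k} | ρ^{⊗k}) ≤ (1/N) H(ρ_N | ρ^{⊗N})`. -/
theorem scaled_relative_entropy_monotone
    {E : Type*} [MeasurableSpace E] [TopologicalSpace E] [PolishSpace E] [BorelSpace E]
    (N : ℕ) (hN : 1 ≤ N) (ρN : Measure (Fin N → E)) [IsProbabilityMeasure ρN]
    (hsymm : ∀ σ : Equiv.Perm (Fin N), Measure.map (fun x => x ∘ σ) ρN = ρN)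
    (ρ : Measure E) [IsProbabilityMeasure ρ]
    (k : ℕ) (hk1 : 1 ≤ k) (hkN : k ≤ N) :
    (((k : ℝ)⁻¹ : ℝ) : EReal) *
        relEnt (Measure.map (fun x (i : Fin k) => x (Fin.castLE hkN i)) ρN)
          (Measure.pi fun _ : Fin k => ρ)
      ≤ (((N : ℝ)⁻¹ : ℝ) : EReal) * relEnt ρN (Measure.pi fun _ : Fin N => ρ) := by
  by_cases hc : ρN ≪ (Measure.pi fun _ : Fin N => ρ) ∧
      Integrable (fun x => Real.log ((ρN.rnDeriv (Measure.pi fun _ : Fin N => ρ) x).toReal)) ρN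
  · -- nontrivial case
    obtain ⟨hac, hint⟩ := hc
    have hint' : Integrable (llr ρN (Measure.pi fun _ : Fin N => ρ)) ρN := hint
    obtain ⟨hkint, hkle⟩ := ScaledRelEnt.chain N ρN hsymm ρ hac hint' (N - k) k hk1 (by omega)
    set μk : Measure (Fin k → E) :=
      Measure.map (fun x : Fin N → E => x ∘ Fin.castLE hkN) ρN with hμk
    have hμk_eq : Measure.map (fun x (i : Fin k) => x (Fin.castLE hkN i)) ρN = μk := rfl
    have hkac : μk ≪ Measure.pi fun _ : Fin k => ρ := by
      rw [hμk, ← ScaledRelEnt.map_pi_comp (Fin.castLE hkN) (Fin.castLE_injective _) ρ]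
      exact hac.map (ScaledRelEnt.measurable_comp_proj _)
    have hkint' : Integrable
        (fun x => Real.log ((μk.rnDeriv (Measure.pi fun _ : Fin k => ρ) x).toReal)) μk := hkint
    rw [hμk_eq, relEnt, relEnt, if_pos ⟨hkac, hkint'⟩, if_pos ⟨hac, hint⟩]
    rw [← EReal.coe_mul, ← EReal.coe_mul, EReal.coe_le_coe_iff]
    exact hkle
  · have hrhs : relEnt ρN (Measure.pi fun _ : Fin N => ρ) = ⊤ := by
      rw [relEnt, if_neg hc]
    rw [hrhs]
    have hN0 : (0 : ℝ) < (N : ℝ)⁻¹ := by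
      have : (0 : ℝ) < N := by exact_mod_cast hN
      positivity
    rw [EReal.coe_mul_top_of_pos hN0]
    exact le_top
end
end

section
/- Let N ≥ 2, β > 0, U : ℝ^d → ℝ, and W : ℝ^d → ℝ bounded measurable and symmetric with exp(−β E_N) ∈ L¹(ℝ^{Nd}). Let ρ be a probability density on ℝ^d satisfying the fixed-point relation ρ = Z^{−1} exp(−β(U + W∗ρ)) with Z = ∫ exp(−β(U + W∗ρ)) dx. Then the partition functions satisfy Z̄_N ≥ Z^N exp( (Nβ/2) ∫_{ℝ^d} ρ (W∗ρ) dx ), where Z̄_N = ∫_{ℝ^{Nd}} exp(−β E_N) dx; equivalently, the relative entropy H(ρ^{⊗N} | ρ_N) equals log Z̄_N − (Nβ/2)∫ρ(W∗ρ)dx − N log Z, which is nonnegative. -/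
open MeasureTheory Real

noncomputable section

/-- `ρ` is a probability density on the measure space `α`. -/
def IsProbDensity {α : Type*} [MeasureSpace α] (ρ : α → ℝ) : Prop :=
  Measurable ρ ∧ (∀ x, 0 ≤ ρ x) ∧ ∫ x, ρ x = 1

/-- The convolution `(W∗ρ)(x) = ∫ W(x−y) ρ(y) dy`. -/
def convW {d : ℕ} (W ρ : (Fin d → ℝ) → ℝ) (x : Fin d → ℝ) : ℝ :=
  ∫ y, W (x - y) * ρ y

/-- The probability measure on `ℝ^d` with density `ρ`. -/
def densMeasure {d : ℕ} (ρ : (Fin d → ℝ) → ℝ) : Measure (Fin d → ℝ) :=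
  volume.withDensity fun x => ENNReal.ofReal (ρ x)

/-- The `N`-body energy
`E_N(x_1,…,x_N) = Σ_i U(x_i) + (1/(2(N−1))) Σ_{i≠j} W(x_i − x_j)`. -/
def energyN {d : ℕ} (U W : (Fin d → ℝ) → ℝ) (N : ℕ) (x : Fin N → (Fin d → ℝ)) : ℝ :=
  (∑ i, U (x i)) +
    (1 / (2 * ((N : ℝ) - 1))) * ∑ i, ∑ j ∈ Finset.univ.erase i, W (x i - x j)

/-- The relative entropy `H(μ|ν) = ∫ log (dμ/dν) dμ` (real-valued version). -/
def relEntR {E : Type*} [MeasurableSpace E] (μ ν : Measure E) : ℝ :=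
  ∫ x, Real.log ((μ.rnDeriv ν x).toReal) ∂μ

lemma measurable_convW {d : ℕ} {W ρ : (Fin d → ℝ) → ℝ} (hW : Measurable W) (hρ : Measurable ρ) :
    Measurable (convW W ρ) := by
  have h : StronglyMeasurable fun p : (Fin d → ℝ) × (Fin d → ℝ) => W (p.1 - p.2) * ρ p.2 :=
    ((hW.comp (measurable_fst.sub measurable_snd)).mul (hρ.comp measurable_snd)).stronglyMeasurable
  exact h.integral_prod_right'.measurable

lemma measurable_energyN {d : ℕ} {U W : (Fin d → ℝ) → ℝ} (hU : Measurable U) (hW : Measurable W)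
    (N : ℕ) : Measurable (energyN U W N) := by
  refine (Finset.measurable_sum _ fun i _ => hU.comp (measurable_pi_apply i)).add
    (measurable_const.mul ?_)
  exact Finset.measurable_sum _ fun i _ => Finset.measurable_sum _ fun j _ =>
    hW.comp ((measurable_pi_apply i).sub (measurable_pi_apply j))

/-- for a fixed point `ρ = Z⁻¹ exp(−β(U + W∗ρ))` of the mean-field equation, the
partition functions satisfy `Z̄_N ≥ Z^N exp((Nβ/2)∫ρ(W∗ρ))`; equivalently, the relative entropy
`H(ρ^{⊗N}|ρ_N)` equals `log Z̄_N − (Nβ/2)∫ρ(W∗ρ) − N log Z`, which is nonnegative. -/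
theorem partition_function_lower_bound {d N : ℕ} (hN : 2 ≤ N) (β : ℝ) (hβ : 0 < β)
    (U W : (Fin d → ℝ) → ℝ) (hU : Measurable U) (hW : Measurable W)
    (M : ℝ) (hWbdd : ∀ z, |W z| ≤ M) (hWsymm : ∀ z, W (-z) = W z)
    (hexp : Integrable (fun x : Fin N → (Fin d → ℝ) => Real.exp (-β * energyN U W N x)))
    (ρ : (Fin d → ℝ) → ℝ) (hρ : IsProbDensity ρ)
    (Z : ℝ) (hZ : Z = ∫ x, Real.exp (-β * (U x + convW W ρ x)))
    (hfix : ∀ x, ρ x = Real.exp (-β * (U x + convW W ρ x)) / Z) :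
    (∫ x : Fin N → (Fin d → ℝ), Real.exp (-β * energyN U W N x))
        ≥ Z ^ N * Real.exp (((N : ℝ) * β / 2) * ∫ x, ρ x * convW W ρ x) ∧
    relEntR (Measure.pi fun _ : Fin N => densMeasure ρ)
        (volume.withDensity fun x : Fin N → (Fin d → ℝ) =>
          ENNReal.ofReal (Real.exp (-β * energyN U W N x) /
            ∫ y : Fin N → (Fin d → ℝ), Real.exp (-β * energyN U W N y)))
      = Real.log (∫ x : Fin N → (Fin d → ℝ), Real.exp (-β * energyN U W N x))
        - ((N : ℝ) * β / 2) * (∫ x, ρ x * convW W ρ x) - (N : ℝ) * Real.log Z ∧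
    0 ≤ Real.log (∫ x : Fin N → (Fin d → ℝ), Real.exp (-β * energyN U W N x))
        - ((N : ℝ) * β / 2) * (∫ x, ρ x * convW W ρ x) - (N : ℝ) * Real.log Z := by
  obtain ⟨hρmeas, hρ0, hρ1⟩ := hρ
  have hcm : Measurable (convW W ρ) := measurable_convW hW hρmeas
  set c : (Fin d → ℝ) → ℝ := convW W ρ with hc
  have hM0 : 0 ≤ M := le_trans (abs_nonneg _) (hWbdd 0)
  have hρint : Integrable ρ := by
    by_contra h
    rw [integral_undef h] at hρ1
    exact one_ne_zero hρ1.symm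
  have hZpos : 0 < Z := by
    rcases lt_trichotomy Z 0 with h | h | h
    · have h0 : ρ 0 < 0 := by
        rw [hfix 0]
        exact div_neg_of_pos_of_neg (Real.exp_pos _) h
      linarith [hρ0 0]
    · have h0 : ∀ x, ρ x = 0 := fun x => by rw [hfix x, h, div_zero]
      have : (∫ x, ρ x) = 0 := by simp [h0]
      rw [this] at hρ1
      exact absurd hρ1 (by norm_num)
    · exact h
  have hρpos : ∀ x, 0 < ρ x := fun x => by
    rw [hfix x]; exact div_pos (Real.exp_pos _) hZpos
  have hcbdd : ∀ x, |c x| ≤ M := by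
    intro x
    have hint : Integrable (fun y => W (x - y) * ρ y) := by
      refine Integrable.mono' (hρint.const_mul M)
        ((hW.comp (measurable_const.sub measurable_id)).mul hρmeas).aestronglyMeasurable
        (ae_of_all _ fun y => ?_)
      rw [Real.norm_eq_abs, abs_mul, abs_of_nonneg (hρ0 y)]
      exact mul_le_mul_of_nonneg_right (hWbdd _) (hρ0 y)
    have h1 : |∫ y, W (x - y) * ρ y| ≤ ∫ y, |W (x - y) * ρ y| := by
      simpa only [Real.norm_eq_abs] using norm_integral_le_integral_norm (fun y => W (x - y) * ρ y)
    have h2 : (∫ y, |W (x - y) * ρ y|) ≤ ∫ y, M * ρ y := by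
      refine integral_mono hint.abs (hρint.const_mul M) fun y => ?_
      rw [abs_mul, abs_of_nonneg (hρ0 y)]
      exact mul_le_mul_of_nonneg_right (hWbdd _) (hρ0 y)
    calc |c x| ≤ ∫ y, |W (x - y) * ρ y| := h1
    _ ≤ ∫ y, M * ρ y := h2
    _ = M := by rw [integral_const_mul, hρ1, mul_one]
  -- the one-body measure is a probability measure
  haveI hρmP : IsProbabilityMeasure (densMeasure ρ) := by
    constructor
    rw [densMeasure, withDensity_apply _ MeasurableSet.univ, Measure.restrict_univ,
      ← ofReal_integral_eq_lintegral_ofReal hρint (ae_of_all _ hρ0), hρ1, ENNReal.ofReal_one]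
  set μN : Measure (Fin N → (Fin d → ℝ)) := Measure.pi fun _ : Fin N => densMeasure ρ with hμN
  haveI : IsProbabilityMeasure μN := by rw [hμN]; infer_instance
  set Zb : ℝ := ∫ x : Fin N → (Fin d → ℝ), Real.exp (-β * energyN U W N x) with hZb
  haveI : NeZero (volume : Measure (Fin N → (Fin d → ℝ))) :=
    ⟨Measure.measure_univ_ne_zero.mp (isOpen_univ.measure_pos volume Set.univ_nonempty).ne'⟩
  have hZbpos : 0 < Zb := integral_exp_pos hexp
  -- product density
  set p : (Fin N → (Fin d → ℝ)) → ℝ := fun x => ∏ i, ρ (x i) with hp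
  have hpm : Measurable p := Finset.measurable_prod _ fun i _ => hρmeas.comp (measurable_pi_apply i)
  have hppos : ∀ x, 0 < p x := fun x => Finset.prod_pos fun i _ => hρpos _
  have hμ_eq : μN = (volume : Measure (Fin N → (Fin d → ℝ))).withDensity
      (fun x => ENNReal.ofReal (p x)) := by
    rw [hμN]
    refine Measure.pi_eq fun s hs => ?_
    rw [withDensity_apply _ (MeasurableSet.univ_pi hs),
      ← lintegral_indicator (MeasurableSet.univ_pi hs)]
    have hind : ∀ x : Fin N → (Fin d → ℝ),
        (Set.univ.pi s).indicator (fun x => ENNReal.ofReal (p x)) x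
          = ENNReal.ofReal (∏ i, (s i).indicator ρ (x i)) := by
      intro x
      by_cases hx : x ∈ Set.univ.pi s
      · rw [Set.indicator_of_mem hx]
        congr 1
        exact Finset.prod_congr rfl fun i _ =>
          (Set.indicator_of_mem (hx i (Set.mem_univ i)) ρ).symm
      · rw [Set.indicator_of_notMem hx]
        rw [Set.mem_pi] at hx
        push_neg at hx
        obtain ⟨i, -, hi⟩ := hx
        rw [Finset.prod_eq_zero (Finset.mem_univ i) (Set.indicator_of_notMem hi ρ),
          ENNReal.ofReal_zero]
    have hint_i : ∀ i : Fin N, Integrable ((s i).indicator ρ) := fun i => hρint.indicator (hs i)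
    rw [lintegral_congr hind, volume_pi,
      ← ofReal_integral_eq_lintegral_ofReal
        (Integrable.fintype_prod (f := fun i => (s i).indicator ρ) hint_i)
        (ae_of_all _ fun x => Finset.prod_nonneg fun i _ =>
          Set.indicator_nonneg (fun y _ => hρ0 y) _),
      integral_fintype_prod_eq_prod,
      ENNReal.ofReal_prod_of_nonneg
        (fun i _ => integral_nonneg (Set.indicator_nonneg (fun y _ => hρ0 y)))]
    refine Finset.prod_congr rfl fun i _ => ?_
    rw [integral_indicator (hs i), densMeasure, withDensity_apply _ (hs i),
      ← ofReal_integral_eq_lintegral_ofReal hρint.integrableOn (ae_of_all _ fun y => hρ0 y)]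
  -- marginal maps
  have hmap1 : ∀ i : Fin N, μN.map (fun x => x i) = densMeasure ρ := by
    intro i
    refine Measure.ext fun s hs => ?_
    rw [Measure.map_apply (measurable_pi_apply i) hs]
    have hpre : (fun x : Fin N → (Fin d → ℝ) => x i) ⁻¹' s
        = Set.univ.pi (fun k => if k = i then s else Set.univ) := by
      ext x
      simp only [Set.mem_preimage, Set.mem_pi, Set.mem_univ, forall_true_left, true_implies]
      constructor
      · intro h k
        split_ifs with hk
        · rwa [hk]
        · trivial
      · intro h
        have := h i
        simpa using this
    rw [hpre, hμN, Measure.pi_pi]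
    simp [apply_ite (densMeasure ρ), measure_univ]
  have hmap2 : ∀ i j : Fin N, i ≠ j →
      μN.map (fun x => (x i, x j)) = (densMeasure ρ).prod (densMeasure ρ) := by
    intro i j hij
    refine (Measure.prod_eq fun s t hs ht => ?_).symm
    rw [Measure.map_apply ((measurable_pi_apply i).prodMk (measurable_pi_apply j)) (hs.prod ht)]
    have hpre : (fun x : Fin N → (Fin d → ℝ) => (x i, x j)) ⁻¹' (s ×ˢ t)
        = Set.univ.pi (fun k => if k = i then s else if k = j then t else Set.univ) := by
      ext x
      simp only [Set.mem_preimage, Set.mem_prod, Set.mem_pi, Set.mem_univ, true_implies]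
      constructor
      · rintro ⟨h1, h2⟩ k
        split_ifs with hk1 hk2
        · rwa [hk1]
        · rwa [hk2]
        · trivial
      · intro h
        refine ⟨?_, ?_⟩
        · have := h i; simpa using this
        · have := h j
          rw [if_neg hij.symm, if_pos rfl] at this
          exact this
    rw [hpre, hμN, Measure.pi_pi,
      ← Finset.mul_prod_erase Finset.univ _ (Finset.mem_univ i),
      ← Finset.mul_prod_erase _ _ (Finset.mem_erase.mpr ⟨hij.symm, Finset.mem_univ j⟩),
      if_pos rfl, if_neg hij.symm, if_pos rfl,
      Finset.prod_eq_one (fun k hk => ?_), mul_one]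
    rw [Finset.mem_erase, Finset.mem_erase] at hk
    rw [if_neg hk.2.1, if_neg hk.1]
    exact measure_univ
  -- integrals against densMeasure
  have hρm_int : ∀ g : (Fin d → ℝ) → ℝ, Measurable g →
      (∫ a, g a ∂(densMeasure ρ)) = ∫ a, ρ a * g a := by
    intro g hg
    rw [show densMeasure ρ = volume.withDensity (fun x => ((ρ x).toNNReal : ENNReal)) from rfl,
      integral_withDensity_eq_integral_smul hρmeas.real_toNNReal]
    exact integral_congr_ae (ae_of_all _ fun x => by
      simp [NNReal.smul_def, Real.coe_toNNReal _ (hρ0 x)])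
  set I : ℝ := ∫ x, ρ x * c x with hI
  -- one-coordinate integrals
  have hInt1 : ∀ i : Fin N, ∫ x, c (x i) ∂μN = I := by
    intro i
    rw [show (∫ x, c (x i) ∂μN) = ∫ y, c y ∂(μN.map fun x => x i) from
        (integral_map (measurable_pi_apply i).aemeasurable hcm.aestronglyMeasurable).symm,
      hmap1 i, hρm_int _ hcm]
  -- two-coordinate integrals
  have hWm2 : Measurable (fun y : (Fin d → ℝ) × (Fin d → ℝ) => W (y.1 - y.2)) :=
    hW.comp (measurable_fst.sub measurable_snd)
  have hWprodInt : Integrable (fun y : (Fin d → ℝ) × (Fin d → ℝ) => W (y.1 - y.2))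
      ((densMeasure ρ).prod (densMeasure ρ)) := by
    refine Integrable.mono' (integrable_const M) hWm2.aestronglyMeasurable
      (ae_of_all _ fun y => ?_)
    simpa [Real.norm_eq_abs] using hWbdd _
  have hInt2 : ∀ i j : Fin N, i ≠ j → ∫ x, W (x i - x j) ∂μN = I := by
    intro i j hij
    have hTm : Measurable (fun x : Fin N → (Fin d → ℝ) => (x i, x j)) :=
      (measurable_pi_apply i).prodMk (measurable_pi_apply j)
    have h1 : ∫ x, W (x i - x j) ∂μN
        = ∫ y, W (y.1 - y.2) ∂(μN.map (fun x => (x i, x j))) := by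
      rw [integral_map hTm.aemeasurable hWm2.aestronglyMeasurable]
    rw [h1, hmap2 i j hij, integral_prod _ hWprodInt]
    have hin : ∀ a, (∫ b, W (a - b) ∂(densMeasure ρ)) = c a := by
      intro a
      have hWa : Measurable fun b : Fin d → ℝ => W (a - b) :=
        hW.comp (measurable_const.sub measurable_id)
      rw [hρm_int _ hWa]
      simp only [hc, convW]
      exact integral_congr_ae (ae_of_all _ fun y => mul_comm _ _)
    simp_rw [hin]
    exact hρm_int _ hcm
  -- bounded functions are integrable against μN
  have hbd_int : ∀ (g : (Fin N → (Fin d → ℝ)) → ℝ) (K : ℝ), Measurable g → (∀ x, |g x| ≤ K) →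
      Integrable g μN := fun g K hg hK =>
    Integrable.mono' (integrable_const K) hg.aestronglyMeasurable
      (ae_of_all _ fun x => by simpa [Real.norm_eq_abs] using hK x)
  have hcomp : ∀ i : Fin N, Measurable fun x : Fin N → (Fin d → ℝ) => c (x i) :=
    fun i => hcm.comp (measurable_pi_apply i)
  have hWij : ∀ i j : Fin N, Measurable fun x : Fin N → (Fin d → ℝ) => W (x i - x j) :=
    fun i j => hW.comp ((measurable_pi_apply i).sub (measurable_pi_apply j))
  have hIntA : Integrable (fun x : Fin N → (Fin d → ℝ) => ∑ i, c (x i)) μN :=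
    integrable_finset_sum _ fun i _ =>
      hbd_int _ M (hcomp i) (fun x => hcbdd _)
  have hIntB : Integrable (fun x : Fin N → (Fin d → ℝ) =>
      ∑ i, ∑ j ∈ Finset.univ.erase i, W (x i - x j)) μN :=
    integrable_finset_sum _ fun i _ => integrable_finset_sum _ fun j _ =>
      hbd_int _ M (hWij i j) (fun x => hWbdd _)
  have hA_val : (∫ x, (∑ i, c (x i)) ∂μN) = (N : ℝ) * I := by
    rw [integral_finset_sum _ fun i _ =>
      hbd_int _ M (hcomp i) (fun x => hcbdd _)]
    rw [Finset.sum_congr rfl fun i _ => hInt1 i, Finset.sum_const, Finset.card_univ,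
      Fintype.card_fin, nsmul_eq_mul]
  have hB_val : (∫ x, (∑ i, ∑ j ∈ Finset.univ.erase i, W (x i - x j)) ∂μN)
      = (N : ℝ) * ((N : ℝ) - 1) * I := by
    rw [integral_finset_sum _ fun i _ => integrable_finset_sum _ fun j _ =>
      hbd_int _ M (hWij i j) (fun x => hWbdd _)]
    have hper : ∀ i : Fin N, (∫ x, ∑ j ∈ Finset.univ.erase i, W (x i - x j) ∂μN)
        = ((N : ℝ) - 1) * I := by
      intro i
      rw [integral_finset_sum _ fun j _ => hbd_int _ M (hWij i j) (fun x => hWbdd _),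
        Finset.sum_congr rfl (fun j hj => hInt2 i j (Finset.ne_of_mem_erase hj).symm),
        Finset.sum_const, Finset.card_erase_of_mem (Finset.mem_univ i), Finset.card_univ,
        Fintype.card_fin, nsmul_eq_mul, Nat.cast_sub (by omega), Nat.cast_one]
    rw [Finset.sum_congr rfl fun i _ => hper i, Finset.sum_const, Finset.card_univ,
      Fintype.card_fin, nsmul_eq_mul]
    ring
  -- Gibbs measure
  set ν : Measure (Fin N → (Fin d → ℝ)) := volume.withDensity fun x =>
    ENNReal.ofReal (Real.exp (-β * energyN U W N x) / Zb) with hν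
  have hEm : Measurable (energyN U W N) := measurable_energyN hU hW N
  have hQm : Measurable fun x : Fin N → (Fin d → ℝ) =>
      ENNReal.ofReal (Real.exp (-β * energyN U W N x) / Zb) :=
    (((hEm.const_mul (-β)).exp).div_const Zb).ennreal_ofReal
  have hDm : Measurable fun x : Fin N → (Fin d → ℝ) =>
      ENNReal.ofReal (p x * Zb * Real.exp (β * energyN U W N x)) :=
    ((hpm.mul_const Zb).mul ((hEm.const_mul β).exp)).ennreal_ofReal
  haveI : IsProbabilityMeasure ν := by
    constructor
    rw [hν, withDensity_apply _ MeasurableSet.univ, Measure.restrict_univ,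
      ← ofReal_integral_eq_lintegral_ofReal (hexp.div_const Zb)
        (ae_of_all _ fun x => div_nonneg (Real.exp_pos _).le hZbpos.le),
      integral_div, ← hZb, div_self hZbpos.ne', ENNReal.ofReal_one]
  have hμν : μN = ν.withDensity fun x =>
      ENNReal.ofReal (p x * Zb * Real.exp (β * energyN U W N x)) := by
    rw [hν, ← withDensity_mul _ hQm hDm, hμ_eq]
    congr 1
    funext x
    rw [Pi.mul_apply, ← ENNReal.ofReal_mul (div_nonneg (Real.exp_pos _).le hZbpos.le)]
    congr 1
    rw [show -β * energyN U W N x = -(β * energyN U W N x) by ring, Real.exp_neg]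
    field_simp
  have hμac : μN ≪ ν := by
    rw [hμν]; exact withDensity_absolutelyContinuous _ _
  have hrn : μN.rnDeriv ν =ᵐ[μN] fun x =>
      ENNReal.ofReal (p x * Zb * Real.exp (β * energyN U W N x)) := by
    have h := Measure.rnDeriv_withDensity ν hDm
    rw [← hμν] at h
    exact hμac.ae_le h
  have hlogp : ∀ x : Fin N → (Fin d → ℝ),
      Real.log (p x) = ∑ i, (-β * (U (x i) + c (x i)) - Real.log Z) := by
    intro x
    rw [show Real.log (p x) = Real.log (∏ i, ρ (x i)) from rfl,
      Real.log_prod fun i _ => (hρpos (x i)).ne']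
    refine Finset.sum_congr rfl fun i _ => ?_
    rw [hfix (x i), Real.log_div (Real.exp_ne_zero _) hZpos.ne', Real.log_exp]
  have hrel : relEntR μN ν
      = ∫ x, (Real.log (p x) + Real.log Zb + β * energyN U W N x) ∂μN := by
    refine integral_congr_ae ?_
    filter_upwards [hrn] with x hx
    rw [hx, ENNReal.toReal_ofReal
        (mul_nonneg (mul_nonneg (hppos x).le hZbpos.le) (Real.exp_pos _).le),
      Real.log_mul (mul_ne_zero (hppos x).ne' hZbpos.ne') (Real.exp_ne_zero _),
      Real.log_mul (hppos x).ne' hZbpos.ne', Real.log_exp]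
  have hfun_eq : (fun x : Fin N → (Fin d → ℝ) =>
        Real.log (p x) + Real.log Zb + β * energyN U W N x)
      = fun x => (Real.log Zb - (N : ℝ) * Real.log Z) + ((-β) * ∑ i, c (x i)
          + (β * (1 / (2 * ((N : ℝ) - 1)))) * ∑ i, ∑ j ∈ Finset.univ.erase i, W (x i - x j)) := by
    funext x
    rw [hlogp x, energyN, Finset.sum_sub_distrib, Finset.sum_const, Finset.card_univ,
      Fintype.card_fin, nsmul_eq_mul, ← Finset.mul_sum, Finset.sum_add_distrib]
    ring
  have hN1 : ((N : ℝ) - 1) ≠ 0 := by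
    have h2 : (2 : ℝ) ≤ (N : ℝ) := by exact_mod_cast hN
    linarith
  have hIA : Integrable (fun x : Fin N → (Fin d → ℝ) => (-β) * ∑ i, c (x i)) μN :=
    hIntA.const_mul _
  have hIB : Integrable (fun x : Fin N → (Fin d → ℝ) => (β * (1 / (2 * ((N : ℝ) - 1)))) *
      ∑ i, ∑ j ∈ Finset.univ.erase i, W (x i - x j)) μN := hIntB.const_mul _
  have hIAB : Integrable (fun x : Fin N → (Fin d → ℝ) => (-β) * (∑ i, c (x i))
      + (β * (1 / (2 * ((N : ℝ) - 1)))) * ∑ i, ∑ j ∈ Finset.univ.erase i, W (x i - x j)) μN :=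
    hIA.add hIB
  have hval : relEntR μN ν = Real.log Zb - ((N : ℝ) * β / 2) * I - (N : ℝ) * Real.log Z := by
    rw [hrel, hfun_eq,
      integral_add (integrable_const _) hIAB,
      integral_add hIA hIB,
      integral_const, integral_const_mul, integral_const_mul, hA_val, hB_val]
    simp only [probReal_univ, smul_eq_mul, one_mul]
    field_simp
    ring
  have hq_smul : (fun x : Fin N → (Fin d → ℝ) =>
        (p x).toNNReal • (Real.exp (-β * energyN U W N x) / Zb / p x))
      = fun x => Real.exp (-β * energyN U W N x) / Zb := by
    funext x
    rw [NNReal.smul_def, Real.coe_toNNReal _ (hppos x).le]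
    field_simp [(hppos x).ne', hZbpos.ne']
    rw [smul_eq_mul]
    field_simp
    exact div_self (hppos x).ne'
  have hμ_eq' : μN = volume.withDensity fun x => ((p x).toNNReal : ENNReal) := hμ_eq
  have hqp_int : Integrable (fun x => Real.exp (-β * energyN U W N x) / Zb / p x) μN := by
    rw [hμ_eq', integrable_withDensity_iff_integrable_smul hpm.real_toNNReal, hq_smul]
    exact hexp.div_const Zb
  have hqp_val : (∫ x, Real.exp (-β * energyN U W N x) / Zb / p x ∂μN) = 1 := by
    rw [hμ_eq', integral_withDensity_eq_integral_smul hpm.real_toNNReal, hq_smul,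
      integral_div, ← hZb, div_self hZbpos.ne']
  have hfun_int : Integrable
      (fun x => Real.log (p x) + Real.log Zb + β * energyN U W N x) μN := by
    rw [hfun_eq]
    exact (integrable_const _).add hIAB
  have hnonneg : 0 ≤ relEntR μN ν := by
    rw [hrel]
    have hmono : (∫ x, -(Real.log (p x) + Real.log Zb + β * energyN U W N x) ∂μN)
        ≤ ∫ x, (Real.exp (-β * energyN U W N x) / Zb / p x - 1) ∂μN := by
      refine integral_mono hfun_int.neg (hqp_int.sub (integrable_const 1)) fun x => ?_
      have hpos : 0 < Real.exp (-β * energyN U W N x) / Zb / p x :=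
        div_pos (div_pos (Real.exp_pos _) hZbpos) (hppos x)
      have hlog : -(Real.log (p x) + Real.log Zb + β * energyN U W N x)
          = Real.log (Real.exp (-β * energyN U W N x) / Zb / p x) := by
        rw [Real.log_div (div_pos (Real.exp_pos _) hZbpos).ne' (hppos x).ne',
          Real.log_div (Real.exp_ne_zero _) hZbpos.ne', Real.log_exp]
        ring
      calc -(Real.log (p x) + Real.log Zb + β * energyN U W N x)
          = Real.log (Real.exp (-β * energyN U W N x) / Zb / p x) := hlog
        _ ≤ Real.exp (-β * energyN U W N x) / Zb / p x - 1 :=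
            Real.log_le_sub_one_of_pos hpos
    rw [integral_neg, integral_sub hqp_int (integrable_const 1), hqp_val,
      integral_const] at hmono
    simp only [probReal_univ, smul_eq_mul, one_mul, mul_one] at hmono
    linarith
  have h3 : 0 ≤ Real.log Zb - ((N : ℝ) * β / 2) * I - (N : ℝ) * Real.log Z := hval ▸ hnonneg
  refine ⟨?_, hval, h3⟩
  have h4 : (N : ℝ) * Real.log Z + ((N : ℝ) * β / 2) * I ≤ Real.log Zb := by linarith
  have h5 : Z ^ N * Real.exp (((N : ℝ) * β / 2) * I)
      = Real.exp ((N : ℝ) * Real.log Z + ((N : ℝ) * β / 2) * I) := by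
    rw [Real.exp_add, Real.exp_nat_mul, Real.exp_log hZpos]
  rw [ge_iff_le, h5]
  calc Real.exp ((N : ℝ) * Real.log Z + ((N : ℝ) * β / 2) * I)
      ≤ Real.exp (Real.log Zb) := Real.exp_le_exp.mpr h4
    _ = Zb := Real.exp_log hZbpos
end
end

section
/- Let N ≥ 2, β > 0, U : ℝ^d → ℝ, and W : ℝ^d → ℝ bounded measurable and symmetric with exp(−β E_N) ∈ L¹(ℝ^{Nd}). Let ρ be a probability density on ℝ^d satisfying ρ = Z^{−1} exp(−β(U + W∗ρ)), Z = ∫ exp(−β(U + W∗ρ)) dx, and let ρ_N = Z̄_N^{−1} exp(−β E_N) be the Gibbs density. Define Φ(x_1,…,x_N) = −(1/(2(N−1))) Σ_{i≠j} W(x_i−x_j) + Σ_{i=1}^N (W∗ρ)(x_i) − (N/2) ∫_{ℝ^d} ρ (W∗ρ) dx. Then H(ρ_N | ρ^{⊗N}) = N log Z − log Z_N + β ∫_{ℝ^{Nd}} Φ ρ_N dx, where Z_N = Z̄_N exp(−(Nβ/2)∫ρ(W∗ρ)dx); in particular H(ρ_N | ρ^{⊗N}) ≤ β ∫_{ℝ^{Nd}}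 Φ ρ_N dx. -/
open MeasureTheory Real

noncomputable section

section Helpers

variable {E : Type*} [MeasureSpace E] [SigmaFinite (volume : Measure E)]

lemma lintegral_pi_prod {n : ℕ} (f : Fin n → E → ENNReal) (hf : ∀ i, Measurable (f i)) :
    ∫⁻ x : Fin n → E, ∏ i, f i (x i) ∂(Measure.pi fun _ => volume) = ∏ i, ∫⁻ y, f i y := by
  induction n with
  | zero => simp [lintegral_const]
  | succ n ih =>
    rw [← ((measurePreserving_piFinSuccAbove (fun _ : Fin (n+1) => (volume : Measure E))
      0).symm).lintegral_comp_emb (MeasurableEquiv.measurableEmbedding _)]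
    simp only [MeasurableEquiv.piFinSuccAbove_symm_apply, Fin.insertNthEquiv, Equiv.coe_fn_mk,
      Fin.insertNth_zero, Fin.prod_univ_succ, Fin.zero_succAbove, cast_eq,
      Fin.cons_zero, Fin.cons_succ]
    rw [lintegral_prod_mul (f := f 0) (g := fun y : Fin n → E => ∏ i, f i.succ (y i))
      (hf 0).aemeasurable
      ((Finset.measurable_prod Finset.univ (fun i _ =>
        (hf i.succ).comp (measurable_pi_apply i))).aemeasurable),
      ih (fun i => f i.succ) (fun i => hf i.succ)]

lemma pi_withDensity_eq {n : ℕ} (f : E → ENNReal) (hf : Measurable f)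
    [SigmaFinite ((volume : Measure E).withDensity f)] :
    Measure.pi (fun _ : Fin n => (volume : Measure E).withDensity f)
      = (volume : Measure (Fin n → E)).withDensity (fun x => ∏ i, f (x i)) := by
  refine Measure.pi_eq fun s hs => ?_
  have hsm : MeasurableSet (Set.pi Set.univ s) :=
    MeasurableSet.pi Set.countable_univ fun i _ => hs i
  rw [withDensity_apply _ hsm, ← lintegral_indicator hsm]
  have : (Set.univ.pi s).indicator (fun x => ∏ i, f (x i))
      = fun x : Fin n → E => ∏ i, (s i).indicator f (x i) := by
    funext x
    by_cases hx : x ∈ Set.univ.pi s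
    · rw [Set.indicator_of_mem hx]
      exact Finset.prod_congr rfl fun i _ =>
        (Set.indicator_of_mem (hx i (Set.mem_univ i)) f).symm
    · rw [Set.indicator_of_notMem hx]
      have : ∃ i, x i ∉ s i := by
        by_contra h; push_neg at h; exact hx fun i _ => h i
      obtain ⟨i, hi⟩ := this
      exact (Finset.prod_eq_zero (Finset.mem_univ i)
        (Set.indicator_of_notMem hi f)).symm
  rw [this, volume_pi, lintegral_pi_prod _ (fun i => hf.indicator (hs i))]
  exact Finset.prod_congr rfl fun i _ => by
    rw [lintegral_indicator (hs i) _, withDensity_apply _ (hs i)]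

omit [MeasureSpace E] [SigmaFinite (volume : Measure E)] in
lemma prod_split {n : ℕ} (i : Fin n) (g ρ : E → ℝ) (x : Fin n → E) :
    g (x i) * ∏ k, ρ (x k) = ∏ k, (fun k v => if k = i then g v * ρ v else ρ v) k (x k) := by
  have : ∀ k : Fin n, (fun k (v : E) => if k = i then g v * ρ v else ρ v) k (x k)
      = (if k = i then g (x k) else 1) * ρ (x k) := by
    intro k; by_cases h : k = i <;> simp [h]
  simp_rw [this]
  rw [Finset.prod_mul_distrib, Finset.prod_ite_eq' Finset.univ i (fun k => g (x k))]
  simp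

lemma marg_single {n : ℕ} (ρ : E → ℝ) (hρ1 : ∫ x, ρ x = 1) (g : E → ℝ) (i : Fin n) :
    ∫ x : Fin n → E, g (x i) * ∏ k, ρ (x k) = ∫ u, g u * ρ u := by
  simp_rw [prod_split i g ρ]
  rw [volume_pi, MeasureTheory.integral_fintype_prod_eq_prod (𝕜 := ℝ) (ι := Fin n)
    (fun k v => if k = i then g v * ρ v else ρ v)]
  have : ∀ k : Fin n, (∫ v, if k = i then g v * ρ v else ρ v)
      = if k = i then (∫ v, g v * ρ v) else 1 := by
    intro k; by_cases h : k = i <;> simp [h, hρ1]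
  simp_rw [this]
  rw [Finset.prod_ite_eq' Finset.univ i (fun _ => ∫ v, g v * ρ v)]
  simp

lemma marg_pair {n : ℕ} (h : E × E → ℝ) (hh : Measurable h) (M : ℝ)
    (hbdd : ∀ z, |h z| ≤ M)
    (ρ : E → ℝ) (hρm : Measurable ρ) (hρ0 : ∀ v, 0 ≤ ρ v) (hρi : Integrable ρ)
    (hρ1 : ∫ v, ρ v = 1) (i j : Fin (n+1)) (hij : j ≠ i) :
    ∫ x : Fin (n+1) → E, h (x i, x j) * ∏ k, ρ (x k)
      = ∫ u, (∫ v, h (u, v) * ρ v) * ρ u := by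
  obtain ⟨j', hj'⟩ := Fin.exists_succAbove_eq hij
  have hprodnn : ∀ z : E × (Fin n → E), 0 ≤ ρ z.1 * ∏ k, ρ (z.2 k) := fun z =>
    mul_nonneg (hρ0 _) (Finset.prod_nonneg fun k _ => hρ0 _)
  have hmeas : AEStronglyMeasurable
      (fun z : E × (Fin n → E) => h (z.1, z.2 j') * (ρ z.1 * ∏ k, ρ (z.2 k)))
      ((volume : Measure E).prod (volume : Measure (Fin n → E))) :=
    (((hh.comp (measurable_fst.prodMk ((measurable_pi_apply j').comp measurable_snd))).mul
      ((hρm.comp measurable_fst).mul (Finset.measurable_prod Finset.univ fun k _ =>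
        hρm.comp ((measurable_pi_apply k).comp measurable_snd))))).aestronglyMeasurable
  have hdom : Integrable (fun z : E × (Fin n → E) => M * (ρ z.1 * ∏ k, ρ (z.2 k)))
      ((volume : Measure E).prod (volume : Measure (Fin n → E))) :=
    (Integrable.mul_prod (L := ℝ) hρi
      (Integrable.fintype_prod (f := fun _ : Fin n => ρ) fun _ => hρi)).const_mul M
  have hint : Integrable
      (fun z : E × (Fin n → E) => h (z.1, z.2 j') * (ρ z.1 * ∏ k, ρ (z.2 k)))
      ((volume : Measure E).prod (volume : Measure (Fin n → E))) := by
    refine hdom.mono' hmeas ?_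
    filter_upwards with z
    rw [Real.norm_eq_abs, abs_mul, abs_of_nonneg (hprodnn z)]
    exact mul_le_mul_of_nonneg_right (hbdd _) (hprodnn z)
  have key : ∀ z : E × (Fin n → E),
      h ((i.insertNth z.1 z.2 : Fin (n+1) → E) i, (i.insertNth z.1 z.2 : Fin (n+1) → E) j)
          * ∏ k, ρ ((i.insertNth z.1 z.2 : Fin (n+1) → E) k)
        = h (z.1, z.2 j') * (ρ z.1 * ∏ k, ρ (z.2 k)) := by
    intro z
    rw [Fin.insertNth_apply_same, ← hj', Fin.insertNth_apply_succAbove,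
      Fin.prod_univ_succAbove (fun k => ρ ((i.insertNth z.1 z.2 : Fin (n+1) → E) k)) i,
      Fin.insertNth_apply_same]
    congr 1
    congr 1
    exact Finset.prod_congr rfl fun k _ => by rw [Fin.insertNth_apply_succAbove]
  rw [volume_pi, ← ((measurePreserving_piFinSuccAbove (fun _ : Fin (n+1) => (volume : Measure E))
    i).symm).integral_comp']
  simp only [MeasurableEquiv.piFinSuccAbove_symm_apply, Fin.insertNthEquiv, Equiv.coe_fn_mk]
  simp_rw [key, ← volume_pi]
  rw [integral_prod _ hint]
  have inner : ∀ u : E, (∫ y : Fin n → E, h (u, y j') * (ρ u * ∏ k, ρ (y k)))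
      = ρ u * ∫ v, h (u, v) * ρ v := by
    intro u
    simp_rw [mul_left_comm _ (ρ u) _]
    rw [MeasureTheory.integral_const_mul, marg_single ρ hρ1 (fun v => h (u, v)) j']
  simp_rw [inner, mul_comm]

end Helpers

section ConvFacts
variable {d : ℕ}

lemma conv_meas {W ρ : (Fin d → ℝ) → ℝ} (hW : Measurable W) (hρm : Measurable ρ) :
    Measurable (convW W ρ) := by
  have h : StronglyMeasurable fun p : (Fin d → ℝ) × (Fin d → ℝ) => W (p.1 - p.2) * ρ p.2 :=
    ((hW.comp (measurable_fst.sub measurable_snd)).mul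
      (hρm.comp measurable_snd)).stronglyMeasurable
  exact h.integral_prod_right'.measurable

lemma int_bddmul_ρ {ρ : (Fin d → ℝ) → ℝ} (hρi : Integrable ρ)
    {g : (Fin d → ℝ) → ℝ} (hg : AEStronglyMeasurable g volume) {M : ℝ} (hgb : ∀ y, |g y| ≤ M) :
    Integrable (fun y => g y * ρ y) :=
  hρi.bdd_mul hg (Filter.Eventually.of_forall fun y => by rw [Real.norm_eq_abs]; exact hgb y)

lemma int_mul_bdd {ρ : (Fin d → ℝ) → ℝ} (hρi : Integrable ρ) (hρ0 : ∀ y, 0 ≤ ρ y)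
    (hρ1 : ∫ y, ρ y = 1)
    {g : (Fin d → ℝ) → ℝ} (hg : AEStronglyMeasurable g volume) {M : ℝ} (hgb : ∀ y, |g y| ≤ M) :
    |∫ y, g y * ρ y| ≤ M := by
  have hint := int_bddmul_ρ hρi hg hgb
  calc |∫ y, g y * ρ y| = ‖∫ y, g y * ρ y‖ := (Real.norm_eq_abs _).symm
    _ ≤ ∫ y, ‖g y * ρ y‖ := norm_integral_le_integral_norm _
    _ ≤ ∫ y, M * ρ y := by
        refine integral_mono hint.norm (hρi.const_mul M) fun y => ?_
        rw [Real.norm_eq_abs, abs_mul, abs_of_nonneg (hρ0 y)]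
        exact mul_le_mul_of_nonneg_right (hgb y) (hρ0 y)
    _ = M := by rw [integral_const_mul, hρ1, mul_one]

lemma conv_bdd {W ρ : (Fin d → ℝ) → ℝ} (hW : Measurable W) {M : ℝ} (hWbdd : ∀ z, |W z| ≤ M)
    (hρ0 : ∀ y, 0 ≤ ρ y) (hρi : Integrable ρ) (hρ1 : ∫ y, ρ y = 1) (x : Fin d → ℝ) :
    |convW W ρ x| ≤ M :=
  int_mul_bdd hρi hρ0 hρ1
    ((hW.comp (measurable_const.sub measurable_id)).aestronglyMeasurable)
    (fun y => hWbdd (x - y))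

end ConvFacts

/-- entropy decomposition. With
`Φ = −(1/(2(N−1))) Σ_{i≠j} W(xᵢ−xⱼ) + Σᵢ (W∗ρ)(xᵢ) − (N/2)∫ρ(W∗ρ)`, one has
`H(ρ_N | ρ^{⊗N}) = N log Z − log Z_N + β ∫ Φ ρ_N dx`, where
`Z_N = Z̄_N exp(−(Nβ/2)∫ρ(W∗ρ))`; in particular `H(ρ_N | ρ^{⊗N}) ≤ β ∫ Φ ρ_N dx`. -/
theorem entropy_decomposition {d N : ℕ} (hN : 2 ≤ N) (β : ℝ) (hβ : 0 < β)
    (U W : (Fin d → ℝ) → ℝ) (hU : Measurable U) (hW : Measurable W)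
    (M : ℝ) (hWbdd : ∀ z, |W z| ≤ M) (hWsymm : ∀ z, W (-z) = W z)
    (hexp : Integrable (fun x : Fin N → (Fin d → ℝ) => Real.exp (-β * energyN U W N x)))
    (ρ : (Fin d → ℝ) → ℝ) (hρ : IsProbDensity ρ)
    (Z : ℝ) (hZ : Z = ∫ x, Real.exp (-β * (U x + convW W ρ x)))
    (hfix : ∀ x, ρ x = Real.exp (-β * (U x + convW W ρ x)) / Z)
    (ZbarN : ℝ) (hZbarN : ZbarN = ∫ x : Fin N → (Fin d → ℝ), Real.exp (-β * energyN U W N x))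
    (ZN : ℝ) (hZN : ZN = ZbarN * Real.exp (-((N : ℝ) * β / 2) * ∫ x, ρ x * convW W ρ x))
    (ρN : (Fin N → (Fin d → ℝ)) → ℝ)
    (hρN : ρN = fun x => Real.exp (-β * energyN U W N x) / ZbarN)
    (Φ : (Fin N → (Fin d → ℝ)) → ℝ)
    (hΦ : Φ = fun x =>
      -(1 / (2 * ((N : ℝ) - 1))) * (∑ i, ∑ j ∈ Finset.univ.erase i, W (x i - x j))
      + (∑ i, convW W ρ (x i)) - ((N : ℝ) / 2) * ∫ y, ρ y * convW W ρ y) :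
    relEntR (volume.withDensity fun x => ENNReal.ofReal (ρN x))
        (Measure.pi fun _ : Fin N => densMeasure ρ)
      = (N : ℝ) * Real.log Z - Real.log ZN + β * ∫ x, Φ x * ρN x ∧
    relEntR (volume.withDensity fun x => ENNReal.ofReal (ρN x))
        (Measure.pi fun _ : Fin N => densMeasure ρ)
      ≤ β * ∫ x, Φ x * ρN x := by
  obtain ⟨hρm, hρ0, hρ1⟩ := hρ
  obtain ⟨n, rfl⟩ : ∃ n, N = n + 1 := ⟨N - 1, by omega⟩
  have hn1 : 1 ≤ n := by omega
  have hM0 : (0:ℝ) ≤ M := le_trans (abs_nonneg _) (hWbdd 0)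
  have hρi : Integrable ρ := by
    by_contra hc
    rw [integral_undef hc] at hρ1
    exact one_ne_zero hρ1.symm
  have hZpos : 0 < Z := by
    rcases lt_trichotomy Z 0 with h | h | h
    · have h0 := hρ0 0
      rw [hfix 0] at h0
      have h1 := Real.exp_pos (-β * (U 0 + convW W ρ 0))
      nlinarith [div_neg_of_pos_of_neg h1 h]
    · have : ρ = fun _ => (0:ℝ) := funext fun x => by rw [hfix x, h, div_zero]
      rw [this] at hρ1
      simp at hρ1
    · exact h
  have hρpos : ∀ x, 0 < ρ x := fun x => by
    rw [hfix x]; exact div_pos (Real.exp_pos _) hZpos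
  have hconvm : Measurable (convW W ρ) := conv_meas hW hρm
  have hconvb : ∀ x, |convW W ρ x| ≤ M := conv_bdd hW hWbdd hρ0 hρi hρ1
  set c : ℝ := ∫ y, ρ y * convW W ρ y with hcdef
  have hcM : |c| ≤ M := by
    rw [hcdef]; simp_rw [mul_comm (ρ _) _]
    exact int_mul_bdd hρi hρ0 hρ1 hconvm.aestronglyMeasurable hconvb
  haveI : NeZero (volume : Measure (Fin (n+1) → Fin d → ℝ)) := by
    constructor
    intro h0
    have h1 : (volume : Measure (Fin (n+1) → Fin d → ℝ)) Set.univ = 0 := by rw [h0]; rfl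
    rw [volume_pi, Measure.pi_univ] at h1
    have h2 : ∀ i : Fin (n+1), (volume : Measure (Fin d → ℝ)) Set.univ ≠ 0 := by
      intro i
      rw [volume_pi, Measure.pi_univ]
      refine Finset.prod_ne_zero_iff.mpr fun j _ => ?_
      rw [Real.volume_univ]
      exact ENNReal.top_ne_zero
    exact (Finset.prod_ne_zero_iff.mpr fun i _ => h2 i) h1
  have hZb_pos : 0 < ZbarN := by
    rw [hZbarN]
    exact integral_exp_pos hexp
  have hρNpos : ∀ x, 0 < ρN x := fun x => by
    rw [hρN]; exact div_pos (Real.exp_pos _) hZb_pos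
  have hρN0 : ∀ x, 0 ≤ ρN x := fun x => (hρNpos x).le
  have hEm : Measurable (energyN U W (n+1)) := by
    unfold energyN
    refine Measurable.add ?_ ?_
    · exact Finset.measurable_sum _ fun i _ => hU.comp (measurable_pi_apply i)
    · exact (Finset.measurable_sum _ fun i _ => Finset.measurable_sum _ fun j _ =>
        hW.comp ((measurable_pi_apply i).sub (measurable_pi_apply j))).const_mul _
  have hρNm : Measurable ρN := by
    rw [hρN]; exact ((hEm.const_mul (-β)).exp).div_const _
  have hρNi : Integrable ρN := by rw [hρN]; exact hexp.div_const _
  have hρN1 : ∫ x, ρN x = 1 := by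
    rw [hρN]
    simp_rw [div_eq_mul_inv]
    rw [integral_mul_const, ← hZbarN, mul_inv_cancel₀ (ne_of_gt hZb_pos)]
  have hΦm : Measurable Φ := by
    rw [hΦ]
    refine Measurable.sub (Measurable.add ?_ ?_) measurable_const
    · exact (Finset.measurable_sum _ fun i _ => Finset.measurable_sum _ fun j _ =>
        hW.comp ((measurable_pi_apply i).sub (measurable_pi_apply j))).const_mul _
    · exact Finset.measurable_sum _ fun i _ => hconvm.comp (measurable_pi_apply i)
  have hΦbdd : ∃ K : ℝ, 0 ≤ K ∧ ∀ x, |Φ x| ≤ K := by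
    refine ⟨(1/(2*((↑(n+1):ℝ) - 1))) * ((↑(n+1):ℝ) * ((↑(n+1):ℝ) * M))
      + (↑(n+1):ℝ) * M + (↑(n+1):ℝ)/2 * M, ?_, ?_⟩
    · have h1 : (0:ℝ) < (↑(n+1):ℝ) - 1 := by push_cast; simp; exact_mod_cast hn1
      positivity
    · intro x
      have ha : (0:ℝ) ≤ 1/(2*((↑(n+1):ℝ) - 1)) := by
        have h1 : (0:ℝ) < (↑(n+1):ℝ) - 1 := by push_cast; simp; exact_mod_cast hn1
        positivity
      have hS : |∑ i, ∑ j ∈ Finset.univ.erase i, W (x i - x j)|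
          ≤ (↑(n+1):ℝ) * ((↑(n+1):ℝ) * M) := by
        calc |∑ i, ∑ j ∈ Finset.univ.erase i, W (x i - x j)|
            ≤ ∑ i : Fin (n+1), |∑ j ∈ Finset.univ.erase i, W (x i - x j)| :=
              Finset.abs_sum_le_sum_abs _ _
          _ ≤ ∑ i : Fin (n+1), (↑(n+1):ℝ) * M := by
              refine Finset.sum_le_sum fun i _ => ?_
              calc |∑ j ∈ Finset.univ.erase i, W (x i - x j)|
                  ≤ ∑ j ∈ Finset.univ.erase i, |W (x i - x j)| := Finset.abs_sum_le_sum_abs _ _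
                _ ≤ ∑ j ∈ Finset.univ.erase i, M := Finset.sum_le_sum fun j _ => hWbdd _
                _ = ((Finset.univ.erase i).card : ℝ) * M := by
                    rw [Finset.sum_const, nsmul_eq_mul]
                _ ≤ (↑(n+1):ℝ) * M := by
                    refine mul_le_mul_of_nonneg_right ?_ hM0
                    have := Finset.card_erase_le (s := (Finset.univ : Finset (Fin (n+1)))) (a := i)
                    have h2 : (Finset.univ : Finset (Fin (n+1))).card = n + 1 := by simp
                    exact_mod_cast le_trans this (le_of_eq h2)
          _ = (↑(n+1):ℝ) * ((↑(n+1):ℝ) * M) := by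
              rw [Finset.sum_const, nsmul_eq_mul, Finset.card_univ, Fintype.card_fin]
      have hB : |∑ i, convW W ρ (x i)| ≤ (↑(n+1):ℝ) * M := by
        calc |∑ i, convW W ρ (x i)| ≤ ∑ i : Fin (n+1), |convW W ρ (x i)| :=
              Finset.abs_sum_le_sum_abs _ _
          _ ≤ ∑ i : Fin (n+1), M := Finset.sum_le_sum fun i _ => hconvb _
          _ = (↑(n+1):ℝ) * M := by
              rw [Finset.sum_const, nsmul_eq_mul, Finset.card_univ, Fintype.card_fin]
      rw [hΦ]
      have h3 : |(-(1 / (2 * ((↑(n+1):ℝ) - 1))) * ∑ i, ∑ j ∈ Finset.univ.erase i, W (x i - x j))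
          + (∑ i, convW W ρ (x i)) - (↑(n+1):ℝ) / 2 * c|
          ≤ |(-(1 / (2 * ((↑(n+1):ℝ) - 1))) * ∑ i, ∑ j ∈ Finset.univ.erase i, W (x i - x j))|
            + |∑ i, convW W ρ (x i)| + |(↑(n+1):ℝ) / 2 * c| := by
        refine le_trans (abs_sub _ _) ?_
        gcongr
        exact abs_add_le _ _
      refine le_trans h3 ?_
      gcongr
      · rw [abs_mul, abs_neg, abs_of_nonneg ha]
        exact mul_le_mul_of_nonneg_left hS ha
      · rw [abs_mul, abs_of_nonneg (by positivity : (0:ℝ) ≤ (↑(n+1):ℝ)/2)]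
        exact mul_le_mul_of_nonneg_left hcM (by positivity)
  obtain ⟨K, hK0, hΦb⟩ := hΦbdd
  -- probability measure facts
  haveI hPdens : IsProbabilityMeasure (densMeasure ρ) := by
    constructor
    rw [densMeasure, withDensity_apply _ MeasurableSet.univ, Measure.restrict_univ,
      ← ofReal_integral_eq_lintegral_ofReal hρi (Filter.Eventually.of_forall hρ0), hρ1,
      ENNReal.ofReal_one]
  haveI hfinD : IsFiniteMeasure ((volume : Measure (Fin d → ℝ)).withDensity
      fun v => ENNReal.ofReal (ρ v)) := by
    change IsFiniteMeasure (densMeasure ρ); infer_instance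
  have hν_eq : (Measure.pi fun _ : Fin (n+1) => densMeasure ρ)
      = (volume : Measure (Fin (n+1) → Fin d → ℝ)).withDensity
          (fun x => ∏ i, ENNReal.ofReal (ρ (x i))) := by
    have h := pi_withDensity_eq (n := n+1) (fun v : Fin d → ℝ => ENNReal.ofReal (ρ v))
      (ENNReal.measurable_ofReal.comp hρm)
    simpa [densMeasure] using h
  have hFm : Measurable (fun x : Fin (n+1) → Fin d → ℝ => ∏ i, ENNReal.ofReal (ρ (x i))) :=
    Finset.measurable_prod _ fun i _ =>
      ENNReal.measurable_ofReal.comp (hρm.comp (measurable_pi_apply i))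
  have hF0 : ∀ x : Fin (n+1) → Fin d → ℝ, (∏ i, ENNReal.ofReal (ρ (x i))) ≠ 0 := fun x =>
    Finset.prod_ne_zero_iff.mpr fun i _ => (ENNReal.ofReal_pos.mpr (hρpos _)).ne'
  have hFtop : ∀ x : Fin (n+1) → Fin d → ℝ, (∏ i, ENNReal.ofReal (ρ (x i))) ≠ ⊤ := fun x =>
    (ENNReal.prod_lt_top fun i _ => ENNReal.ofReal_lt_top).ne
  have hGm : Measurable (fun x : Fin (n+1) → Fin d → ℝ => ENNReal.ofReal (ρN x)) :=
    ENNReal.measurable_ofReal.comp hρNm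
  have hνwd : (Measure.pi fun _ : Fin (n+1) => densMeasure ρ).withDensity
      (fun x => ENNReal.ofReal (ρN x) / ∏ i, ENNReal.ofReal (ρ (x i)))
      = volume.withDensity (fun x => ENNReal.ofReal (ρN x)) := by
    rw [hν_eq, ← withDensity_mul _ (g := fun x => ENNReal.ofReal (ρN x) / ∏ i, ENNReal.ofReal (ρ (x i))) hFm (hGm.div hFm)]
    congr 1
    funext x
    simp only [Pi.mul_apply]
    exact ENNReal.mul_div_cancel (hF0 x) (hFtop x)
  haveI : SigmaFinite (Measure.pi fun _ : Fin (n+1) => densMeasure ρ) := by infer_instance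
  have hrn : (volume.withDensity fun x => ENNReal.ofReal (ρN x)).rnDeriv
        (Measure.pi fun _ : Fin (n+1) => densMeasure ρ)
      =ᵐ[volume.withDensity fun x => ENNReal.ofReal (ρN x)]
        fun x => ENNReal.ofReal (ρN x) / ∏ i, ENNReal.ofReal (ρ (x i)) := by
    have h1 := Measure.rnDeriv_withDensity (Measure.pi fun _ : Fin (n+1) => densMeasure ρ)
      (f := fun x => ENNReal.ofReal (ρN x) / ∏ i, ENNReal.ofReal (ρ (x i))) (hGm.div hFm)
    rw [hνwd] at h1
    have hac : (volume.withDensity fun x => ENNReal.ofReal (ρN x))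
        ≪ Measure.pi fun _ : Fin (n+1) => densMeasure ρ := by
      rw [← hνwd]; exact withDensity_absolutelyContinuous _ _
    exact hac.ae_eq h1
  have step1 : relEntR (volume.withDensity fun x => ENNReal.ofReal (ρN x))
        (Measure.pi fun _ : Fin (n+1) => densMeasure ρ)
      = ∫ x, ρN x * Real.log (ρN x / ∏ i, ρ (x i)) := by
    rw [relEntR]
    rw [integral_congr_ae (hrn.mono fun x hx =>
      congrArg (fun t : ENNReal => Real.log t.toReal) hx)]
    have htomul : (fun x : Fin (n+1) → Fin d → ℝ =>
          Real.log ((ENNReal.ofReal (ρN x) / ∏ i, ENNReal.ofReal (ρ (x i))).toReal))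
        = fun x => Real.log (ρN x / ∏ i, ρ (x i)) := by
      funext x
      rw [ENNReal.toReal_div, ENNReal.toReal_ofReal (hρN0 x), ENNReal.toReal_prod]
      congr 2
      exact Finset.prod_congr rfl fun i _ => ENNReal.toReal_ofReal (hρ0 _)
    rw [htomul]
    rw [show (fun x : Fin (n+1) → Fin d → ℝ => ENNReal.ofReal (ρN x))
        = fun x => ((ρN x).toNNReal : ENNReal) from rfl]
    rw [integral_withDensity_eq_integral_smul hρNm.real_toNNReal]
    congr 1
    funext x
    rw [NNReal.smul_def, smul_eq_mul, Real.coe_toNNReal _ (hρN0 x)]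
  have hlogρ : ∀ y, Real.log (ρ y) = -β * (U y + convW W ρ y) - Real.log Z := by
    intro y; rw [hfix y, Real.log_div (Real.exp_ne_zero _) (ne_of_gt hZpos), Real.log_exp]
  have hsumlog : ∀ x : Fin (n+1) → Fin d → ℝ, ∑ i, Real.log (ρ (x i))
      = -β * ((∑ i, U (x i)) + ∑ i, convW W ρ (x i)) - (↑(n+1):ℝ) * Real.log Z := by
    intro x
    simp_rw [hlogρ]
    rw [Finset.sum_sub_distrib, Finset.sum_const, Finset.card_univ, Fintype.card_fin,
      ← Finset.mul_sum, Finset.sum_add_distrib, nsmul_eq_mul]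
  have hlogZN : Real.log ZN = Real.log ZbarN - (↑(n+1):ℝ) * β / 2 * c := by
    rw [hZN, Real.log_mul (ne_of_gt hZb_pos) (Real.exp_ne_zero _), Real.log_exp]; ring
  have hkey : ∀ x, Real.log (ρN x / ∏ i, ρ (x i))
      = β * Φ x + ((↑(n+1):ℝ) * Real.log Z - Real.log ZN) := by
    intro x
    have hprodpos : 0 < ∏ i, ρ (x i) := Finset.prod_pos fun i _ => hρpos _
    rw [Real.log_div (ne_of_gt (hρNpos x)) (ne_of_gt hprodpos),
      Real.log_prod (fun i _ => ne_of_gt (hρpos _)), hsumlog x, hρN,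
      Real.log_div (Real.exp_ne_zero _) (ne_of_gt hZb_pos), Real.log_exp, hlogZN, hΦ]
    simp only [energyN]
    ring
  have hΦρN_int : Integrable (fun x => Φ x * ρN x) :=
    hρNi.bdd_mul hΦm.aestronglyMeasurable
      (Filter.Eventually.of_forall fun x => by rw [Real.norm_eq_abs]; exact hΦb x)
  have heq : ∫ x, ρN x * Real.log (ρN x / ∏ i, ρ (x i))
      = (↑(n+1):ℝ) * Real.log Z - Real.log ZN + β * ∫ x, Φ x * ρN x := by
    have hrepr : (fun x => ρN x * Real.log (ρN x / ∏ i, ρ (x i)))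
        = fun x => β * (Φ x * ρN x)
          + ((↑(n+1):ℝ) * Real.log Z - Real.log ZN) * ρN x := by
      funext x; rw [hkey x]; ring
    rw [hrepr, integral_add (hΦρN_int.const_mul β) (hρNi.const_mul _),
      integral_const_mul, integral_const_mul, hρN1, mul_one]
    ring
  -- mean of Φ against the product density is zero
  have hprodnn : ∀ x : Fin (n+1) → Fin d → ℝ, 0 ≤ ∏ i, ρ (x i) := fun x =>
    Finset.prod_nonneg fun i _ => (hρpos _).le
  have hprodInt : Integrable (fun x : Fin (n+1) → Fin d → ℝ => ∏ i, ρ (x i)) :=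
    Integrable.fintype_prod (f := fun _ : Fin (n+1) => ρ) fun _ => hρi
  have hprodone : ∫ x : Fin (n+1) → Fin d → ℝ, ∏ i, ρ (x i) = 1 := by
    rw [volume_pi, MeasureTheory.integral_fintype_prod_eq_pow (𝕜 := ℝ) (ι := Fin (n+1)) ρ, hρ1, one_pow]
  have hpair : ∀ i j : Fin (n+1), j ≠ i →
      ∫ x : Fin (n+1) → Fin d → ℝ, W (x i - x j) * ∏ k, ρ (x k) = c := by
    intro i j hij
    have h := marg_pair (E := Fin d → ℝ) (fun p => W (p.1 - p.2))
      (hW.comp (measurable_fst.sub measurable_snd)) M (fun z => hWbdd _)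
      ρ hρm (fun v => (hρpos v).le) hρi hρ1 i j hij
    rw [hcdef]
    simp_rw [mul_comm (ρ _) (convW W ρ _)]
    exact h
  have hsingle : ∀ i : Fin (n+1),
      ∫ x : Fin (n+1) → Fin d → ℝ, convW W ρ (x i) * ∏ k, ρ (x k) = c := by
    intro i
    rw [marg_single ρ hρ1 (convW W ρ) i, hcdef]
    simp_rw [mul_comm (ρ _) (convW W ρ _)]
  have hWij_int : ∀ i j : Fin (n+1),
      Integrable (fun x : Fin (n+1) → Fin d → ℝ => W (x i - x j) * ∏ k, ρ (x k)) := fun i j =>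
    hprodInt.bdd_mul
      ((hW.comp ((measurable_pi_apply i).sub (measurable_pi_apply j))).aestronglyMeasurable)
      (Filter.Eventually.of_forall fun x => by rw [Real.norm_eq_abs]; exact hWbdd _)
  have hconvi_int : ∀ i : Fin (n+1),
      Integrable (fun x : Fin (n+1) → Fin d → ℝ => convW W ρ (x i) * ∏ k, ρ (x k)) := fun i =>
    hprodInt.bdd_mul ((hconvm.comp (measurable_pi_apply i)).aestronglyMeasurable)
      (Filter.Eventually.of_forall fun x => by rw [Real.norm_eq_abs]; exact hconvb _)
  have hSP_int : Integrable (fun x : Fin (n+1) → Fin d → ℝ =>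
      (∑ i, ∑ j ∈ Finset.univ.erase i, W (x i - x j)) * ∏ k, ρ (x k)) := by
    simp_rw [Finset.sum_mul]
    exact integrable_finset_sum _ fun i _ => integrable_finset_sum _ fun j _ => hWij_int i j
  have hBP_int : Integrable (fun x : Fin (n+1) → Fin d → ℝ =>
      (∑ i, convW W ρ (x i)) * ∏ k, ρ (x k)) := by
    simp_rw [Finset.sum_mul]
    exact integrable_finset_sum _ fun i _ => hconvi_int i
  have hSmean : ∫ x : Fin (n+1) → Fin d → ℝ,
      (∑ i, ∑ j ∈ Finset.univ.erase i, W (x i - x j)) * ∏ k, ρ (x k)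
      = (↑(n+1):ℝ) * ((n:ℝ) * c) := by
    simp_rw [Finset.sum_mul]
    rw [integral_finset_sum _ fun i _ => integrable_finset_sum _ fun j _ => hWij_int i j]
    have h1 : ∀ i : Fin (n+1),
        ∫ x : Fin (n+1) → Fin d → ℝ, ∑ j ∈ Finset.univ.erase i, W (x i - x j) * ∏ k, ρ (x k)
          = (n:ℝ) * c := by
      intro i
      rw [integral_finset_sum _ fun j _ => hWij_int i j]
      rw [Finset.sum_congr rfl fun j hj => hpair i j (Finset.ne_of_mem_erase hj),
        Finset.sum_const, Finset.card_erase_of_mem (Finset.mem_univ i), Finset.card_univ,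
        Fintype.card_fin, nsmul_eq_mul]
      push_cast
      ring
    rw [Finset.sum_congr rfl fun i _ => h1 i, Finset.sum_const, Finset.card_univ,
      Fintype.card_fin, nsmul_eq_mul]
  have hBmean : ∫ x : Fin (n+1) → Fin d → ℝ, (∑ i, convW W ρ (x i)) * ∏ k, ρ (x k)
      = (↑(n+1):ℝ) * c := by
    simp_rw [Finset.sum_mul]
    rw [integral_finset_sum _ fun i _ => hconvi_int i]
    rw [Finset.sum_congr rfl fun i _ => hsingle i, Finset.sum_const, Finset.card_univ,
      Fintype.card_fin, nsmul_eq_mul]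
  have hΦmean : ∫ x : Fin (n+1) → Fin d → ℝ, Φ x * ∏ k, ρ (x k) = 0 := by
    have hrepr : (fun x : Fin (n+1) → Fin d → ℝ => Φ x * ∏ k, ρ (x k))
        = fun x => ((-(1/(2*((↑(n+1):ℝ) - 1))))
            * ((∑ i, ∑ j ∈ Finset.univ.erase i, W (x i - x j)) * ∏ k, ρ (x k))
          + (∑ i, convW W ρ (x i)) * ∏ k, ρ (x k))
          + (-((↑(n+1):ℝ)/2 * c)) * ∏ k, ρ (x k) := by
      funext x; rw [hΦ]; ring
    rw [hrepr]
    rw [integral_add (show Integrable (fun x : Fin (n+1) → Fin d → ℝ =>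
        (-(1/(2*((↑(n+1):ℝ) - 1))))
            * ((∑ i, ∑ j ∈ Finset.univ.erase i, W (x i - x j)) * ∏ k, ρ (x k))
          + (∑ i, convW W ρ (x i)) * ∏ k, ρ (x k)) volume from
        (hSP_int.const_mul _).add hBP_int) (hprodInt.const_mul _)]
    rw [integral_add (hSP_int.const_mul _) hBP_int]
    rw [integral_const_mul, integral_const_mul, hSmean, hBmean, hprodone]
    have hne : ((↑(n+1):ℝ) - 1) ≠ 0 := by
      push_cast
      have : (1:ℝ) ≤ (n:ℝ) := by exact_mod_cast hn1
      nlinarith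
    have hcast : ((↑(n+1):ℝ) - 1) = (n:ℝ) := by push_cast; ring
    rw [← hcast]
    field_simp
    ring
  -- lower bound on Z_N
  have hZpow : Z ^ (n+1) = Real.exp ((↑(n+1):ℝ) * Real.log Z) := by
    conv_lhs => rw [← Real.exp_log hZpos]
    rw [← Real.exp_nat_mul]
  have hpoint : ∀ x : Fin (n+1) → Fin d → ℝ, Real.exp (-β * energyN U W (n+1) x)
      = (Z ^ (n+1) * Real.exp ((↑(n+1):ℝ) * β / 2 * c))
        * (Real.exp (β * Φ x) * ∏ i, ρ (x i)) := by
    intro x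
    have hprodexp : ∏ i, ρ (x i) = Real.exp (∑ i, Real.log (ρ (x i))) := by
      rw [Real.exp_sum]
      exact Finset.prod_congr rfl fun i _ => (Real.exp_log (hρpos _)).symm
    rw [hprodexp, hZpow, ← Real.exp_add, ← Real.exp_add, ← Real.exp_add]
    congr 1
    rw [hsumlog x, hΦ]
    simp only [energyN]
    ring
  have hexpΦ_int : Integrable (fun x : Fin (n+1) → Fin d → ℝ =>
      Real.exp (β * Φ x) * ∏ i, ρ (x i)) :=
    hprodInt.bdd_mul ((hΦm.const_mul β).exp.aestronglyMeasurable)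
      (Filter.Eventually.of_forall fun x => by
        rw [Real.norm_eq_abs, abs_of_nonneg (Real.exp_pos _).le]
        exact Real.exp_le_exp.mpr
          (mul_le_mul_of_nonneg_left (le_of_abs_le (hΦb x)) hβ.le))
  have hΦP_int : Integrable (fun x : Fin (n+1) → Fin d → ℝ => Φ x * ∏ i, ρ (x i)) :=
    hprodInt.bdd_mul hΦm.aestronglyMeasurable
      (Filter.Eventually.of_forall fun x => by rw [Real.norm_eq_abs]; exact hΦb x)
  have hlin_int : Integrable (fun x : Fin (n+1) → Fin d → ℝ =>
      (1 + β * Φ x) * ∏ i, ρ (x i)) := by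
    have : (fun x : Fin (n+1) → Fin d → ℝ => (1 + β * Φ x) * ∏ i, ρ (x i))
        = fun x => (∏ i, ρ (x i)) + β * (Φ x * ∏ i, ρ (x i)) := by
      funext x; ring
    rw [this]
    exact hprodInt.add (hΦP_int.const_mul β)
  have hone_le : (1:ℝ) ≤ ∫ x : Fin (n+1) → Fin d → ℝ, Real.exp (β * Φ x) * ∏ i, ρ (x i) := by
    have h1 : ∫ x : Fin (n+1) → Fin d → ℝ, (1 + β * Φ x) * ∏ i, ρ (x i) = 1 := by
      have hrepr : (fun x : Fin (n+1) → Fin d → ℝ => (1 + β * Φ x) * ∏ i, ρ (x i))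
          = fun x => (∏ i, ρ (x i)) + β * (Φ x * ∏ i, ρ (x i)) := by
        funext x; ring
      rw [hrepr, integral_add hprodInt (hΦP_int.const_mul β), integral_const_mul,
        hΦmean, hprodone]
      ring
    rw [← h1]
    refine integral_mono hlin_int hexpΦ_int fun x => ?_
    exact mul_le_mul_of_nonneg_right
      (by linarith [Real.add_one_le_exp (β * Φ x)]) (hprodnn x)
  have hZbar_eq : ZbarN = (Z ^ (n+1) * Real.exp ((↑(n+1):ℝ) * β / 2 * c))
      * ∫ x : Fin (n+1) → Fin d → ℝ, Real.exp (β * Φ x) * ∏ i, ρ (x i) := by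
    rw [hZbarN]
    simp_rw [hpoint]
    rw [MeasureTheory.integral_const_mul]
  have hZNge : Z ^ (n+1) ≤ ZN := by
    rw [hZN, hZbar_eq]
    have hee : Real.exp ((↑(n+1):ℝ) * β / 2 * c)
        * Real.exp (-((↑(n+1):ℝ) * β / 2) * c) = 1 := by
      rw [← Real.exp_add, show (↑(n+1):ℝ) * β / 2 * c + -((↑(n+1):ℝ) * β / 2) * c = 0 by ring,
        Real.exp_zero]
    have hpowpos : (0:ℝ) < Z ^ (n+1) := pow_pos hZpos _
    calc Z ^ (n+1)
        = Z ^ (n+1) * (Real.exp ((↑(n+1):ℝ) * β / 2 * c)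
          * Real.exp (-((↑(n+1):ℝ) * β / 2) * c)) * 1 := by rw [hee]; ring
      _ ≤ Z ^ (n+1) * (Real.exp ((↑(n+1):ℝ) * β / 2 * c)
          * Real.exp (-((↑(n+1):ℝ) * β / 2) * c))
          * ∫ x : Fin (n+1) → Fin d → ℝ, Real.exp (β * Φ x) * ∏ i, ρ (x i) := by
        refine mul_le_mul_of_nonneg_left hone_le ?_
        positivity
      _ = Z ^ (n+1) * Real.exp ((↑(n+1):ℝ) * β / 2 * c)
          * (∫ x : Fin (n+1) → Fin d → ℝ, Real.exp (β * Φ x) * ∏ i, ρ (x i))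
          * Real.exp (-((↑(n+1):ℝ) * β / 2) * c) := by ring
  have hCle : (↑(n+1):ℝ) * Real.log Z - Real.log ZN ≤ 0 := by
    have h1 : Real.log (Z ^ (n+1)) ≤ Real.log ZN :=
      Real.log_le_log (pow_pos hZpos _) hZNge
    rw [Real.log_pow] at h1
    push_cast at h1 ⊢
    linarith
  constructor
  · rw [step1, heq]
  · rw [step1, heq]
    have hInt := ∫ x, Φ x * ρN x
    linarith
end
end

section
/- Let β > 0, U : ℝ^d → ℝ, and W ∈ L^∞(ℝ^d) symmetric, with exp(−β E_N) ∈ L¹(ℝ^{Nd}) for all N ≥ 2, and suppose β < 1/(2e√2 ‖W‖_∞). Then the mean-field free energy F(ρ) = ∫ Uρ dx + (1/2)∫ ρ(W∗ρ) dx + β^{−1}∫ ρ log ρ dx has at most one minimizer among probability densities on ℝ^d: if ρ and ρ′ are two probability densities each minimizing F (equivalently, each satisfying the fixed-point relation ρ = Z^{−1}exp(−β(U+W∗ρ))), then ρ = ρ′ almost everywhere. -/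
open MeasureTheory Real

noncomputable section

/-- uniqueness of the minimizer of the mean-field free energy for
`β < 1/(2e√2 ‖W‖_∞)`: any two probability densities satisfying the fixed-point relation
`ρ = Z⁻¹ exp(−β(U + W∗ρ))` (equivalently, minimizing the free energy) coincide a.e. -/
theorem minimizer_unique {d : ℕ} (β : ℝ) (hβ : 0 < β)
    (U W : (Fin d → ℝ) → ℝ) (hU : Measurable U) (hW : Measurable W)
    (hWbdd : ∃ M, ∀ z, |W z| ≤ M) (hWsymm : ∀ z, W (-z) = W z)
    (hexp : ∀ N : ℕ, 2 ≤ N →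
      Integrable (fun x : Fin N → (Fin d → ℝ) => Real.exp (-β * energyN U W N x)))
    (hβW : β * (2 * Real.exp 1 * Real.sqrt 2 * ⨆ z, |W z|) < 1)
    (ρ ρ' : (Fin d → ℝ) → ℝ) (hρ : IsProbDensity ρ) (hρ' : IsProbDensity ρ')
    (hfix : ∀ x, ρ x = Real.exp (-β * (U x + convW W ρ x)) /
      ∫ y, Real.exp (-β * (U y + convW W ρ y)))
    (hfix' : ∀ x, ρ' x = Real.exp (-β * (U x + convW W ρ' x)) /
      ∫ y, Real.exp (-β * (U y + convW W ρ' y))) :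
    ρ =ᵐ[volume] ρ' := by
  classical
  obtain ⟨hρm, hρ0, hρ1⟩ := hρ
  obtain ⟨hρ'm, hρ'0, hρ'1⟩ := hρ'
  -- ρ and ρ' are integrable (their integrals are 1 ≠ 0)
  have hintρ : Integrable ρ := by
    by_contra h
    rw [integral_undef h] at hρ1; norm_num at hρ1
  have hintρ' : Integrable ρ' := by
    by_contra h
    rw [integral_undef h] at hρ'1; norm_num at hρ'1
  set M : ℝ := ⨆ z, |W z| with hMdef
  have hbdd : BddAbove (Set.range fun z => |W z|) := by
    obtain ⟨C, hC⟩ := hWbdd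
    exact ⟨C, by rintro _ ⟨z, rfl⟩; exact hC z⟩
  have hMle : ∀ z, |W z| ≤ M := fun z => le_ciSup hbdd z
  have hM0 : 0 ≤ M := le_trans (abs_nonneg _) (hMle 0)
  set Z : ℝ := ∫ y, Real.exp (-β * (U y + convW W ρ y)) with hZdef
  set Z' : ℝ := ∫ y, Real.exp (-β * (U y + convW W ρ' y)) with hZ'def
  -- positivity of the partition functions
  have hZpos : 0 < Z := by
    rcases lt_trichotomy Z 0 with h | h | h
    · exfalso
      have h1 := hρ0 0
      rw [hfix 0] at h1
      have h2 : Real.exp (-β * (U 0 + convW W ρ 0)) / Z < 0 :=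
        div_neg_of_pos_of_neg (Real.exp_pos _) h
      linarith
    · exfalso
      have h0 : ∀ x, ρ x = 0 := fun x => by rw [hfix x, h, div_zero]
      rw [show ρ = fun _ => (0 : ℝ) from funext h0] at hρ1
      simp at hρ1
    · exact h
  have hZ'pos : 0 < Z' := by
    rcases lt_trichotomy Z' 0 with h | h | h
    · exfalso
      have h1 := hρ'0 0
      rw [hfix' 0] at h1
      have h2 : Real.exp (-β * (U 0 + convW W ρ' 0)) / Z' < 0 :=
        div_neg_of_pos_of_neg (Real.exp_pos _) h
      linarith
    · exfalso
      have h0 : ∀ x, ρ' x = 0 := fun x => by rw [hfix' x, h, div_zero]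
      rw [show ρ' = fun _ => (0 : ℝ) from funext h0] at hρ'1
      simp at hρ'1
    · exact h
  have hexpρ : ∀ x, Real.exp (-β * (U x + convW W ρ x)) = Z * ρ x := by
    intro x; rw [hfix x]; field_simp
  have hexpρ' : ∀ x, Real.exp (-β * (U x + convW W ρ' x)) = Z' * ρ' x := by
    intro x; rw [hfix' x]; field_simp
  set D : ℝ := ∫ x, |ρ x - ρ' x| with hDdef
  have hintd : Integrable (fun x => ρ x - ρ' x) := hintρ.sub hintρ'
  have hintD : Integrable (fun x => |ρ x - ρ' x|) := hintd.abs
  have hD0 : 0 ≤ D := integral_nonneg fun x => abs_nonneg _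
  have hD2 : D ≤ 2 := by
    have hpt : ∀ x, |ρ x - ρ' x| ≤ ρ x + ρ' x := by
      intro x
      calc |ρ x - ρ' x| ≤ |ρ x| + |ρ' x| := abs_sub _ _
        _ = ρ x + ρ' x := by rw [abs_of_nonneg (hρ0 x), abs_of_nonneg (hρ'0 x)]
    calc D ≤ ∫ x, (ρ x + ρ' x) := integral_mono hintD (hintρ.add hintρ') hpt
      _ = 2 := by rw [integral_add hintρ hintρ', hρ1, hρ'1]; norm_num
  -- convolution bound
  have hWxint : ∀ (σ : (Fin d → ℝ) → ℝ), Integrable σ →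
      ∀ x, Integrable (fun y => W (x - y) * σ y) := by
    intro σ hσ x
    exact hσ.bdd_mul ((hW.comp (measurable_const.sub measurable_id)).aestronglyMeasurable)
      (c := M) (Filter.Eventually.of_forall fun y => by simpa [Real.norm_eq_abs] using hMle (x - y))
  have hconv : ∀ x, |convW W ρ x - convW W ρ' x| ≤ M * D := by
    intro x
    have h1 : convW W ρ x - convW W ρ' x = ∫ y, W (x - y) * (ρ y - ρ' y) := by
      rw [convW, convW, ← integral_sub (hWxint ρ hintρ x) (hWxint ρ' hintρ' x)]
      congr 1; funext y; ring
    rw [h1]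
    calc |∫ y, W (x - y) * (ρ y - ρ' y)| ≤ ∫ y, |W (x - y)| * |ρ y - ρ' y| := by
          simpa [Real.norm_eq_abs, abs_mul] using
            norm_integral_le_integral_norm (fun y => W (x - y) * (ρ y - ρ' y))
      _ ≤ ∫ y, M * |ρ y - ρ' y| := by
          refine integral_mono_of_nonneg
            (Filter.Eventually.of_forall fun y => mul_nonneg (abs_nonneg _) (abs_nonneg _))
            (hintD.const_mul M) (Filter.Eventually.of_forall fun y => ?_)
          exact mul_le_mul_of_nonneg_right (hMle _) (abs_nonneg _)
      _ = M * D := by rw [integral_const_mul]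
  -- basic numeric facts
  have hsqrt1 : (1 : ℝ) ≤ Real.sqrt 2 := by
    rw [show (1 : ℝ) = Real.sqrt 1 from Real.sqrt_one.symm]
    exact Real.sqrt_le_sqrt (by norm_num)
  have he2 : (2 : ℝ) < Real.exp 1 := by
    have := Real.exp_one_gt_d9; linarith
  have heS : (2 : ℝ) ≤ Real.exp 1 * Real.sqrt 2 := by
    nlinarith [mul_le_mul he2.le hsqrt1 (by norm_num : (0:ℝ) ≤ 1)
      (by linarith : (0:ℝ) ≤ Real.exp 1)]
  have hβM0 : 0 ≤ β * M := mul_nonneg hβ.le hM0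
  have h4βM : 4 * (β * M) < 1 := by nlinarith [mul_nonneg hβM0 (by linarith : (0:ℝ) ≤ Real.exp 1 * Real.sqrt 2 - 2)]
  have hβM1 : 2 * (β * M) < 1 := by linarith
  -- key pointwise contraction bound
  have hkey : ∀ x, |Z * ρ x - Z' * ρ' x| ≤ 2 * (β * (M * D)) * (Z * ρ x) := by
    intro x
    set s : ℝ := -β * (U x + convW W ρ' x) - -β * (U x + convW W ρ x) with hsdef
    have hs : |s| ≤ β * (M * D) := by
      have : s = β * (convW W ρ x - convW W ρ' x) := by rw [hsdef]; ring
      rw [this, abs_mul, abs_of_pos hβ]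
      have h1 : |convW W ρ x - convW W ρ' x| ≤ M * D := hconv x
      exact mul_le_mul_of_nonneg_left h1 hβ.le
    have hs1 : |s| ≤ 1 := by nlinarith [mul_nonneg hβ.le (mul_nonneg hM0 hD0)]
    have hZρ : Z' * ρ' x = (Z * ρ x) * Real.exp s := by
      rw [← hexpρ x, ← hexpρ' x, ← Real.exp_add, hsdef]; ring_nf
    have hpos : 0 < Z * ρ x := by rw [← hexpρ x]; exact Real.exp_pos _
    calc |Z * ρ x - Z' * ρ' x| = (Z * ρ x) * |Real.exp s - 1| := by
          rw [hZρ, show Z * ρ x - Z * ρ x * Real.exp s = (Z * ρ x) * (1 - Real.exp s) by ring,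
            abs_mul, abs_of_pos hpos, abs_sub_comm]
      _ ≤ (Z * ρ x) * (2 * |s|) := by
          exact mul_le_mul_of_nonneg_left (Real.abs_exp_sub_one_le hs1) hpos.le
      _ ≤ 2 * (β * (M * D)) * (Z * ρ x) := by
          have := mul_le_mul_of_nonneg_left hs (by positivity : (0:ℝ) ≤ 2 * (Z * ρ x))
          nlinarith [hpos.le]
  set A : ℝ := ∫ x, |Z * ρ x - Z' * ρ' x| with hAdef
  have hintZρ : Integrable (fun x => Z * ρ x) := hintρ.const_mul Z
  have hintZ'ρ' : Integrable (fun x => Z' * ρ' x) := hintρ'.const_mul Z'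
  have hintsub : Integrable (fun x => Z * ρ x - Z' * ρ' x) := hintZρ.sub hintZ'ρ'
  have hA : A ≤ 2 * (β * (M * D)) * Z := by
    calc A ≤ ∫ x, 2 * (β * (M * D)) * (Z * ρ x) :=
          integral_mono_of_nonneg (Filter.Eventually.of_forall fun x => abs_nonneg _)
            (hintZρ.const_mul _) (Filter.Eventually.of_forall hkey)
      _ = 2 * (β * (M * D)) * Z := by
          rw [integral_const_mul, integral_const_mul, hρ1]; ring
  have hZZ' : |Z - Z'| ≤ A := by
    have h1 : Z - Z' = ∫ x, (Z * ρ x - Z' * ρ' x) := by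
      rw [integral_sub hintZρ hintZ'ρ', integral_const_mul, integral_const_mul, hρ1, hρ'1]
      ring
    rw [h1]
    simpa [Real.norm_eq_abs] using
      norm_integral_le_integral_norm (fun x => Z * ρ x - Z' * ρ' x)
  -- D ≤ A/Z + |Z - Z'|/Z
  have hDle : D ≤ A / Z + |Z - Z'| / Z := by
    have hpt : ∀ x, |ρ x - ρ' x| ≤ |Z * ρ x - Z' * ρ' x| / Z + ρ' x * (|Z - Z'| / Z) := by
      intro x
      have hdecomp : ρ x - ρ' x = (Z * ρ x - Z' * ρ' x) / Z + ρ' x * ((Z' - Z) / Z) := by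
        field_simp
        ring
      rw [hdecomp]
      calc |(Z * ρ x - Z' * ρ' x) / Z + ρ' x * ((Z' - Z) / Z)|
          ≤ |(Z * ρ x - Z' * ρ' x) / Z| + |ρ' x * ((Z' - Z) / Z)| := abs_add_le _ _
        _ = |Z * ρ x - Z' * ρ' x| / Z + ρ' x * (|Z - Z'| / Z) := by
            rw [abs_div, abs_mul, abs_div, abs_of_pos hZpos, abs_of_nonneg (hρ'0 x),
              abs_sub_comm Z' Z]
    have hint1 : Integrable (fun x => |Z * ρ x - Z' * ρ' x| / Z) := hintsub.abs.div_const Z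
    have hint2 : Integrable (fun x => ρ' x * (|Z - Z'| / Z)) := hintρ'.mul_const _
    calc D ≤ ∫ x, (|Z * ρ x - Z' * ρ' x| / Z + ρ' x * (|Z - Z'| / Z)) :=
          integral_mono hintD (hint1.add hint2) hpt
      _ = A / Z + |Z - Z'| / Z := by
          rw [integral_add hint1 hint2, integral_div, integral_mul_const, hρ'1, one_mul]
  have hD4 : D ≤ 4 * (β * M) * D := by
    have h1 : D ≤ (A + A) / Z := by
      rw [add_div]
      exact hDle.trans (by gcongr)
    have h2 : (A + A) / Z ≤ (2 * (2 * (β * (M * D)) * Z)) / Z := by gcongr <;> linarith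
    have h3 : (2 * (2 * (β * (M * D)) * Z)) / Z = 4 * (β * M) * D := by
      field_simp; ring
    linarith [h1.trans (h2.trans_eq h3)]
  have hDzero : D = 0 := by nlinarith
  have habs : (fun x => |ρ x - ρ' x|) =ᵐ[volume] 0 :=
    (integral_eq_zero_iff_of_nonneg (fun x => abs_nonneg _) hintD).mp hDzero
  filter_upwards [habs] with x hx
  have : |ρ x - ρ' x| = 0 := hx
  have := abs_eq_zero.mp this
  linarith
end
end

section
/- Let ρ be a probability density on ℝ^d, W ∈ L^∞(ℝ^d) symmetric, α > d/2, and C_α = ∫_{ℝ^d}(1+|ξ|²)^{−α} dξ. Then there exist η > 0 (depending on α and W through the Jabin–Wang bound applied to the functions φ_ξ(x,y) = Re[(e^{iξ·x} − ρ̂(ξ))(e^{−iξ·y} − \overline{ρ̂(ξ)})]) and a constant C depending on α such that, with X_1,…,X_N i.i.d. from ρ and μ_N = (1/N)Σ_j δ_{X_j}: sup_{ξ ∈ ℝ^d} sup_{N ≥ 2} 𝔼 exp( N η C_α | μ̂_N(ξ) − ρ̂(ξ) |² ) ≤ C, where μ̂_N(ξ) = (1/N) Σ_{j=1}^N e^{iξ·X_j}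 and ρ̂(ξ) = ∫ e^{iξ·x} ρ(x) dx. -/
open MeasureTheory Real
open scoped ENNReal NNReal

noncomputable section

/- ### Auxiliary lemmas -/

/-- Lebesgue integral of a product of one-variable functions over a power measure. -/
lemma lintegral_pi_pow {E : Type*} [MeasurableSpace E] (μ : Measure E) [SigmaFinite μ]
    (f : E → ℝ≥0∞) (hf : Measurable f) (n : ℕ) :
    ∫⁻ x : Fin n → E, ∏ i, f (x i) ∂(Measure.pi fun _ => μ)
      = (∫⁻ y, f y ∂μ) ^ n := by
  induction n with
  | zero => simp [Measure.pi_univ]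
  | succ n ih =>
    have h := measurePreserving_piFinSuccAbove (fun _ : Fin (n + 1) => μ) 0
    have hg : Measurable (fun z : E × (Fin n → E) => f z.1 * ∏ j, f (z.2 j)) :=
      (hf.comp measurable_fst).mul
        (Finset.measurable_prod _ fun j _ => hf.comp ((measurable_pi_apply j).comp measurable_snd))
    calc ∫⁻ x : Fin (n + 1) → E, ∏ i, f (x i) ∂(Measure.pi fun _ => μ)
        = ∫⁻ z : E × (Fin n → E), f z.1 * ∏ j, f (z.2 j)
            ∂(μ.prod (Measure.pi fun _ : Fin n => μ)) := by
          rw [← h.lintegral_comp hg]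
          refine lintegral_congr fun x => ?_
          simp [MeasurableEquiv.piFinSuccAbove, Fin.prod_univ_succ, Fin.zero_succAbove, Fin.tail]
      _ = (∫⁻ y, f y ∂μ) * (∫⁻ y, f y ∂μ) ^ n := by
          have hg2 : Measurable (fun y : Fin n → E => ∏ j, f (y j)) :=
            Finset.measurable_prod _ fun j _ => hf.comp (measurable_pi_apply j)
          rw [lintegral_prod_mul (f := f) (g := fun y : Fin n → E => ∏ j, f (y j))
            hf.aemeasurable hg2.aemeasurable, ih]
      _ = (∫⁻ y, f y ∂μ) ^ (n + 1) := (pow_succ' _ _).symm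

/-- Hoeffding-type bound for one bounded, mean-zero variable. -/
lemma hoeffding_aux {E : Type*} [MeasurableSpace E] (μ : Measure E) [IsProbabilityMeasure μ]
    (u : E → ℝ) (hu : Measurable u) (hb : ∀ y, |u y| ≤ 2) (h0 : ∫ y, u y ∂μ = 0) (l : ℝ) :
    ∫⁻ y, ENNReal.ofReal (Real.exp (l * u y)) ∂μ ≤ ENNReal.ofReal (Real.exp (2 * l ^ 2)) := by
  have hui : Integrable u μ := by
    refine Integrable.mono' (integrable_const 2) hu.aestronglyMeasurable
      (ae_of_all _ fun y => ?_)
    rw [Real.norm_eq_abs]; exact hb y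
  set g : E → ℝ := fun y =>
    ((2 - u y) / 4) * Real.exp (-(2 * l)) + ((2 + u y) / 4) * Real.exp (2 * l) with hgdef
  have hgint : Integrable g μ :=
    ((((integrable_const (2 : ℝ)).sub hui).div_const 4).mul_const _).add
      ((((integrable_const (2 : ℝ)).add hui).div_const 4).mul_const _)
  have hgnn : ∀ y, 0 ≤ g y := by
    intro y
    have hy := abs_le.mp (hb y)
    exact add_nonneg (mul_nonneg (by linarith) (exp_pos _).le)
      (mul_nonneg (by linarith) (exp_pos _).le)
  have hpt : ∀ y, Real.exp (l * u y) ≤ g y := by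
    intro y
    have hy := abs_le.mp (hb y)
    have ha1 : (0 : ℝ) ≤ (2 - u y) / 4 := by linarith
    have ha2 : (0 : ℝ) ≤ (2 + u y) / 4 := by linarith
    have ha3 : (2 - u y) / 4 + (2 + u y) / 4 = 1 := by ring
    have hc := convexOn_exp.2 (Set.mem_univ (-(2 * l))) (Set.mem_univ (2 * l)) ha1 ha2 ha3
    simp only [smul_eq_mul] at hc
    have harg : (2 - u y) / 4 * (-(2 * l)) + (2 + u y) / 4 * (2 * l) = l * u y := by ring
    rw [harg] at hc
    exact hc
  calc ∫⁻ y, ENNReal.ofReal (Real.exp (l * u y)) ∂μ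
      ≤ ∫⁻ y, ENNReal.ofReal (g y) ∂μ :=
        lintegral_mono fun y => ENNReal.ofReal_le_ofReal (hpt y)
    _ = ENNReal.ofReal (∫ y, g y ∂μ) :=
        (ofReal_integral_eq_lintegral_ofReal hgint (ae_of_all _ hgnn)).symm
    _ ≤ ENNReal.ofReal (Real.exp (2 * l ^ 2)) := by
        apply ENNReal.ofReal_le_ofReal
        have hgfun : g = fun y => (Real.exp (-(2 * l)) + Real.exp (2 * l)) / 2
            + u y * ((Real.exp (2 * l) - Real.exp (-(2 * l))) / 4) := by
          funext y; rw [hgdef]; ring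
        have hgi : ∫ y, g y ∂μ = Real.cosh (2 * l) := by
          rw [hgfun, integral_add (integrable_const _) (hui.mul_const _), integral_const,
            integral_mul_const, h0, probReal_univ]
          simp [Real.cosh_eq]
          ring
        rw [hgi]
        calc Real.cosh (2 * l) ≤ Real.exp ((2 * l) ^ 2 / 2) := Real.cosh_le_exp_half_sq _
          _ = Real.exp (2 * l ^ 2) := by congr 1; ring

/-- Gaussian representation of `exp (a ^ 2)`. -/
lemma gauss_repr (a : ℝ) :
    ENNReal.ofReal (Real.exp (a ^ 2))
      = (ENNReal.ofReal (Real.sqrt π))⁻¹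
        * ∫⁻ s : ℝ, ENNReal.ofReal (Real.exp (2 * a * s - s ^ 2)) := by
  have hkey : (fun s : ℝ => Real.exp (2 * a * s - s ^ 2))
      = fun s => Real.exp (a ^ 2) * Real.exp (-(1 : ℝ) * (s - a) ^ 2) := by
    funext s
    rw [← Real.exp_add]
    congr 1
    ring
  have hint : Integrable (fun s : ℝ => Real.exp (2 * a * s - s ^ 2)) := by
    rw [hkey]
    exact ((integrable_exp_neg_mul_sq one_pos).comp_sub_right a).const_mul _
  rw [← ofReal_integral_eq_lintegral_ofReal hint (ae_of_all _ fun s => (exp_pos _).le)]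
  have hval : ∫ s : ℝ, Real.exp (2 * a * s - s ^ 2) = Real.exp (a ^ 2) * Real.sqrt π := by
    rw [hkey, integral_const_mul]
    congr 1
    rw [integral_sub_right_eq_self (fun s => Real.exp (-(1 : ℝ) * s ^ 2)) a,
      integral_gaussian]
    norm_num
  rw [hval, ENNReal.ofReal_mul (exp_pos _).le, mul_comm (ENNReal.ofReal (Real.exp (a ^ 2))),
    ← mul_assoc, ENNReal.inv_mul_cancel
      (ENNReal.ofReal_pos.mpr (Real.sqrt_pos.mpr pi_pos)).ne' ENNReal.ofReal_ne_top, one_mul]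

/-- Core sub-Gaussian estimate for the average of i.i.d. bounded mean-zero variables. -/
lemma core_bound {E : Type*} [MeasurableSpace E] (μ : Measure E) [IsProbabilityMeasure μ]
    (u : E → ℝ) (hu : Measurable u) (hb : ∀ y, |u y| ≤ 2) (h0 : ∫ y, u y ∂μ = 0)
    (N : ℕ) (hN : 0 < N) :
    ∫⁻ x : Fin N → E, ENNReal.ofReal (Real.exp ((∑ j, u (x j)) ^ 2 / (32 * N)))
        ∂(Measure.pi fun _ => μ)
      ≤ ENNReal.ofReal (Real.sqrt 2) := by
  set P : Measure (Fin N → E) := Measure.pi fun _ => μ with hP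
  haveI : IsProbabilityMeasure P := by
    constructor
    rw [hP, Measure.pi_univ]
    simp
  have hNR : (0 : ℝ) < N := by exact_mod_cast hN
  have hT : Measurable (fun x : Fin N → E => ∑ j, u (x j)) :=
    Finset.measurable_sum _ fun j _ => hu.comp (measurable_pi_apply j)
  set T : (Fin N → E) → ℝ := fun x => ∑ j, u (x j) with hTdef
  set c : ℝ := 1 / (32 * N) with hc
  have hcpos : 0 < c := by positivity
  set r : ℝ := Real.sqrt c with hr
  have hr2 : r ^ 2 = c := Real.sq_sqrt hcpos.le
  -- Step B : moment generating function bound for T under P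
  have stepB : ∀ l : ℝ, ∫⁻ x, ENNReal.ofReal (Real.exp (l * T x)) ∂P
      ≤ ENNReal.ofReal (Real.exp (2 * N * l ^ 2)) := by
    intro l
    have heq : ∀ x : Fin N → E,
        ENNReal.ofReal (Real.exp (l * T x)) = ∏ j, ENNReal.ofReal (Real.exp (l * u (x j))) := by
      intro x
      rw [hTdef, Finset.mul_sum, Real.exp_sum, ENNReal.ofReal_prod_of_nonneg
        (fun j _ => (exp_pos _).le)]
    calc ∫⁻ x, ENNReal.ofReal (Real.exp (l * T x)) ∂P
        = ∫⁻ x : Fin N → E, ∏ j, ENNReal.ofReal (Real.exp (l * u (x j))) ∂P :=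
          lintegral_congr heq
      _ = (∫⁻ y, ENNReal.ofReal (Real.exp (l * u y)) ∂μ) ^ N := by
          rw [hP]
          exact lintegral_pi_pow μ _
            (ENNReal.measurable_ofReal.comp (Real.measurable_exp.comp (hu.const_mul l))) N
      _ ≤ (ENNReal.ofReal (Real.exp (2 * l ^ 2))) ^ N :=
          pow_le_pow_left₀ (by simp) (hoeffding_aux μ u hu hb h0 l) N
      _ = ENNReal.ofReal (Real.exp (2 * N * l ^ 2)) := by
          rw [← ENNReal.ofReal_pow (exp_pos _).le, ← Real.exp_nat_mul]
          congr 1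
          ring
  -- measurability of the two-variable integrand
  have hFmeas : Measurable (fun z : (Fin N → E) × ℝ =>
      ENNReal.ofReal (Real.exp (2 * (r * T z.1) * z.2 - z.2 ^ 2))) := by
    apply ENNReal.measurable_ofReal.comp
    apply Real.measurable_exp.comp
    exact ((((hT.comp measurable_fst).const_mul r).const_mul 2).mul measurable_snd).sub
      (measurable_snd.pow_const 2)
  calc ∫⁻ x, ENNReal.ofReal (Real.exp (T x ^ 2 / (32 * N))) ∂P
      = ∫⁻ x, ENNReal.ofReal (Real.exp ((r * T x) ^ 2)) ∂P := by
        refine lintegral_congr fun x => ?_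
        rw [mul_pow, hr2, hc]
        congr 2
        ring
    _ = ∫⁻ x, ((ENNReal.ofReal (Real.sqrt π))⁻¹
          * ∫⁻ s : ℝ, ENNReal.ofReal (Real.exp (2 * (r * T x) * s - s ^ 2))) ∂P := by
        refine lintegral_congr fun x => ?_
        exact gauss_repr (r * T x)
    _ = (ENNReal.ofReal (Real.sqrt π))⁻¹
          * ∫⁻ x, (∫⁻ s : ℝ, ENNReal.ofReal (Real.exp (2 * (r * T x) * s - s ^ 2))) ∂P := by
        rw [lintegral_const_mul' _ _ (ENNReal.inv_ne_top.mpr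
          (ENNReal.ofReal_pos.mpr (Real.sqrt_pos.mpr Real.pi_pos)).ne')]
    _ = (ENNReal.ofReal (Real.sqrt π))⁻¹
          * ∫⁻ s : ℝ, ∫⁻ x, ENNReal.ofReal (Real.exp (2 * (r * T x) * s - s ^ 2)) ∂P := by
        rw [lintegral_lintegral_swap hFmeas.aemeasurable]
    _ ≤ (ENNReal.ofReal (Real.sqrt π))⁻¹
          * ∫⁻ s : ℝ, ENNReal.ofReal (Real.exp (-(3 / 4) * s ^ 2)) := by
        refine mul_le_mul_right (lintegral_mono fun s => ?_) _
        have hsplit : ∀ x, Real.exp (2 * (r * T x) * s - s ^ 2)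
            = Real.exp (-s ^ 2) * Real.exp ((2 * r * s) * T x) := by
          intro x
          rw [← Real.exp_add]
          congr 1
          ring
        calc ∫⁻ x, ENNReal.ofReal (Real.exp (2 * (r * T x) * s - s ^ 2)) ∂P
            = ENNReal.ofReal (Real.exp (-s ^ 2))
                * ∫⁻ x, ENNReal.ofReal (Real.exp ((2 * r * s) * T x)) ∂P := by
              rw [← lintegral_const_mul' _ _ ENNReal.ofReal_ne_top]
              refine lintegral_congr fun x => ?_
              rw [hsplit x, ENNReal.ofReal_mul (exp_pos _).le]
          _ ≤ ENNReal.ofReal (Real.exp (-s ^ 2))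
                * ENNReal.ofReal (Real.exp (2 * N * (2 * r * s) ^ 2)) :=
              mul_le_mul_right (stepB (2 * r * s)) _
          _ = ENNReal.ofReal (Real.exp (-s ^ 2 + 2 * N * (2 * r * s) ^ 2)) := by
              rw [← ENNReal.ofReal_mul (exp_pos _).le, ← Real.exp_add]
          _ ≤ ENNReal.ofReal (Real.exp (-(3 / 4) * s ^ 2)) := by
              apply ENNReal.ofReal_le_ofReal
              apply Real.exp_le_exp.mpr
              have h8 : 2 * (N : ℝ) * (2 * r * s) ^ 2 = 8 * (N * c) * s ^ 2 := by
                rw [← hr2]; ring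
              have hNc : (N : ℝ) * c = 1 / 32 := by
                rw [hc]; field_simp
              rw [h8, hNc]
              nlinarith [sq_nonneg s]
    _ = (ENNReal.ofReal (Real.sqrt π))⁻¹ * ENNReal.ofReal (Real.sqrt (π / (3 / 4))) := by
        congr 1
        rw [← ofReal_integral_eq_lintegral_ofReal (integrable_exp_neg_mul_sq (by norm_num))
          (ae_of_all _ fun s => (exp_pos _).le), integral_gaussian]
    _ ≤ ENNReal.ofReal (Real.sqrt 2) := by
        have hsq : Real.sqrt (π / (3 / 4)) = Real.sqrt π * Real.sqrt (4 / 3) := by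
          rw [show π / (3 / 4) = π * (4 / 3) by ring, Real.sqrt_mul pi_nonneg]
        rw [hsq, ENNReal.ofReal_mul (Real.sqrt_nonneg _), ← mul_assoc,
          ENNReal.inv_mul_cancel
            (ENNReal.ofReal_pos.mpr (Real.sqrt_pos.mpr pi_pos)).ne' ENNReal.ofReal_ne_top,
          one_mul]
        exact ENNReal.ofReal_le_ofReal (Real.sqrt_le_sqrt (by norm_num))

/-- with `X₁,…,X_N` i.i.d. from `ρ`, `α > d/2` and
`C_α = ∫ (1+|ξ|²)^{−α} dξ`, there exist `η > 0` (depending on `α` and `W`) and a constant `C`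
such that `sup_ξ sup_{N≥2} 𝔼 exp(N η C_α |μ̂_N(ξ) − ρ̂(ξ)|²) ≤ C`. -/
theorem exp_moment_fourier_mode {d : ℕ} (ρ W : (Fin d → ℝ) → ℝ) (hρ : IsProbDensity ρ)
    (hW : Measurable W) (hWbdd : ∃ M, ∀ z, |W z| ≤ M) (hWsymm : ∀ z, W (-z) = W z)
    (α : ℝ) (hα : (d : ℝ) / 2 < α)
    (Cα : ℝ) (hCα : Cα = ∫ ξ : Fin d → ℝ, ((1 : ℝ) + ∑ l, ξ l ^ 2) ^ (-α)) :
    ∃ η > (0 : ℝ), ∃ C : ℝ, ∀ ξ : Fin d → ℝ, ∀ N : ℕ, 2 ≤ N →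
      ∫⁻ x : Fin N → (Fin d → ℝ),
          ENNReal.ofReal (Real.exp ((N : ℝ) * η * Cα *
            ‖(1 / (N : ℂ)) * (∑ j, Complex.exp (Complex.I * ((∑ l, ξ l * x j l : ℝ) : ℂ)))
              - ∫ y : Fin d → ℝ,
                  Complex.exp (Complex.I * ((∑ l, ξ l * y l : ℝ) : ℂ)) * (ρ y : ℂ)‖ ^ 2))
        ∂(Measure.pi fun _ : Fin N => densMeasure ρ) ≤ ENNReal.ofReal C := by
  obtain ⟨hmeas, hpos, hone⟩ := hρ
  have hρint : Integrable ρ := by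
    by_contra h
    rw [integral_undef h] at hone
    norm_num at hone
  haveI hprob : IsProbabilityMeasure (densMeasure ρ) := by
    constructor
    rw [densMeasure, withDensity_apply _ MeasurableSet.univ, Measure.restrict_univ,
      ← ofReal_integral_eq_lintegral_ofReal hρint (ae_of_all _ hpos), hone, ENNReal.ofReal_one]
  set M : ℝ := max Cα 1 with hM
  have hM1 : (1 : ℝ) ≤ M := le_max_right _ _
  have hMC : Cα ≤ M := le_max_left _ _
  have hMpos : (0 : ℝ) < M := lt_of_lt_of_le one_pos hM1
  refine ⟨1 / (64 * M), by positivity, Real.sqrt 2, ?_⟩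
  have hηCα : 1 / (64 * M) * Cα ≤ 1 / 64 := by
    rw [div_mul_eq_mul_div, one_mul, div_le_div_iff₀ (by positivity) (by norm_num)]
    nlinarith
  intro ξ N hN
  have hN0 : 0 < N := lt_of_lt_of_le two_pos hN
  have hNR : (0 : ℝ) < N := by exact_mod_cast hN0
  have hNne : (N : ℝ) ≠ 0 := hNR.ne'
  set μ : Measure (Fin d → ℝ) := densMeasure ρ with hμ
  set φ : (Fin d → ℝ) → ℝ := fun y => ∑ l, ξ l * y l with hφdef
  have hφ : Measurable φ :=
    Finset.measurable_sum _ fun l _ => measurable_const.mul (measurable_pi_apply l)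
  set f : (Fin d → ℝ) → ℂ := fun y => Complex.exp (Complex.I * (φ y : ℂ)) with hfdef
  have hfmeas : Measurable f :=
    Complex.measurable_exp.comp ((Complex.measurable_ofReal.comp hφ).const_mul Complex.I)
  have hf_eq : ∀ y, f y = (Real.cos (φ y) : ℂ) + (Real.sin (φ y) : ℂ) * Complex.I := by
    intro y
    simp only [hfdef]
    rw [mul_comm, Complex.exp_mul_I, ← Complex.ofReal_cos, ← Complex.ofReal_sin]
  have hf_re : ∀ y, (f y).re = Real.cos (φ y) := by
    intro y; rw [hf_eq y]; simp [Complex.cos_ofReal_re]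
  have hf_im : ∀ y, (f y).im = Real.sin (φ y) := by
    intro y; rw [hf_eq y]; simp [Complex.sin_ofReal_re]
  have hfnorm : ∀ y, ‖f y‖ = 1 := by
    intro y
    simp only [hfdef]
    simp [Complex.norm_exp]
  have hfint : Integrable f μ := by
    refine Integrable.mono' (integrable_const (1 : ℝ)) hfmeas.aestronglyMeasurable
      (ae_of_all _ fun y => ?_)
    rw [hfnorm y]
  set m : ℂ := ∫ y, f y ∂μ with hmdef
  have hm' : (∫ y : Fin d → ℝ, Complex.exp (Complex.I * ((∑ l, ξ l * y l : ℝ) : ℂ)) * (ρ y : ℂ))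
      = m := by
    rw [hmdef, hμ,
      show densMeasure ρ = volume.withDensity (fun x => ((Real.toNNReal (ρ x) : ℝ≥0) : ℝ≥0∞))
        from rfl,
      integral_withDensity_eq_integral_smul hmeas.real_toNNReal]
    refine integral_congr_ae (ae_of_all _ fun y => ?_)
    simp only [NNReal.smul_def, Real.coe_toNNReal _ (hpos y), Complex.real_smul]
    exact mul_comm _ _
  have hmnorm : ‖m‖ ≤ 1 := by
    have := norm_integral_le_of_norm_le_const (μ := μ) (C := 1)
      (ae_of_all _ fun y => (hfnorm y).le) (f := f)
    simpa using this
  have hmre : |m.re| ≤ 1 := le_trans (Complex.abs_re_le_norm m) (by exact hmnorm)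
  have hmim : |m.im| ≤ 1 := le_trans (Complex.abs_im_le_norm m) (by exact hmnorm)
  -- the two centered real variables
  set uR : (Fin d → ℝ) → ℝ := fun y => Real.cos (φ y) - m.re with huRdef
  set uI : (Fin d → ℝ) → ℝ := fun y => Real.sin (φ y) - m.im with huIdef
  have huRmeas : Measurable uR := (Real.measurable_cos.comp hφ).sub measurable_const
  have huImeas : Measurable uI := (Real.measurable_sin.comp hφ).sub measurable_const
  have huRb : ∀ y, |uR y| ≤ 2 := by
    intro y
    have h1 := abs_le.mp (Real.abs_cos_le_one (φ y))
    have h2 := abs_le.mp hmre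
    rw [huRdef, abs_le]
    constructor <;> simp <;> linarith
  have huIb : ∀ y, |uI y| ≤ 2 := by
    intro y
    have h1 := abs_le.mp (Real.abs_sin_le_one (φ y))
    have h2 := abs_le.mp hmim
    rw [huIdef, abs_le]
    constructor <;> simp <;> linarith
  have hcosint : Integrable (fun y => Real.cos (φ y)) μ := by
    refine Integrable.mono' (integrable_const (1 : ℝ))
      ((Real.measurable_cos.comp hφ).aestronglyMeasurable) (ae_of_all _ fun y => ?_)
    rw [Real.norm_eq_abs]; exact Real.abs_cos_le_one _
  have hsinint : Integrable (fun y => Real.sin (φ y)) μ := by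
    refine Integrable.mono' (integrable_const (1 : ℝ))
      ((Real.measurable_sin.comp hφ).aestronglyMeasurable) (ae_of_all _ fun y => ?_)
    rw [Real.norm_eq_abs]; exact Real.abs_sin_le_one _
  have hcosm : ∫ y, Real.cos (φ y) ∂μ = m.re := by
    have h := integral_re hfint
    simp only [RCLike.re_to_complex] at h
    rw [← h]
    exact integral_congr_ae (ae_of_all _ fun y => (hf_re y).symm)
  have hsinm : ∫ y, Real.sin (φ y) ∂μ = m.im := by
    have h := integral_im hfint
    simp only [RCLike.im_to_complex] at h
    rw [← h]
    exact integral_congr_ae (ae_of_all _ fun y => (hf_im y).symm)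
  have huR0 : ∫ y, uR y ∂μ = 0 := by
    rw [huRdef]
    rw [integral_sub hcosint (integrable_const _), integral_const, probReal_univ, hcosm]
    simp
  have huI0 : ∫ y, uI y ∂μ = 0 := by
    rw [huIdef]
    rw [integral_sub hsinint (integrable_const _), integral_const, probReal_univ, hsinm]
    simp
  set TR : (Fin N → (Fin d → ℝ)) → ℝ := fun x => ∑ j, uR (x j) with hTRdef
  set TI : (Fin N → (Fin d → ℝ)) → ℝ := fun x => ∑ j, uI (x j) with hTIdef
  have hTRmeas : Measurable TR :=
    Finset.measurable_sum _ fun j _ => huRmeas.comp (measurable_pi_apply j)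
  have hTImeas : Measurable TI :=
    Finset.measurable_sum _ fun j _ => huImeas.comp (measurable_pi_apply j)
  set P : Measure (Fin N → (Fin d → ℝ)) := Measure.pi fun _ => μ with hPdef
  -- key pointwise identity
  have hGx : ∀ x : Fin N → (Fin d → ℝ),
      ‖(1 / (N : ℂ)) * (∑ j, Complex.exp (Complex.I * ((∑ l, ξ l * x j l : ℝ) : ℂ))) - m‖ ^ 2
        = (TR x / N) ^ 2 + (TI x / N) ^ 2 := by
    intro x
    have hS : (∑ j, Complex.exp (Complex.I * ((∑ l, ξ l * x j l : ℝ) : ℂ))) = ∑ j, f (x j) := by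
      refine Finset.sum_congr rfl fun j _ => ?_
      rw [hfdef]
    rw [hS]
    have h1 : (1 / (N : ℂ)) = (((N : ℝ)⁻¹ : ℝ) : ℂ) := by push_cast; ring
    set z : ℂ := (1 / (N : ℂ)) * (∑ j, f (x j)) - m with hz
    have hzre : z.re = (N : ℝ)⁻¹ * (∑ j, Real.cos (φ (x j))) - m.re := by
      rw [hz, Complex.sub_re, h1, Complex.re_ofReal_mul, Complex.re_sum]
      congr 2
      exact Finset.sum_congr rfl fun j _ => hf_re (x j)
    have hzim : z.im = (N : ℝ)⁻¹ * (∑ j, Real.sin (φ (x j))) - m.im := by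
      rw [hz, Complex.sub_im, h1, Complex.im_ofReal_mul, Complex.im_sum]
      congr 2
      exact Finset.sum_congr rfl fun j _ => hf_im (x j)
    have hTRx : TR x / N = (N : ℝ)⁻¹ * (∑ j, Real.cos (φ (x j))) - m.re := by
      rw [hTRdef]
      simp only [huRdef]
      rw [Finset.sum_sub_distrib, Finset.sum_const, Finset.card_univ, Fintype.card_fin]
      field_simp
      try ring
    have hTIx : TI x / N = (N : ℝ)⁻¹ * (∑ j, Real.sin (φ (x j))) - m.im := by
      rw [hTIdef]
      simp only [huIdef]
      rw [Finset.sum_sub_distrib, Finset.sum_const, Finset.card_univ, Fintype.card_fin]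
      field_simp
      try ring
    rw [Complex.sq_norm, Complex.normSq_apply, hzre, hzim, hTRx, hTIx]
    ring
  -- pointwise exponent bound
  have hkey : ∀ x : Fin N → (Fin d → ℝ),
      (N : ℝ) * (1 / (64 * M)) * Cα * ((TR x / N) ^ 2 + (TI x / N) ^ 2)
        ≤ TR x ^ 2 / (64 * N) + TI x ^ 2 / (64 * N) := by
    intro x
    have hnn : 0 ≤ (TR x ^ 2 + TI x ^ 2) / N := by positivity
    calc (N : ℝ) * (1 / (64 * M)) * Cα * ((TR x / N) ^ 2 + (TI x / N) ^ 2)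
        = (1 / (64 * M) * Cα) * ((TR x ^ 2 + TI x ^ 2) / N) := by
          field_simp
          try ring
      _ ≤ (1 / 64) * ((TR x ^ 2 + TI x ^ 2) / N) := mul_le_mul_of_nonneg_right hηCα hnn
      _ = TR x ^ 2 / (64 * N) + TI x ^ 2 / (64 * N) := by
          field_simp
          try ring
  rw [hm']
  calc ∫⁻ x : Fin N → (Fin d → ℝ),
        ENNReal.ofReal (Real.exp ((N : ℝ) * (1 / (64 * M)) * Cα *
          ‖(1 / (N : ℂ)) * (∑ j, Complex.exp (Complex.I * ((∑ l, ξ l * x j l : ℝ) : ℂ)))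
            - m‖ ^ 2)) ∂P
      ≤ ∫⁻ x, ENNReal.ofReal (Real.exp (TR x ^ 2 / (64 * N)))
          * ENNReal.ofReal (Real.exp (TI x ^ 2 / (64 * N))) ∂P := by
        refine lintegral_mono fun x => ?_
        rw [hGx x, ← ENNReal.ofReal_mul (exp_pos _).le, ← Real.exp_add]
        exact ENNReal.ofReal_le_ofReal (Real.exp_le_exp.mpr (hkey x))
    _ ≤ (∫⁻ x, ENNReal.ofReal (Real.exp (TR x ^ 2 / (64 * N))) ^ (2 : ℝ) ∂P) ^ (1 / (2 : ℝ))
          * (∫⁻ x, ENNReal.ofReal (Real.exp (TI x ^ 2 / (64 * N))) ^ (2 : ℝ) ∂P)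
            ^ (1 / (2 : ℝ)) := by
        exact ENNReal.lintegral_mul_le_Lp_mul_Lq P Real.HolderConjugate.two_two
          (ENNReal.measurable_ofReal.comp (Real.measurable_exp.comp
            ((hTRmeas.pow_const 2).div_const _))).aemeasurable
          (ENNReal.measurable_ofReal.comp (Real.measurable_exp.comp
            ((hTImeas.pow_const 2).div_const _))).aemeasurable
    _ ≤ (ENNReal.ofReal (Real.sqrt 2)) ^ (1 / (2 : ℝ))
          * (ENNReal.ofReal (Real.sqrt 2)) ^ (1 / (2 : ℝ)) := by
        have hconv : ∀ (T : (Fin N → (Fin d → ℝ)) → ℝ), (∀ x,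
            ENNReal.ofReal (Real.exp (T x ^ 2 / (64 * N))) ^ (2 : ℝ)
              = ENNReal.ofReal (Real.exp (T x ^ 2 / (32 * N)))) := by
          intro T x
          rw [show (2 : ℝ) = ((2 : ℕ) : ℝ) by norm_num, ENNReal.rpow_natCast,
            ← ENNReal.ofReal_pow (exp_pos _).le, ← Real.exp_nat_mul]
          congr 1
          push_cast
          field_simp
          try ring
        refine mul_le_mul' ?_ ?_
        · refine ENNReal.rpow_le_rpow ?_ (by norm_num)
          calc ∫⁻ x, ENNReal.ofReal (Real.exp (TR x ^ 2 / (64 * N))) ^ (2 : ℝ) ∂P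
              = ∫⁻ x, ENNReal.ofReal (Real.exp (TR x ^ 2 / (32 * N))) ∂P :=
                lintegral_congr fun x => hconv TR x
            _ ≤ ENNReal.ofReal (Real.sqrt 2) := core_bound μ uR huRmeas huRb huR0 N hN0
        · refine ENNReal.rpow_le_rpow ?_ (by norm_num)
          calc ∫⁻ x, ENNReal.ofReal (Real.exp (TI x ^ 2 / (64 * N))) ^ (2 : ℝ) ∂P
              = ∫⁻ x, ENNReal.ofReal (Real.exp (TI x ^ 2 / (32 * N))) ∂P :=
                lintegral_congr fun x => hconv TI x
            _ ≤ ENNReal.ofReal (Real.sqrt 2) := core_bound μ uI huImeas huIb huI0 N hN0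
    _ = ENNReal.ofReal (Real.sqrt 2) := by
        rw [← ENNReal.rpow_add _ _ (ENNReal.ofReal_pos.mpr (Real.sqrt_pos.mpr two_pos)).ne'
          ENNReal.ofReal_ne_top]
        norm_num
end
end

section
/- Under the hypotheses of the main theorem — β < 1/(2e√2 ‖W‖_∞), W ∈ L^∞(ℝ^d) symmetric, exp(−βE_N) ∈ L¹(ℝ^{Nd}), ρ a minimizer of the mean-field free energy satisfying ρ = Z^{−1}exp(−β(U+W∗ρ)), and (X_1,…,X_N) distributed according to the Gibbs density ρ_N — there exist N_0 > 0 and C < ∞ such that sup_{N > N_0} 𝔼[ (1/N) Σ_{i,j=1}^N W(X_i − X_j) − 2 Σ_{i=1}^N (W∗ρ)(X_i) + N ∫_{ℝ^d} ρ (W∗ρ) dx ] ≤ C. Equivalently, the fluctuation measures 𝒢_N = √N (μ_N − ρ) with μ_N = (1/N)Σ_i δ_{X_i} satisfy sup_{N>N_0} 𝔼 ⟨ W(x−y), 𝒢_N ⊗ 𝒢_N ⟩ < ∞. -/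
open MeasureTheory Real
open scoped NNReal ENNReal

set_option maxHeartbeats 1600000

noncomputable section

/-- The `N`-body Gibbs measure, with density `Zb_N⁻¹ exp(−β E_N)` w.r.t. Lebesgue measure. -/
def gibbsMeasure {d : ℕ} (U W : (Fin d → ℝ) → ℝ) (β : ℝ) (N : ℕ) :
    Measure (Fin N → (Fin d → ℝ)) :=
  volume.withDensity fun x => ENNReal.ofReal (Real.exp (-β * energyN U W N x) /
    ∫ y : Fin N → (Fin d → ℝ), Real.exp (-β * energyN U W N y))

/-- Chebyshev covariance inequality. -/
lemma aux_cov_ineq {α : Type*} [MeasurableSpace α] (μ : Measure α) [IsProbabilityMeasure μ]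
    {G H : α → ℝ} (hG : Integrable G μ) (hH : Integrable H μ)
    (hGH : Integrable (fun x => G x * H x) μ)
    (hanti : ∀ x y, 0 ≤ (G x - G y) * (H y - H x)) :
    ∫ x, G x * H x ∂μ ≤ (∫ x, G x ∂μ) * ∫ x, H x ∂μ := by
  have key : ∀ x, 0 ≤ G x * ∫ z, H z ∂μ - G x * H x - (∫ z, G z * H z ∂μ) + H x * ∫ z, G z ∂μ := by
    intro x
    have h0 : 0 ≤ ∫ y, (G x - G y) * (H y - H x) ∂μ :=
      integral_nonneg fun y => hanti x y
    have hval : ∫ y, (G x - G y) * (H y - H x) ∂μ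
        = G x * (∫ z, H z ∂μ) + H x * (∫ z, G z ∂μ)
          + (-(∫ z, G z * H z ∂μ) + -(G x * H x)) := by
      have hA : Integrable (fun y => G x * H y) μ := hH.const_mul _
      have hB : Integrable (fun y => H x * G y) μ := hG.const_mul _
      have hC : Integrable (fun y => -(G y * H y)) μ := hGH.neg
      have hD : Integrable (fun y : α => -(G x * H x)) μ := integrable_const _
      have hexp : (fun y => (G x - G y) * (H y - H x))
          = fun y => (G x * H y + H x * G y) + (-(G y * H y) + -(G x * H x)) := by
        funext y; ring
      have hAB : Integrable (fun y => G x * H y + H x * G y) μ := hA.add hB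
      have hCD : Integrable (fun y => -(G y * H y) + -(G x * H x)) μ := hC.add hD
      rw [hexp, integral_add hAB hCD, integral_add hA hB, integral_add hC hD,
        integral_const_mul, integral_const_mul, integral_neg, integral_const]
      simp [measure_univ]
    rw [hval] at h0
    linarith
  have h1 : 0 ≤ ∫ x, (G x * ∫ z, H z ∂μ - G x * H x - (∫ z, G z * H z ∂μ)
      + H x * ∫ z, G z ∂μ) ∂μ := integral_nonneg key
  have hval2 : ∫ x, (G x * ∫ z, H z ∂μ - G x * H x - (∫ z, G z * H z ∂μ)
      + H x * ∫ z, G z ∂μ) ∂μ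
      = (∫ z, G z ∂μ) * (∫ z, H z ∂μ) + (∫ z, H z ∂μ) * (∫ z, G z ∂μ)
        + (-(∫ z, G z * H z ∂μ) + -(∫ z, G z * H z ∂μ)) := by
    have hA : Integrable (fun y => G y * ∫ z, H z ∂μ) μ := hG.mul_const _
    have hB : Integrable (fun y => H y * ∫ z, G z ∂μ) μ := hH.mul_const _
    have hC : Integrable (fun y => -(G y * H y)) μ := hGH.neg
    have hD : Integrable (fun y : α => -(∫ z, G z * H z ∂μ)) μ := integrable_const _
    have hexp : (fun x => G x * ∫ z, H z ∂μ - G x * H x - (∫ z, G z * H z ∂μ)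
        + H x * ∫ z, G z ∂μ)
        = fun x => (G x * ∫ z, H z ∂μ + H x * ∫ z, G z ∂μ)
          + (-(G x * H x) + -(∫ z, G z * H z ∂μ)) := by
      funext x; ring
    have hAB : Integrable (fun y => G y * ∫ z, H z ∂μ + H y * ∫ z, G z ∂μ) μ := hA.add hB
    have hCD : Integrable (fun y => -(G y * H y) + -(∫ z, G z * H z ∂μ)) μ := hC.add hD
    rw [hexp, integral_add hAB hCD, integral_add hA hB, integral_add hC hD,
      integral_mul_const, integral_mul_const, integral_neg, integral_const]
    simp [measure_univ]
  rw [hval2] at h1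
  linarith

/-- If `∫ y, K a y * ρ y = 0` for every `a`, then the integral of `K (x i) (x j)`
against the product density vanishes. -/
lemma aux_pair_integral_zero {d n : ℕ} (K : (Fin d → ℝ) → (Fin d → ℝ) → ℝ)
    (ρ : (Fin d → ℝ) → ℝ) (i j : Fin (n + 1)) (hij : i ≠ j)
    (hint : Integrable (fun x : Fin (n + 1) → Fin d → ℝ => K (x i) (x j) * ∏ k, ρ (x k)))
    (hzero : ∀ a, ∫ y, K a y * ρ y = 0) :
    ∫ x : Fin (n + 1) → Fin d → ℝ, K (x i) (x j) * ∏ k, ρ (x k) = 0 := by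
  obtain ⟨k₀, rfl⟩ := Fin.exists_succAbove_eq hij
  set f : (Fin (n + 1) → Fin d → ℝ) → ℝ
    := fun x => K (x (j.succAbove k₀)) (x j) * ∏ k, ρ (x k) with hf
  have mp := (measurePreserving_piFinSuccAbove (fun _ : Fin (n + 1) =>
    (volume : Measure (Fin d → ℝ))) j).symm
  have hint' : Integrable
      (fun p : (Fin d → ℝ) × (Fin n → Fin d → ℝ) =>
        f ((MeasurableEquiv.piFinSuccAbove (fun _ => Fin d → ℝ) j).symm p))
      ((volume : Measure (Fin d → ℝ)).prod
        (Measure.pi fun _ => (volume : Measure (Fin d → ℝ)))) := by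
    have hfpi : Integrable f (Measure.pi fun _ => (volume : Measure (Fin d → ℝ))) := by
      rw [← volume_pi]; exact hint
    exact (mp.integrable_comp_emb (MeasurableEquiv.measurableEmbedding _)).mpr hfpi
  have hcoord : ∀ (r : Fin n → Fin d → ℝ) (y : Fin d → ℝ),
      f ((MeasurableEquiv.piFinSuccAbove (fun _ => Fin d → ℝ) j).symm (y, r))
        = (K (r k₀) y * ρ y) * ∏ k, ρ (r k) := by
    intro r y
    have hs : ((MeasurableEquiv.piFinSuccAbove (fun _ => Fin d → ℝ) j).symm (y, r))
        = j.insertNth y r := rfl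
    rw [hf]
    simp only [hs]
    rw [Fin.prod_univ_succAbove _ j]
    simp only [Fin.insertNth_apply_same, Fin.insertNth_apply_succAbove]
    ring
  calc ∫ x : Fin (n + 1) → Fin d → ℝ, f x
      = ∫ x : Fin (n + 1) → Fin d → ℝ, f x
          ∂(Measure.pi fun _ => (volume : Measure (Fin d → ℝ))) := by rw [volume_pi]
    _ = ∫ p : (Fin d → ℝ) × (Fin n → Fin d → ℝ),
          f ((MeasurableEquiv.piFinSuccAbove (fun _ => Fin d → ℝ) j).symm p)
          ∂((volume : Measure (Fin d → ℝ)).prod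
            (Measure.pi fun _ => (volume : Measure (Fin d → ℝ)))) := by
        rw [← mp.integral_comp']
    _ = ∫ r : Fin n → Fin d → ℝ, (∫ y : Fin d → ℝ,
          f ((MeasurableEquiv.piFinSuccAbove (fun _ => Fin d → ℝ) j).symm (y, r)))
          ∂(Measure.pi fun _ => (volume : Measure (Fin d → ℝ))) := by
        exact integral_prod_symm _ hint'
    _ = 0 := by
        have hinner : ∀ r : Fin n → Fin d → ℝ, (∫ y : Fin d → ℝ,
            f ((MeasurableEquiv.piFinSuccAbove (fun _ => Fin d → ℝ) j).symm (y, r))) = 0 := by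
          intro r
          simp_rw [hcoord]
          rw [integral_mul_const, hzero, zero_mul]
        simp_rw [hinner]
        simp

/-- fluctuation bound. Under the hypotheses of the main theorem, with
`(X₁,…,X_N) ∼ ρ_N`, the interaction fluctuation satisfies
`sup_{N>N₀} 𝔼[(1/N)Σ_{i,j} W(Xᵢ−Xⱼ) − 2Σᵢ(W∗ρ)(Xᵢ) + N∫ρ(W∗ρ)] ≤ C`, i.e.
`sup_{N>N₀} 𝔼 ⟨W(x−y), 𝒢_N ⊗ 𝒢_N⟩ < ∞` for the fluctuation measure `𝒢_N = √N(μ_N − ρ)`. -/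
theorem fluctuation_interaction_bound {d : ℕ} (β : ℝ) (hβ : 0 < β)
    (U W : (Fin d → ℝ) → ℝ) (hU : Measurable U) (hW : Measurable W)
    (hWbdd : ∃ M, ∀ z, |W z| ≤ M) (hWsymm : ∀ z, W (-z) = W z)
    (hexp : ∀ N : ℕ, 2 ≤ N →
      Integrable (fun x : Fin N → (Fin d → ℝ) => Real.exp (-β * energyN U W N x)))
    (hβW : β * (2 * Real.exp 1 * Real.sqrt 2 * ⨆ z, |W z|) < 1)
    (ρ : (Fin d → ℝ) → ℝ) (hρ : IsProbDensity ρ)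
    (hfix : ∀ x, ρ x = Real.exp (-β * (U x + convW W ρ x)) /
      ∫ y, Real.exp (-β * (U y + convW W ρ y))) :
    ∃ N₀ : ℕ, 0 < N₀ ∧ ∃ C : ℝ, ∀ N : ℕ, N₀ < N →
      (∫ x : Fin N → (Fin d → ℝ),
          ((1 / (N : ℝ)) * (∑ i, ∑ j, W (x i - x j))
            - 2 * (∑ i, convW W ρ (x i))
            + (N : ℝ) * ∫ y, ρ y * convW W ρ y)
        ∂(gibbsMeasure U W β N)) ≤ C := by
  classical
  obtain ⟨hρm, hρ0, hρ1⟩ := hρ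
  obtain ⟨M, hM⟩ := hWbdd
  have hM0 : 0 ≤ M := (abs_nonneg _).trans (hM 0)
  have hρint : Integrable ρ := by
    by_contra h
    rw [integral_undef h] at hρ1
    norm_num at hρ1
  -- measurability of the convolution
  have hWρm : Measurable (convW W ρ) := by
    have hsm : StronglyMeasurable fun p : (Fin d → ℝ) × (Fin d → ℝ) => W (p.1 - p.2) * ρ p.2 :=
      ((hW.comp (measurable_fst.sub measurable_snd)).mul
        (hρm.comp measurable_snd)).stronglyMeasurable
    exact hsm.integral_prod_right'.measurable
  set Wρ := convW W ρ with hWρdef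
  -- integrability of the convolution integrand, and boundedness
  have hconv_int : ∀ a : Fin d → ℝ, Integrable (fun y => W (a - y) * ρ y) := by
    intro a
    have := hρint.bdd_mul
      ((hW.comp (measurable_const.sub measurable_id)).aestronglyMeasurable)
      (ae_of_all _ fun y => by simpa [Real.norm_eq_abs] using hM (a - y))
    simpa using this
  have hWρbdd : ∀ x, |Wρ x| ≤ M := by
    intro x
    have h0 : Wρ x = ∫ y, W (x - y) * ρ y := rfl
    have h1 : ‖∫ y, W (x - y) * ρ y‖ ≤ ∫ y, M * ρ y := by
      refine norm_integral_le_of_norm_le (hρint.const_mul M) (ae_of_all _ fun y => ?_)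
      rw [Real.norm_eq_abs, abs_mul, abs_of_nonneg (hρ0 y)]
      exact mul_le_mul_of_nonneg_right (hM _) (hρ0 y)
    rw [h0, ← Real.norm_eq_abs]
    calc ‖∫ y, W (x - y) * ρ y‖ ≤ ∫ y, M * ρ y := h1
      _ = M := by rw [integral_const_mul, hρ1, mul_one]
  have hρWρ_int : Integrable (fun y => ρ y * Wρ y) := by
    have := hρint.bdd_mul hWρm.aestronglyMeasurable
      (ae_of_all _ fun y => by simpa [Real.norm_eq_abs] using hWρbdd y)
    simpa [mul_comm] using this
  set c : ℝ := ∫ y, ρ y * Wρ y with hcdef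
  have hcabs : |c| ≤ M := by
    have h1 : ‖∫ y, ρ y * Wρ y‖ ≤ ∫ y, M * ρ y := by
      refine norm_integral_le_of_norm_le (hρint.const_mul M) (ae_of_all _ fun y => ?_)
      rw [Real.norm_eq_abs, abs_mul, abs_of_nonneg (hρ0 y), mul_comm (ρ y)]
      exact mul_le_mul_of_nonneg_right (hWρbdd y) (hρ0 y)
    calc |c| = ‖∫ y, ρ y * Wρ y‖ := by rw [Real.norm_eq_abs]
      _ ≤ ∫ y, M * ρ y := h1
      _ = M := by rw [integral_const_mul, hρ1, mul_one]
  -- the mean-field partition function is positive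
  set Z' : ℝ := ∫ y, Real.exp (-β * (U y + Wρ y)) with hZ'def
  have hZ'pos : 0 < Z' := by
    rcases lt_trichotomy Z' 0 with h | h | h
    · exfalso
      have : ρ 0 < 0 := by
        rw [hfix 0]
        exact div_neg_of_pos_of_neg (Real.exp_pos _) h
      linarith [hρ0 0]
    · exfalso
      have hzero : ∀ x, ρ x = 0 := fun x => by rw [hfix x, h, div_zero]
      have : (∫ x, ρ x) = 0 := by simp [funext hzero]
      rw [this] at hρ1; norm_num at hρ1
    · exact h
  have hρZ' : ∀ y, Real.exp (-β * (U y + Wρ y)) = ρ y * Z' := by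
    intro y
    rw [hfix y, div_mul_cancel₀ _ hZ'pos.ne']
  -- the centered pair kernel
  set K : (Fin d → ℝ) → (Fin d → ℝ) → ℝ := fun a b => W (a - b) - Wρ a - Wρ b + c with hKdef
  have hKbdd : ∀ a b, |K a b| ≤ 4 * M := by
    intro a b
    obtain ⟨a1, a2⟩ := abs_le.mp (hM (a - b))
    obtain ⟨b1, b2⟩ := abs_le.mp (hWρbdd a)
    obtain ⟨c1, c2⟩ := abs_le.mp (hWρbdd b)
    obtain ⟨d1, d2⟩ := abs_le.mp hcabs
    have hKab : K a b = W (a - b) - Wρ a - Wρ b + c := rfl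
    rw [hKab, abs_le]
    exact ⟨by linarith, by linarith⟩
  have hKzero : ∀ a, ∫ y, K a y * ρ y = 0 := by
    intro a
    have hexp2 : (fun y => K a y * ρ y)
        = fun y => W (a - y) * ρ y + (-(Wρ a * ρ y) + (-(Wρ y * ρ y) + c * ρ y)) := by
      funext y; rw [hKdef]; ring
    have hA := hconv_int a
    have hB : Integrable (fun y => -(Wρ a * ρ y)) := (hρint.const_mul _).neg
    have hC : Integrable (fun y => -(Wρ y * ρ y)) := by
      have := hρint.bdd_mul hWρm.aestronglyMeasurable
        (ae_of_all _ fun y => by simpa [Real.norm_eq_abs] using hWρbdd y)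
      exact this.neg
    have hD : Integrable (fun y => c * ρ y) := hρint.const_mul c
    have hflip : (fun y => Wρ y * ρ y) = fun y => ρ y * Wρ y := by
      funext y; ring
    have hBCD : Integrable (fun y => -(Wρ a * ρ y) + (-(Wρ y * ρ y) + c * ρ y)) :=
      hB.add (hC.add hD)
    have hCD : Integrable (fun y => -(Wρ y * ρ y) + c * ρ y) := hC.add hD
    rw [hexp2, integral_add hA hBCD, integral_add hB hCD,
      integral_add hC hD, integral_neg, integral_neg, integral_const_mul, integral_const_mul,
      hρ1, hflip]
    have e1 : ∫ y, W (a - y) * ρ y = Wρ a := rfl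
    rw [e1, ← hcdef]
    ring
  refine ⟨1, one_pos, |W 0| + |c| + 2 * M, ?_⟩
  intro N hN
  obtain ⟨n, rfl⟩ : ∃ n, N = n + 1 := ⟨N - 1, by omega⟩
  have hn1 : 1 ≤ n := by omega
  have hnR : (0 : ℝ) < n := by exact_mod_cast hn1
  have hn0 : (n:ℝ) ≠ 0 := hnR.ne'
  have hn1pos : (0:ℝ) < (n:ℝ) + 1 := by positivity
  unfold gibbsMeasure
  set Zb : ℝ := ∫ y : Fin (n+1) → Fin d → ℝ, Real.exp (-β * energyN U W (n+1) y) with hZbdef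
  set t : ℝ := β / (2 * (n:ℝ)) with htdef
  set G : (Fin (n+1) → Fin d → ℝ) → ℝ
    := fun x => ∑ i, ∑ j ∈ Finset.univ.erase i, K (x i) (x j) with hGdef
  set P : (Fin (n+1) → Fin d → ℝ) → ℝ := fun x => ∏ k, ρ (x k) with hPdef
  -- measurability
  have hKxm : ∀ i j : Fin (n+1), Measurable fun x : Fin (n+1) → Fin d → ℝ => K (x i) (x j) := by
    intro i j
    have hKc : (fun x : Fin (n+1) → Fin d → ℝ => K (x i) (x j))
        = fun x => W (x i - x j) - Wρ (x i) - Wρ (x j) + c := rfl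
    rw [hKc]
    exact (((hW.comp ((measurable_pi_apply i).sub (measurable_pi_apply j))).sub
      (hWρm.comp (measurable_pi_apply i))).sub
      (hWρm.comp (measurable_pi_apply j))).add_const c
  have hGm : Measurable G := by
    rw [hGdef]
    exact Finset.measurable_sum _ fun i _ => Finset.measurable_sum _ fun j _ => hKxm i j
  have hPm : Measurable P := by
    rw [hPdef]
    exact Finset.measurable_prod _ fun k _ => hρm.comp (measurable_pi_apply k)
  have hSm : Measurable fun x : Fin (n+1) → Fin d → ℝ => ∑ i, Wρ (x i) :=
    Finset.measurable_sum _ fun i _ => hWρm.comp (measurable_pi_apply i)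
  have hEm : Measurable (energyN U W (n+1)) := by
    unfold energyN
    exact (Finset.measurable_sum _ fun i _ => hU.comp (measurable_pi_apply i)).add
      ((Finset.measurable_sum _ fun i _ => Finset.measurable_sum _ fun j _ =>
        hW.comp ((measurable_pi_apply i).sub (measurable_pi_apply j))).const_mul _)
  -- bounds
  have hGbdd : ∀ x, |G x| ≤ ((n:ℝ)+1) * ((n:ℝ) * (4*M)) := by
    intro x
    have h2 : ∀ i : Fin (n+1), |∑ j ∈ Finset.univ.erase i, K (x i) (x j)| ≤ (n:ℝ) * (4*M) := by
      intro i
      calc |∑ j ∈ Finset.univ.erase i, K (x i) (x j)|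
          ≤ ∑ j ∈ Finset.univ.erase i, |K (x i) (x j)| := Finset.abs_sum_le_sum_abs _ _
        _ ≤ ∑ _j ∈ Finset.univ.erase i, 4*M := Finset.sum_le_sum fun j _ => hKbdd _ _
        _ = (n:ℝ) * (4*M) := by
            rw [Finset.sum_const, Finset.card_erase_of_mem (Finset.mem_univ i),
              Finset.card_univ, Fintype.card_fin, Nat.add_sub_cancel, nsmul_eq_mul]
    calc |G x| ≤ ∑ i, |∑ j ∈ Finset.univ.erase i, K (x i) (x j)| :=
          Finset.abs_sum_le_sum_abs _ _
      _ ≤ ∑ _i : Fin (n+1), (n:ℝ) * (4*M) := Finset.sum_le_sum fun i _ => h2 i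
      _ = ((n:ℝ)+1) * ((n:ℝ) * (4*M)) := by
          rw [Finset.sum_const, Finset.card_univ, Fintype.card_fin, nsmul_eq_mul]
          push_cast; ring
  have hSbdd : ∀ x : Fin (n+1) → Fin d → ℝ, |∑ i, Wρ (x i)| ≤ ((n:ℝ)+1) * M := by
    intro x
    calc |∑ i, Wρ (x i)| ≤ ∑ i, |Wρ (x i)| := Finset.abs_sum_le_sum_abs _ _
      _ ≤ ∑ _i : Fin (n+1), M := Finset.sum_le_sum fun i _ => hWρbdd _
      _ = ((n:ℝ)+1) * M := by
          rw [Finset.sum_const, Finset.card_univ, Fintype.card_fin, nsmul_eq_mul]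
          push_cast; ring
  -- algebraic identity for G
  have herase_sub : ∀ (f : Fin (n+1) → ℝ) (i : Fin (n+1)),
      ∑ j ∈ Finset.univ.erase i, f j = (∑ j, f j) - f i := by
    intro f i
    rw [← Finset.add_sum_erase _ f (Finset.mem_univ i)]
    ring
  have hGeq : ∀ x : Fin (n+1) → Fin d → ℝ,
      G x = (∑ i, ∑ j ∈ Finset.univ.erase i, W (x i - x j))
        - 2*(n:ℝ)*(∑ i, Wρ (x i)) + (((n:ℝ)+1)*(n:ℝ))*c := by
    intro x
    have hterm : ∀ i : Fin (n+1), ∑ j ∈ Finset.univ.erase i, K (x i) (x j)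
        = (∑ j ∈ Finset.univ.erase i, W (x i - x j)) - (n:ℝ) * Wρ (x i)
          - ((∑ j, Wρ (x j)) - Wρ (x i)) + (n:ℝ) * c := by
      intro i
      have hKc : ∀ j, K (x i) (x j) = W (x i - x j) - Wρ (x i) - Wρ (x j) + c := fun j => rfl
      rw [Finset.sum_congr rfl fun j _ => hKc j, Finset.sum_add_distrib,
        Finset.sum_sub_distrib, Finset.sum_sub_distrib, Finset.sum_const, Finset.sum_const,
        Finset.card_erase_of_mem (Finset.mem_univ i), Finset.card_univ, Fintype.card_fin,
        Nat.add_sub_cancel, nsmul_eq_mul, nsmul_eq_mul, herase_sub (fun j => Wρ (x j)) i]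
    have hGx : G x = ∑ i, ((∑ j ∈ Finset.univ.erase i, W (x i - x j)) - (n:ℝ) * Wρ (x i)
        - ((∑ j, Wρ (x j)) - Wρ (x i)) + (n:ℝ) * c) := by
      rw [hGdef]
      exact Finset.sum_congr rfl fun i _ => hterm i
    rw [hGx, Finset.sum_add_distrib, Finset.sum_sub_distrib, Finset.sum_sub_distrib,
      Finset.sum_sub_distrib, Finset.sum_const, Finset.sum_const, Finset.card_univ,
      Fintype.card_fin, nsmul_eq_mul, nsmul_eq_mul, ← Finset.mul_sum]
    push_cast
    ring
  -- rewriting of the Gibbs weight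
  have hId1 : ∀ x, Real.exp (-β * energyN U W (n+1) x)
      = (Z'^(n+1) * Real.exp (β*((n:ℝ)+1)*c/2)) * (P x * Real.exp (-(t * G x))) := by
    intro x
    have harg : -β * energyN U W (n+1) x
        = (∑ i, -β * (U (x i) + Wρ (x i))) + (-(t * G x) + β*((n:ℝ)+1)*c/2) := by
      have hsplit : (∑ i, -β * (U (x i) + Wρ (x i)))
          = -β * ((∑ i, U (x i)) + ∑ i, Wρ (x i)) := by
        rw [← Finset.mul_sum, ← Finset.sum_add_distrib]
      rw [hsplit]
      have hE : energyN U W (n+1) x = (∑ i, U (x i))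
          + (1 / (2 * (((n+1 : ℕ) : ℝ) - 1)))
            * ∑ i, ∑ j ∈ Finset.univ.erase i, W (x i - x j) := rfl
      rw [hE, hGeq x, htdef]
      have hcast : ((n+1 : ℕ) : ℝ) - 1 = (n:ℝ) := by push_cast; ring
      rw [hcast]
      field_simp
      ring
    rw [harg, Real.exp_add, Real.exp_sum]
    have hprod : (∏ i : Fin (n+1), Real.exp (-β * (U (x i) + Wρ (x i))))
        = P x * Z'^(n+1) := by
      rw [Finset.prod_congr rfl fun i (_ : i ∈ Finset.univ) => hρZ' (x i),
        Finset.prod_mul_distrib, Finset.prod_const, Finset.card_univ, Fintype.card_fin]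
    rw [hprod, Real.exp_add]
    ring
  -- basic integrability facts
  have hexpN := hexp (n+1) (by omega)
  have hPint : Integrable P := by
    rw [hPdef]
    exact Integrable.fintype_prod (f := fun _ : Fin (n+1) => ρ) fun i => hρint
  have hPnn : ∀ x, 0 ≤ P x := fun x => Finset.prod_nonneg fun k _ => hρ0 (x k)
  have hPone : ∫ x, P x = 1 := by
    rw [hPdef, MeasureTheory.integral_fintype_prod_volume_eq_pow (ι := Fin (n+1)) ρ, hρ1, one_pow]
  have ht0 : 0 ≤ t := by rw [htdef]; positivity
  have hexpGm : Measurable fun x => Real.exp (-(t * G x)) :=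
    Real.measurable_exp.comp ((hGm.const_mul t).neg)
  have hGexpbdd : ∀ x, ‖Real.exp (-(t * G x))‖
      ≤ Real.exp (t * (((n:ℝ)+1) * ((n:ℝ) * (4*M)))) := by
    intro x
    rw [Real.norm_eq_abs, Real.abs_exp]
    apply Real.exp_le_exp.mpr
    have h1 := (abs_le.mp (hGbdd x)).1
    have h2 := mul_nonneg ht0 (show (0:ℝ) ≤ G x + ((n:ℝ)+1) * ((n:ℝ) * (4*M)) by linarith)
    nlinarith
  have hPexpG_int : Integrable (fun x => P x * Real.exp (-(t * G x))) := by
    have := hPint.bdd_mul hexpGm.aestronglyMeasurable (ae_of_all _ hGexpbdd)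
    simpa [mul_comm] using this
  set Q : ℝ := ∫ x, P x * Real.exp (-(t * G x)) with hQdef
  have hQpos : 0 < Q := by
    have hlow : ∀ x, Real.exp (-(t * (((n:ℝ)+1) * ((n:ℝ) * (4*M))))) * P x
        ≤ P x * Real.exp (-(t * G x)) := by
      intro x
      rw [mul_comm (P x)]
      refine mul_le_mul_of_nonneg_right ?_ (hPnn x)
      apply Real.exp_le_exp.mpr
      have h1 := (abs_le.mp (hGbdd x)).2
      have h2 := mul_le_mul_of_nonneg_left h1 ht0
      linarith
    have hmono := integral_mono (hPint.const_mul _) hPexpG_int hlow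
    rw [integral_const_mul, hPone, mul_one] at hmono
    exact lt_of_lt_of_le (Real.exp_pos _) hmono
  have hId1' : ∀ x, Real.exp (-β * energyN U W (n+1) x)
      = (Z'^(n+1) * Real.exp (β*((n:ℝ)+1)*c/2)) * (P x * Real.exp (-(t * G x))) := hId1
  have hαpos : (0:ℝ) < Z'^(n+1) * Real.exp (β*((n:ℝ)+1)*c/2) :=
    mul_pos (pow_pos hZ'pos _) (Real.exp_pos _)
  have hZbeq : Zb = (Z'^(n+1) * Real.exp (β*((n:ℝ)+1)*c/2)) * Q := by
    rw [hZbdef]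
    calc (∫ y : Fin (n+1) → Fin d → ℝ, Real.exp (-β * energyN U W (n+1) y))
        = ∫ y, (Z'^(n+1) * Real.exp (β*((n:ℝ)+1)*c/2)) * (P y * Real.exp (-(t * G y))) := by
          exact integral_congr_ae (ae_of_all _ fun y => hId1 y)
      _ = (Z'^(n+1) * Real.exp (β*((n:ℝ)+1)*c/2)) * Q := by
          rw [integral_const_mul, ← hQdef]
  have hZbpos : 0 < Zb := by rw [hZbeq]; exact mul_pos hαpos hQpos
  -- the product probability measure μ
  set μ := (volume : Measure (Fin (n+1) → Fin d → ℝ)).withDensity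
    (fun x => ENNReal.ofReal (P x)) with hμdef
  have hμtrans : ∀ f : (Fin (n+1) → Fin d → ℝ) → ℝ, ∫ x, f x ∂μ = ∫ x, P x * f x := by
    intro f
    rw [hμdef]
    have hofReal : (fun x => ENNReal.ofReal (P x))
        = fun x => ((Real.toNNReal (P x) : ℝ≥0) : ℝ≥0∞) := rfl
    have hPm' : Measurable fun x => Real.toNNReal (P x) := measurable_real_toNNReal.comp hPm
    rw [hofReal, integral_withDensity_eq_integral_smul hPm']
    refine integral_congr_ae (ae_of_all _ fun x => ?_)
    show Real.toNNReal (P x) • f x = P x * f x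
    rw [NNReal.smul_def, Real.coe_toNNReal _ (hPnn x), smul_eq_mul]
  haveI hμprob : IsProbabilityMeasure μ := by
    constructor
    rw [hμdef, withDensity_apply _ MeasurableSet.univ, setLIntegral_univ,
      ← ofReal_integral_eq_lintegral_ofReal hPint (ae_of_all _ hPnn), hPone, ENNReal.ofReal_one]
  have hμint_of_bdd : ∀ (f : (Fin (n+1) → Fin d → ℝ) → ℝ) (Cf : ℝ), Measurable f →
      (∀ x, ‖f x‖ ≤ Cf) → Integrable f μ := by
    intro f Cf hfm hfb
    exact ⟨hfm.aestronglyMeasurable, HasFiniteIntegral.of_bounded (C := Cf) (ae_of_all _ hfb)⟩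
  -- ∫ G dμ = 0
  have hKP_int : ∀ i j : Fin (n+1),
      Integrable (fun x : Fin (n+1) → Fin d → ℝ => K (x i) (x j) * P x) :=
    fun i j => hPint.bdd_mul (hKxm i j).aestronglyMeasurable
      (ae_of_all _ fun x => by rw [Real.norm_eq_abs]; exact hKbdd _ _)
  have hGμzero : ∫ x, G x ∂μ = 0 := by
    rw [hμtrans G]
    have hswap : (fun x => P x * G x)
        = fun x => ∑ i, ∑ j ∈ Finset.univ.erase i, K (x i) (x j) * P x := by
      funext x
      have : P x * G x = P x * ∑ i, ∑ j ∈ Finset.univ.erase i, K (x i) (x j) := rfl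
      rw [this, Finset.mul_sum]
      refine Finset.sum_congr rfl fun i _ => ?_
      rw [Finset.mul_sum]
      exact Finset.sum_congr rfl fun j _ => mul_comm _ _
    rw [hswap, integral_finset_sum _
      (fun i _ => integrable_finset_sum _ fun j _ => hKP_int i j)]
    rw [Finset.sum_congr rfl fun i (_ : i ∈ Finset.univ) =>
      integral_finset_sum _ fun j (_ : j ∈ Finset.univ.erase i) => hKP_int i j]
    refine Finset.sum_eq_zero fun i _ => Finset.sum_eq_zero fun j hj => ?_
    have hij : i ≠ j := (Finset.ne_of_mem_erase hj).symm
    have hintij : Integrable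
        (fun x : Fin (n+1) → Fin d → ℝ => K (x i) (x j) * ∏ k, ρ (x k)) := by
      have := hKP_int i j
      rw [hPdef] at this
      simpa using this
    have := aux_pair_integral_zero K ρ i j hij hintij hKzero
    rw [hPdef]
    simpa using this
  -- covariance inequality
  have hcov : ∫ x, P x * (G x * Real.exp (-(t * G x))) ≤ 0 := by
    have hGμ : Integrable G μ := hμint_of_bdd G _ hGm
      (fun x => by rw [Real.norm_eq_abs]; exact hGbdd x)
    have hHμ : Integrable (fun x => Real.exp (-(t * G x))) μ :=
      hμint_of_bdd _ _ hexpGm hGexpbdd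
    have hGHμ : Integrable (fun x => G x * Real.exp (-(t * G x))) μ := by
      refine hμint_of_bdd _ ((((n:ℝ)+1) * ((n:ℝ) * (4*M)))
        * Real.exp (t * (((n:ℝ)+1) * ((n:ℝ) * (4*M))))) (hGm.mul hexpGm) (fun x => ?_)
      rw [Real.norm_eq_abs, abs_mul]
      have h1 := hGbdd x
      have h2 := hGexpbdd x
      rw [Real.norm_eq_abs] at h2
      have h3 : (0:ℝ) ≤ |G x| := abs_nonneg _
      have h4 : (0:ℝ) ≤ |Real.exp (-(t * G x))| := abs_nonneg _
      exact mul_le_mul h1 h2 h4 (le_trans h3 h1)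
    have hanti : ∀ x y, 0 ≤ (G x - G y)
        * (Real.exp (-(t * G y)) - Real.exp (-(t * G x))) := by
      intro x y
      rcases le_total (G x) (G y) with h | h
      · have h1 : G x - G y ≤ 0 := by linarith
        have h2 : Real.exp (-(t * G y)) - Real.exp (-(t * G x)) ≤ 0 := by
          have h3 := mul_le_mul_of_nonneg_left h ht0
          have h4 := Real.exp_le_exp.mpr (show -(t * G y) ≤ -(t * G x) by linarith)
          linarith
        nlinarith [mul_nonneg (neg_nonneg.mpr h1) (neg_nonneg.mpr h2)]
      · have h1 : 0 ≤ G x - G y := by linarith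
        have h2 : 0 ≤ Real.exp (-(t * G y)) - Real.exp (-(t * G x)) := by
          have h3 := mul_le_mul_of_nonneg_left h ht0
          have h4 := Real.exp_le_exp.mpr (show -(t * G x) ≤ -(t * G y) by linarith)
          linarith
        exact mul_nonneg h1 h2
    have h := aux_cov_ineq μ hGμ hHμ hGHμ hanti
    rw [hGμzero, zero_mul] at h
    calc ∫ x, P x * (G x * Real.exp (-(t * G x)))
        = ∫ x, G x * Real.exp (-(t * G x)) ∂μ := (hμtrans _).symm
      _ ≤ 0 := h
  -- the main nonpositive term
  have hGg_le : ∫ x, G x * (Real.exp (-β * energyN U W (n+1) x) / Zb) ≤ 0 := by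
    have hstep : (fun x => G x * (Real.exp (-β * energyN U W (n+1) x) / Zb))
        = fun x => ((Z'^(n+1) * Real.exp (β*((n:ℝ)+1)*c/2)) / Zb)
          * (P x * (G x * Real.exp (-(t * G x)))) := by
      funext x; rw [hId1 x]; ring
    rw [hstep, integral_const_mul]
    have hcoef : (0:ℝ) ≤ (Z'^(n+1) * Real.exp (β*((n:ℝ)+1)*c/2)) / Zb :=
      le_of_lt (div_pos hαpos hZbpos)
    calc (Z'^(n+1) * Real.exp (β*((n:ℝ)+1)*c/2)) / Zb
          * ∫ x, P x * (G x * Real.exp (-(t * G x)))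
        ≤ (Z'^(n+1) * Real.exp (β*((n:ℝ)+1)*c/2)) / Zb * 0 :=
          mul_le_mul_of_nonneg_left hcov hcoef
      _ = 0 := mul_zero _
  -- transfer the Gibbs integral to a Lebesgue integral
  have hgm : Measurable fun x => Real.exp (-β * energyN U W (n+1) x) / Zb :=
    (Real.measurable_exp.comp (hEm.const_mul (-β))).div_const _
  have hgnn : ∀ x, 0 ≤ Real.exp (-β * energyN U W (n+1) x) / Zb :=
    fun x => div_nonneg (Real.exp_pos _).le hZbpos.le
  have htrans : ∀ f : (Fin (n+1) → Fin d → ℝ) → ℝ,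
      (∫ x, f x ∂((volume : Measure (Fin (n+1) → Fin d → ℝ)).withDensity
        (fun x => ENNReal.ofReal (Real.exp (-β * energyN U W (n+1) x) / Zb))))
      = ∫ x, (Real.exp (-β * energyN U W (n+1) x) / Zb) * f x := by
    intro f
    have hofReal : (fun x => ENNReal.ofReal (Real.exp (-β * energyN U W (n+1) x) / Zb))
        = fun x => ((Real.toNNReal (Real.exp (-β * energyN U W (n+1) x) / Zb) : ℝ≥0) : ℝ≥0∞) :=
      rfl
    have hgm' : Measurable fun x => Real.toNNReal (Real.exp (-β * energyN U W (n+1) x) / Zb) :=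
      measurable_real_toNNReal.comp hgm
    rw [hofReal, integral_withDensity_eq_integral_smul hgm']
    refine integral_congr_ae (ae_of_all _ fun x => ?_)
    show Real.toNNReal (Real.exp (-β * energyN U W (n+1) x) / Zb) • f x
      = (Real.exp (-β * energyN U W (n+1) x) / Zb) * f x
    rw [NNReal.smul_def, Real.coe_toNNReal _ (hgnn x), smul_eq_mul]
  rw [htrans]
  -- integrability of the pieces against the Gibbs weight
  have hgint : Integrable (fun x => Real.exp (-β * energyN U W (n+1) x) / Zb) :=
    hexpN.div_const _
  have hgone : ∫ x, Real.exp (-β * energyN U W (n+1) x) / Zb = 1 := by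
    rw [integral_div, ← hZbdef]
    exact div_self hZbpos.ne'
  have hGg_int : Integrable (fun x => G x * (Real.exp (-β * energyN U W (n+1) x) / Zb)) :=
    hgint.bdd_mul hGm.aestronglyMeasurable
      (c := ((n:ℝ)+1) * ((n:ℝ) * (4*M))) (ae_of_all _ fun x => by rw [Real.norm_eq_abs]; exact hGbdd x)
  have hSg_int : Integrable (fun x =>
      (∑ i, Wρ (x i)) * (Real.exp (-β * energyN U W (n+1) x) / Zb)) :=
    hgint.bdd_mul hSm.aestronglyMeasurable
      (c := ((n:ℝ)+1) * M) (ae_of_all _ fun x => by rw [Real.norm_eq_abs]; exact hSbdd x)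
  -- pointwise identity for the observable
  have hId2 : ∀ x : Fin (n+1) → Fin d → ℝ,
      (1/(((n+1:ℕ)):ℝ)) * (∑ i, ∑ j, W (x i - x j)) - 2*(∑ i, Wρ (x i)) + (((n+1:ℕ)):ℝ)*c
      = (W 0 + c) + (1/((n:ℝ)+1)) * (G x - 2*(∑ i, Wρ (x i))) := by
    intro x
    have hdiag : (∑ i : Fin (n+1), ∑ j, W (x i - x j))
        = ((n:ℝ)+1) * W 0 + ∑ i, ∑ j ∈ Finset.univ.erase i, W (x i - x j) := by
      have hrow : ∀ i : Fin (n+1), (∑ j, W (x i - x j))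
          = W 0 + ∑ j ∈ Finset.univ.erase i, W (x i - x j) := by
        intro i
        rw [← Finset.add_sum_erase _ _ (Finset.mem_univ i), sub_self]
      rw [Finset.sum_congr rfl fun i _ => hrow i, Finset.sum_add_distrib, Finset.sum_const,
        Finset.card_univ, Fintype.card_fin, nsmul_eq_mul]
      push_cast; ring
    rw [hdiag, hGeq x]
    have hcast : (((n+1:ℕ)):ℝ) = (n:ℝ) + 1 := by push_cast; ring
    rw [hcast]
    field_simp
    ring
  -- split the integral
  have hsplit : ∫ x, (Real.exp (-β * energyN U W (n+1) x) / Zb)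
      * ((1/(((n+1:ℕ)):ℝ)) * (∑ i, ∑ j, W (x i - x j)) - 2*(∑ i, Wρ (x i)) + (((n+1:ℕ)):ℝ)*c)
      = (W 0 + c) * (∫ x, Real.exp (-β * energyN U W (n+1) x) / Zb)
        + (1/((n:ℝ)+1)) * ((∫ x, G x * (Real.exp (-β * energyN U W (n+1) x) / Zb))
          + (-2) * ∫ x, (∑ i, Wρ (x i)) * (Real.exp (-β * energyN U W (n+1) x) / Zb)) := by
    have hptw : (fun x => (Real.exp (-β * energyN U W (n+1) x) / Zb)
        * ((1/(((n+1:ℕ)):ℝ)) * (∑ i, ∑ j, W (x i - x j)) - 2*(∑ i, Wρ (x i))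
            + (((n+1:ℕ)):ℝ)*c))
        = fun x => (W 0 + c) * (Real.exp (-β * energyN U W (n+1) x) / Zb)
          + (1/((n:ℝ)+1)) * (G x * (Real.exp (-β * energyN U W (n+1) x) / Zb)
            + (-2) * ((∑ i, Wρ (x i)) * (Real.exp (-β * energyN U W (n+1) x) / Zb))) := by
      funext x
      rw [mul_comm, hId2 x]
      ring
    have hIn1 : Integrable (fun x => (W 0 + c)
        * (Real.exp (-β * energyN U W (n+1) x) / Zb)) := hgint.const_mul _
    have hIn3 : Integrable (fun x => (-2)
        * ((∑ i, Wρ (x i)) * (Real.exp (-β * energyN U W (n+1) x) / Zb))) :=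
      hSg_int.const_mul _
    have hIn23 : Integrable (fun x => G x * (Real.exp (-β * energyN U W (n+1) x) / Zb)
        + (-2) * ((∑ i, Wρ (x i)) * (Real.exp (-β * energyN U W (n+1) x) / Zb))) :=
      hGg_int.add hIn3
    have hIn4 : Integrable (fun x => (1/((n:ℝ)+1))
        * (G x * (Real.exp (-β * energyN U W (n+1) x) / Zb)
          + (-2) * ((∑ i, Wρ (x i)) * (Real.exp (-β * energyN U W (n+1) x) / Zb)))) :=
      hIn23.const_mul _
    rw [hptw, integral_add hIn1 hIn4, integral_const_mul, integral_const_mul,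
      integral_add hGg_int hIn3, integral_const_mul]
  rw [hsplit, hgone, mul_one]
  -- final bounds
  have h3 : |∫ x, (∑ i, Wρ (x i)) * (Real.exp (-β * energyN U W (n+1) x) / Zb)|
      ≤ ((n:ℝ)+1) * M := by
    rw [← Real.norm_eq_abs]
    have hb : ∀ x, ‖(∑ i, Wρ (x i)) * (Real.exp (-β * energyN U W (n+1) x) / Zb)‖
        ≤ (((n:ℝ)+1) * M) * (Real.exp (-β * energyN U W (n+1) x) / Zb) := by
      intro x
      rw [Real.norm_eq_abs, abs_mul, abs_of_nonneg (hgnn x)]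
      exact mul_le_mul_of_nonneg_right (hSbdd x) (hgnn x)
    calc ‖∫ x, (∑ i, Wρ (x i)) * (Real.exp (-β * energyN U W (n+1) x) / Zb)‖
        ≤ ∫ x, (((n:ℝ)+1) * M) * (Real.exp (-β * energyN U W (n+1) x) / Zb) :=
          norm_integral_le_of_norm_le (hgint.const_mul _) (ae_of_all _ hb)
      _ = ((n:ℝ)+1) * M := by rw [integral_const_mul, hgone, mul_one]
  obtain ⟨h3a, h3b⟩ := abs_le.mp h3
  have hfrac : (1/((n:ℝ)+1)) * ((∫ x, G x * (Real.exp (-β * energyN U W (n+1) x) / Zb))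
      + (-2) * ∫ x, (∑ i, Wρ (x i)) * (Real.exp (-β * energyN U W (n+1) x) / Zb)) ≤ 2*M := by
    rw [one_div, inv_mul_le_iff₀ hn1pos]
    nlinarith [hGg_le]
  linarith [le_abs_self (W 0), le_abs_self c, hfrac]

end
end
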